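/- arXiv:1402.5728 — 6 statements merged into one kernel-verified Lean document; each statement's English description precedes it below -/
import Mathlib

section
/- Let X ∈ ℝ^{m×n} have columns x_1,…,x_n with ‖x_j‖₂ = 1 for all j, let y ∈ ℝ^m be centered (yᵀ𝐞_m = 0), and let λ > 0, μ ∈ (0,1). Suppose w̄ ∈ ℝⁿ (together with a threshold θ̄ ∈ ℝ) minimizes the elastic net objective J_EN(w,θ) = ‖Xw − θ𝐞_m − y‖₂² + λ[μ‖w‖₂² + (1−μ)‖w‖₁]. If j,k are indices with x_jᵀx_k ≥ 0, then |w̄_j − w̄_k| ≤ (‖y‖₁ / (λμ)) · √(2(1 − x_jᵀx_k)). -/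
open Finset

/-- The ℓ₂-norm on `Fin n → ℝ`. -/
noncomputable def l2norm {n : ℕ} (x : Fin n → ℝ) : ℝ := Real.sqrt (∑ i, (x i) ^ 2)

/-- The ℓ₁-norm on `Fin n → ℝ`. -/
def l1norm {n : ℕ} (x : Fin n → ℝ) : ℝ := ∑ i, |x i|

/-- The elastic net objective. -/
noncomputable def elasticNetObj {m n : ℕ} (X : Matrix (Fin m) (Fin n) ℝ)
    (y : Fin m → ℝ) (lam mu : ℝ) (w : Fin n → ℝ) (θ : ℝ) : ℝ :=
  ∑ i, ((∑ j, X i j * w j) - θ - y i) ^ 2 +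
    lam * (mu * ∑ j, (w j) ^ 2 + (1 - mu) * l1norm w)

lemma l1_key (a b t : ℝ) (h0 : 0 ≤ t) (h1 : t ≤ a - b) : |a - t| + |b + t| ≤ |a| + |b| := by
  rcases abs_cases (a - t) with ⟨e1, s1⟩ | ⟨e1, s1⟩ <;>
  rcases abs_cases (b + t) with ⟨e2, s2⟩ | ⟨e2, s2⟩ <;>
  rcases abs_cases a with ⟨e3, s3⟩ | ⟨e3, s3⟩ <;>
  rcases abs_cases b with ⟨e4, s4⟩ | ⟨e4, s4⟩ <;>
  rw [e1, e2, e3, e4] <;> linarith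

lemma one_sided {m n : ℕ}
    (X : Matrix (Fin m) (Fin n) ℝ) (y : Fin m → ℝ) (lam mu : ℝ)
    (hcols : ∀ j : Fin n, l2norm (fun i => X i j) = 1)
    (hlam : 0 < lam) (hmu : mu ∈ Set.Ioo (0 : ℝ) 1)
    (wbar : Fin n → ℝ) (θbar : ℝ)
    (hmin : ∀ (w : Fin n → ℝ) (θ : ℝ),
      elasticNetObj X y lam mu wbar θbar ≤ elasticNetObj X y lam mu w θ)
    (j k : Fin n) :
    wbar j - wbar k ≤
      (l1norm y / (lam * mu)) * Real.sqrt (2 * (1 - ∑ i, X i j * X i k)) := by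
  obtain ⟨hmu0, hmu1⟩ := hmu
  have hl1y : 0 ≤ l1norm y := Finset.sum_nonneg fun i _ => abs_nonneg _
  have hlm : 0 < lam * mu := mul_pos hlam hmu0
  have hRHS : 0 ≤ (l1norm y / (lam * mu)) * Real.sqrt (2 * (1 - ∑ i, X i j * X i k)) :=
    mul_nonneg (div_nonneg hl1y hlm.le) (Real.sqrt_nonneg _)
  set d := wbar j - wbar k with hd
  rcases le_or_gt d 0 with hd0 | hd0
  · linarith
  have hjkne : j ≠ k := by
    intro h; rw [hd, h, sub_self] at hd0; exact hd0.false
  -- column normalization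
  have hunit : ∀ l : Fin n, ∑ i, X i l ^ 2 = 1 := by
    intro l
    have := hcols l
    unfold l2norm at this
    have h2 : Real.sqrt (∑ i, X i l ^ 2) = 1 := this
    nlinarith [Real.sq_sqrt (Finset.sum_nonneg (fun i _ => sq_nonneg (X i l)) :
      (0:ℝ) ≤ ∑ i, X i l ^ 2), Real.sqrt_nonneg (∑ i, X i l ^ 2)]
  set ρ := ∑ i, X i j * X i k with hρ
  set r : Fin m → ℝ := fun i => (∑ j', X i j' * wbar j') - θbar - y i with hr
  set u : Fin m → ℝ := fun i => X i k - X i j with hu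
  set c := ∑ i, r i * u i with hc
  set A := ∑ i, u i ^ 2 with hA
  have hAval : A = 2 * (1 - ρ) := by
    rw [hA, hρ]
    have : ∀ i, u i ^ 2 = X i k ^ 2 + X i j ^ 2 - 2 * (X i j * X i k) := by
      intro i; rw [hu]; ring
    rw [Finset.sum_congr rfl (fun i _ => this i)]
    rw [Finset.sum_sub_distrib, Finset.sum_add_distrib, ← Finset.mul_sum, hunit, hunit]
    ring
  have hAnn : 0 ≤ A := Finset.sum_nonneg fun i _ => sq_nonneg _
  -- perturbed point
  set w : ℝ → Fin n → ℝ := fun t =>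
    Function.update (Function.update wbar j (wbar j - t)) k (wbar k + t) with hw
  have hwj : ∀ t, w t j = wbar j - t := by
    intro t; rw [hw]; simp [Function.update, hjkne]
  have hwk : ∀ t, w t k = wbar k + t := by
    intro t; rw [hw]; simp [Function.update]
  have hwo : ∀ t l, l ≠ j → l ≠ k → w t l = wbar l := by
    intro t l hlj hlk; rw [hw]; simp [Function.update, hlj, hlk]
  -- sum over {j,k} helper
  have hsupp : ∀ (f : Fin n → ℝ), (∀ l, l ≠ j → l ≠ k → f l = 0) →
      ∑ l, f l = f j + f k := by
    intro f hf
    rw [← Finset.sum_subset (Finset.subset_univ ({j, k} : Finset (Fin n)))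
      (fun x _ hx => by
        simp only [Finset.mem_insert, Finset.mem_singleton, not_or] at hx
        exact hf x hx.1 hx.2)]
    rw [Finset.sum_pair hjkne]
  -- residual identity
  have hres : ∀ t i, (∑ j', X i j' * w t j') = (∑ j', X i j' * wbar j') + t * u i := by
    intro t i
    have : ∑ j', (X i j' * w t j' - X i j' * wbar j') = t * u i := by
      rw [hsupp _ (fun l hlj hlk => by rw [hwo t l hlj hlk]; ring)]
      rw [hwj, hwk, hu]; ring
    have h2 : ∑ j', (X i j' * w t j' - X i j' * wbar j')
        = (∑ j', X i j' * w t j') - ∑ j', X i j' * wbar j' := Finset.sum_sub_distrib _ _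
    linarith [this, h2]
  -- l2 penalty identity
  have hl2 : ∀ t, (∑ l, (w t l) ^ 2) = (∑ l, (wbar l) ^ 2) + 2 * t ^ 2 - 2 * t * d := by
    intro t
    have : ∑ l, ((w t l) ^ 2 - (wbar l) ^ 2) = 2 * t ^ 2 - 2 * t * d := by
      rw [hsupp _ (fun l hlj hlk => by rw [hwo t l hlj hlk]; ring)]
      rw [hwj, hwk, hd]; ring
    have h2 : ∑ l, ((w t l) ^ 2 - (wbar l) ^ 2)
        = (∑ l, (w t l) ^ 2) - ∑ l, (wbar l) ^ 2 := Finset.sum_sub_distrib _ _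
    linarith [this, h2]
  -- l1 penalty inequality
  have hl1 : ∀ t, 0 ≤ t → t ≤ d → l1norm (w t) ≤ l1norm wbar := by
    intro t ht0 htd
    unfold l1norm
    have : ∑ l, (|w t l| - |wbar l|) ≤ 0 := by
      rw [hsupp _ (fun l hlj hlk => by rw [hwo t l hlj hlk]; ring)]
      rw [hwj, hwk]
      have := l1_key (wbar j) (wbar k) t ht0 (by rw [hd] at htd; linarith)
      linarith
    have h2 : ∑ l, (|w t l| - |wbar l|)
        = (∑ l, |w t l|) - ∑ l, |wbar l| := Finset.sum_sub_distrib _ _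
    linarith
  -- main inequality for t in (0, d]
  have hmain : ∀ t, 0 ≤ t → t ≤ d →
      2 * (lam * mu) * t * d ≤ 2 * t * c + t ^ 2 * (A + 2 * (lam * mu)) := by
    intro t ht0 htd
    have h := hmin (w t) θbar
    unfold elasticNetObj at h
    have hsq : ∑ i, ((∑ j', X i j' * w t j') - θbar - y i) ^ 2
        = (∑ i, r i ^ 2) + 2 * t * c + t ^ 2 * A := by
      have : ∀ i, ((∑ j', X i j' * w t j') - θbar - y i) ^ 2
          = r i ^ 2 + 2 * t * (r i * u i) + t ^ 2 * u i ^ 2 := by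
        intro i; rw [hres t i, hr]; ring
      rw [Finset.sum_congr rfl (fun i _ => this i), Finset.sum_add_distrib,
        Finset.sum_add_distrib, ← Finset.mul_sum, ← Finset.mul_sum, hc, hA]
    rw [hsq, hl2 t] at h
    have hl1' := hl1 t ht0 htd
    have hrterm : ∑ i, ((∑ j', X i j' * wbar j') - θbar - y i) ^ 2 = ∑ i, r i ^ 2 := by
      apply Finset.sum_congr rfl; intro i _; rw [hr]
    rw [hrterm] at h
    nlinarith [mul_le_mul_of_nonneg_left hl1' (by nlinarith : (0:ℝ) ≤ lam * (1 - mu))]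
  -- derive lam*mu*d ≤ c
  have hcd : lam * mu * d ≤ c := by
    by_contra hcon
    push_neg at hcon
    set B := A + 2 * (lam * mu) with hB
    have hBpos : 0 < B := by rw [hB]; linarith
    set t0 := min d ((lam * mu * d - c) / B) with ht0def
    have ht0pos : 0 < t0 := lt_min hd0 (div_pos (by linarith) hBpos)
    have ht0d : t0 ≤ d := min_le_left _ _
    have ht0B : t0 * B ≤ lam * mu * d - c := by
      have := min_le_right d ((lam * mu * d - c) / B)
      calc t0 * B ≤ ((lam * mu * d - c) / B) * B :=
            mul_le_mul_of_nonneg_right this hBpos.le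
        _ = lam * mu * d - c := by field_simp
    have h := hmain t0 ht0pos.le ht0d
    nlinarith [mul_lt_mul_of_pos_left hcon ht0pos, mul_le_mul_of_nonneg_left ht0B ht0pos.le]
  -- bound on residual norm: sum r^2 ≤ (l1norm y)^2
  have hRbound : ∑ i, r i ^ 2 ≤ (l1norm y) ^ 2 := by
    have h := hmin 0 0
    unfold elasticNetObj at h
    simp only [Pi.zero_apply, mul_zero, Finset.sum_const_zero, sub_zero, zero_sub] at h
    have hl10 : l1norm (0 : Fin n → ℝ) = 0 := by unfold l1norm; simp
    rw [hl10] at h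
    have hrterm : ∑ i, ((∑ j', X i j' * wbar j') - θbar - y i) ^ 2 = ∑ i, r i ^ 2 := by
      apply Finset.sum_congr rfl; intro i _; rw [hr]
    rw [hrterm] at h
    have hy2 : ∑ i, y i ^ 2 ≤ (l1norm y) ^ 2 := by
      unfold l1norm
      have : ∀ i : Fin m, i ∈ Finset.univ → y i ^ 2 ≤ |y i| * ∑ i', |y i'| := by
        intro i _
        have h1 : |y i| ≤ ∑ i', |y i'| :=
          Finset.single_le_sum (f := fun i' => |y i'|) (fun i' _ => abs_nonneg _)
            (Finset.mem_univ i)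
        calc y i ^ 2 = |y i| * |y i| := by rw [abs_mul_abs_self]; ring
          _ ≤ |y i| * ∑ i', |y i'| := mul_le_mul_of_nonneg_left h1 (abs_nonneg _)
      calc ∑ i, y i ^ 2 ≤ ∑ i, |y i| * ∑ i', |y i'| := Finset.sum_le_sum this
        _ = (∑ i, |y i|) ^ 2 := by rw [← Finset.sum_mul]; ring
    have hpen : 0 ≤ lam * (mu * ∑ l, (wbar l) ^ 2 + (1 - mu) * l1norm wbar) := by
      have h1 : 0 ≤ ∑ l, (wbar l) ^ 2 := Finset.sum_nonneg fun l _ => sq_nonneg _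
      have h2 : 0 ≤ l1norm wbar := Finset.sum_nonneg fun l _ => abs_nonneg _
      have := mul_nonneg hmu0.le h1
      have := mul_nonneg (by linarith : (0:ℝ) ≤ 1 - mu) h2
      nlinarith
    norm_num at h
    linarith
  -- Cauchy–Schwarz
  have hCS : c ≤ Real.sqrt (∑ i, r i ^ 2) * Real.sqrt A := by
    rw [hc, hA]; exact Real.sum_mul_le_sqrt_mul_sqrt Finset.univ r u
  have hsqR : Real.sqrt (∑ i, r i ^ 2) ≤ l1norm y := by
    calc Real.sqrt (∑ i, r i ^ 2) ≤ Real.sqrt ((l1norm y) ^ 2) :=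
        Real.sqrt_le_sqrt hRbound
      _ = l1norm y := Real.sqrt_sq hl1y
  have hfinal : lam * mu * d ≤ l1norm y * Real.sqrt (2 * (1 - ρ)) := by
    calc lam * mu * d ≤ c := hcd
      _ ≤ Real.sqrt (∑ i, r i ^ 2) * Real.sqrt A := hCS
      _ ≤ l1norm y * Real.sqrt A :=
          mul_le_mul_of_nonneg_right hsqR (Real.sqrt_nonneg _)
      _ = l1norm y * Real.sqrt (2 * (1 - ρ)) := by rw [hAval]
  rw [div_mul_eq_mul_div, le_div_iff₀ hlm]
  linarith [hfinal]

theorem elastic_net_correlated_features {m n : ℕ}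
    (X : Matrix (Fin m) (Fin n) ℝ) (y : Fin m → ℝ) (lam mu : ℝ)
    (hcols : ∀ j : Fin n, l2norm (fun i => X i j) = 1)
    (hcentered : ∑ i, y i = 0)
    (hlam : 0 < lam) (hmu : mu ∈ Set.Ioo (0 : ℝ) 1)
    (wbar : Fin n → ℝ) (θbar : ℝ)
    (hmin : ∀ (w : Fin n → ℝ) (θ : ℝ),
      elasticNetObj X y lam mu wbar θbar ≤ elasticNetObj X y lam mu w θ)
    (j k : Fin n) (hjk : 0 ≤ ∑ i, X i j * X i k) :
    |wbar j - wbar k| ≤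
      (l1norm y / (lam * mu)) * Real.sqrt (2 * (1 - ∑ i, X i j * X i k)) := by
  rw [abs_sub_le_iff]
  constructor
  · exact one_sided X y lam mu hcols hlam hmu wbar θbar hmin j k
  · have h := one_sided X y lam mu hcols hlam hmu wbar θbar hmin k j
    have hcomm : ∑ i, X i k * X i j = ∑ i, X i j * X i k :=
      Finset.sum_congr rfl fun i _ => mul_comm _ _
    rwa [hcomm] at h
end

section
/- Suppose n ≥ 2k ≥ 2 and A ∈ ℝ^{m×n} satisfies the restricted isometry property of order 2k with constant δ_{2k} ∈ (0, 1/2]. Then m ≥ c·k·log(n/k), where c = 1/(2 log(√24 + 1)). -/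
open Finset

/-- A vector is `k`-sparse if it has at most `k` nonzero components. -/
def KSparse {n : ℕ} (k : ℕ) (x : Fin n → ℝ) : Prop :=
  Set.ncard {i : Fin n | x i ≠ 0} ≤ k

/-- `A` satisfies the restricted isometry property of order `k` with constant `δ`. -/
def RIP {m n : ℕ} (A : Matrix (Fin m) (Fin n) ℝ) (k : ℕ) (δ : ℝ) : Prop :=
  ∀ u : Fin n → ℝ, KSparse k u →
    (1 - δ) * ∑ i, (u i) ^ 2 ≤ ∑ i, (A.mulVec u i) ^ 2 ∧
    ∑ i, (A.mulVec u i) ^ 2 ≤ (1 + δ) * ∑ i, (u i) ^ 2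

open MeasureTheory Metric Module
open scoped ENNReal


lemma choose_le_two_pow' (k j : ℕ) : k.choose j ≤ 2 ^ k := by
  rcases le_or_gt j k with h | h
  · calc k.choose j ≤ ∑ i ∈ range (k+1), k.choose i :=
        Finset.single_le_sum (fun i _ => Nat.zero_le _) (by simp [Nat.lt_succ_of_le h])
    _ = 2 ^ k := Nat.sum_range_choose k
  · simp [Nat.choose_eq_zero_of_lt h]

lemma choose_ratio (n k j : ℕ) (hj : j ≤ k) (hk : k ≤ n) :
    n.choose (k - j) * (n - k) ^ j ≤ n.choose k * k ^ j := by
  induction j with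
  | zero => simp
  | succ j ih =>
    have hj' : j ≤ k := Nat.le_of_succ_le hj
    have step : n.choose (k - (j+1)) * (n - k) ≤ n.choose (k - j) * k := by
      have hkj : k - (j+1) + 1 = k - j := by omega
      have h1 : n.choose (k - (j+1)) * (n - (k - (j+1))) = n.choose (k - j) * (k - j) := by
        rw [← hkj, ← Nat.choose_succ_right_eq]
      calc n.choose (k - (j+1)) * (n - k) ≤ n.choose (k - (j+1)) * (n - (k - (j+1))) :=
            Nat.mul_le_mul_left _ (by omega)
        _ = n.choose (k - j) * (k - j) := h1
        _ ≤ n.choose (k - j) * k := Nat.mul_le_mul_left _ (by omega)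
    calc n.choose (k - (j+1)) * (n - k) ^ (j+1)
        = (n.choose (k - (j+1)) * (n-k)) * (n - k) ^ j := by ring
      _ ≤ (n.choose (k - j) * k) * (n - k) ^ j := Nat.mul_le_mul_right _ step
      _ = (n.choose (k - j) * (n-k)^j) * k := by ring
      _ ≤ (n.choose k * k ^ j) * k := Nat.mul_le_mul_right _ (ih hj')
      _ = n.choose k * k ^ (j+1) := by ring

noncomputable def pickSub {α : Type*} (s : Finset α) (j : ℕ) : Finset α :=
  if h : j ≤ s.card then (Finset.exists_subset_card_eq h).choose else ∅

lemma pickSub_spec {α : Type*} {s : Finset α} {j : ℕ} (h : j ≤ s.card) :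
    pickSub s j ⊆ s ∧ (pickSub s j).card = j := by
  rw [pickSub, dif_pos h]
  obtain ⟨h1, h2⟩ := (Finset.exists_subset_card_eq h).choose_spec
  exact ⟨h1, h2⟩

lemma count_close {n k : ℕ} (S : Finset (Fin n)) (hS : S.card = k) :
    ((univ.powersetCard k).filter (fun T => 3*k+1 ≤ 4*(S ∩ T).card)).card
      ≤ k.choose (3*k/4+1) * n.choose (k - (3*k/4+1)) := by
  classical
  set j := 3*k/4+1 with hj
  set F := (univ.powersetCard k).filter (fun T => 3*k+1 ≤ 4*(S ∩ T).card) with hF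
  have key : ∀ T ∈ F, j ≤ (S ∩ T).card := by
    intro T hT
    rw [hF, mem_filter] at hT
    omega
  have hTk : ∀ T ∈ F, T.card = k := by
    intro T hT
    rw [hF, mem_filter, mem_powersetCard] at hT
    exact hT.1.2
  have hmaps : ∀ T ∈ F, (pickSub (S ∩ T) j, T \ pickSub (S ∩ T) j)
      ∈ (S.powersetCard j) ×ˢ ((univ : Finset (Fin n)).powersetCard (k-j)) := by
    intro T hT
    obtain ⟨hsub, hcard⟩ := pickSub_spec (key T hT)
    rw [mem_product, mem_powersetCard, mem_powersetCard]
    refine ⟨⟨hsub.trans inter_subset_left, hcard⟩, ⟨subset_univ _, ?_⟩⟩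
    rw [card_sdiff_of_subset (hsub.trans inter_subset_right), hcard, hTk T hT]
  have hinj : Set.InjOn (fun T => (pickSub (S ∩ T) j, T \ pickSub (S ∩ T) j)) F := by
    intro T hT T' hT' heq
    simp only [Prod.mk.injEq] at heq
    have h1 : pickSub (S ∩ T) j ⊆ T := (pickSub_spec (key T hT)).1.trans inter_subset_right
    have h1' : pickSub (S ∩ T') j ⊆ T' := (pickSub_spec (key T' hT')).1.trans inter_subset_right
    have e1 : pickSub (S ∩ T) j ∪ (T \ pickSub (S ∩ T) j) = T := Finset.union_sdiff_of_subset h1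
    have e2 : pickSub (S ∩ T') j ∪ (T' \ pickSub (S ∩ T') j) = T' := Finset.union_sdiff_of_subset h1'
    rw [heq.2, heq.1, e2] at e1
    exact e1.symm
  calc F.card ≤ ((S.powersetCard j) ×ˢ ((univ : Finset (Fin n)).powersetCard (k-j))).card :=
        Finset.card_le_card_of_injOn _ hmaps hinj
    _ = k.choose j * n.choose (k - j) := by
        rw [card_product, card_powersetCard, card_powersetCard, card_univ, Fintype.card_fin, hS]

lemma exists_packing (n k : ℕ) (hk : 1 ≤ k) (hkn : k ≤ n) :
    ∃ 𝒳 : Finset (Finset (Fin n)),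
      (∀ S ∈ 𝒳, S.card = k) ∧
      (∀ S ∈ 𝒳, ∀ T ∈ 𝒳, S ≠ T → 4*(S ∩ T).card ≤ 3*k) ∧
      n.choose k ≤ 𝒳.card * (k.choose (3*k/4+1) * n.choose (k - (3*k/4+1))) := by
  classical
  set 𝒞 := (univ : Finset (Fin n)).powersetCard k with h𝒞
  set s := 𝒞.powerset.filter
    (fun X => ∀ S ∈ X, ∀ T ∈ X, S ≠ T → 4*(S ∩ T).card ≤ 3*k) with hs
  have hne : s.Nonempty := ⟨∅, by simp [hs]⟩
  obtain ⟨𝒳, h𝒳s, hmax⟩ := Finset.exists_max_image s card hne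
  rw [hs, mem_filter, mem_powerset] at h𝒳s
  obtain ⟨h𝒳sub, h𝒳pair⟩ := h𝒳s
  have hcards : ∀ S ∈ 𝒳, S.card = k := by
    intro S hS
    have := h𝒳sub hS
    rw [h𝒞, mem_powersetCard] at this
    exact this.2
  refine ⟨𝒳, hcards, h𝒳pair, ?_⟩
  -- covering
  have hcover : 𝒞 ⊆ 𝒳.biUnion (fun S => 𝒞.filter (fun T => 3*k+1 ≤ 4*(S ∩ T).card)) := by
    intro T hT
    by_contra hTnot
    rw [mem_biUnion] at hTnot
    push_neg at hTnot
    have hfar : ∀ S ∈ 𝒳, 4*(S ∩ T).card ≤ 3*k := by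
      intro S hS
      have := hTnot S hS
      rw [mem_filter] at this
      push_neg at this
      have h' := this hT
      omega
    have hTcard : T.card = k := by
      rw [h𝒞, mem_powersetCard] at hT; exact hT.2
    have hTnotmem : T ∉ 𝒳 := by
      intro hmem
      have := hfar T hmem
      rw [inter_self, hTcard] at this
      omega
    have hins : insert T 𝒳 ∈ s := by
      rw [hs, mem_filter, mem_powerset]
      constructor
      · exact insert_subset hT h𝒳sub
      · intro S hS T' hT' hne'
        rcases mem_insert.mp hS with rfl | hS𝒳
        · rcases mem_insert.mp hT' with rfl | hT'𝒳
          · exact absurd rfl hne'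
          · have := hfar T' hT'𝒳
            rwa [inter_comm] at this
        · rcases mem_insert.mp hT' with rfl | hT'𝒳
          · exact hfar S hS𝒳
          · exact h𝒳pair S hS𝒳 T' hT'𝒳 hne'
    have := hmax _ hins
    rw [card_insert_of_notMem hTnotmem] at this
    omega
  -- put it together
  have h1 : 𝒞.card ≤ ∑ S ∈ 𝒳, (𝒞.filter (fun T => 3*k+1 ≤ 4*(S ∩ T).card)).card :=
    (Finset.card_le_card hcover).trans (Finset.card_biUnion_le)
  have h2 : ∀ S ∈ 𝒳, (𝒞.filter (fun T => 3*k+1 ≤ 4*(S ∩ T).card)).card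
      ≤ k.choose (3*k/4+1) * n.choose (k - (3*k/4+1)) := by
    intro S hS
    exact count_close S (hcards S hS)
  calc n.choose k = 𝒞.card := by
        rw [h𝒞, card_powersetCard, card_univ, Fintype.card_fin]
    _ ≤ ∑ S ∈ 𝒳, (𝒞.filter (fun T => 3*k+1 ≤ 4*(S ∩ T).card)).card := h1
    _ ≤ ∑ _S ∈ 𝒳, (k.choose (3*k/4+1) * n.choose (k - (3*k/4+1))) := Finset.sum_le_sum h2
    _ = 𝒳.card * (k.choose (3*k/4+1) * n.choose (k - (3*k/4+1))) := by
        rw [Finset.sum_const, smul_eq_mul]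

lemma volume_packing {m : ℕ} (s : Finset (EuclideanSpace ℝ (Fin m))) {R d : ℝ}
    (hd : 0 < d) (hR : 0 ≤ R)
    (hin : ∀ c ∈ s, ‖c‖ ≤ R)
    (hsep : ∀ c ∈ s, ∀ c' ∈ s, c ≠ c' → d ≤ dist c c') :
    (s.card : ℝ) * (d/2)^m ≤ (R + d/2)^m := by
  set μ : Measure (EuclideanSpace ℝ (Fin m)) := volume with hμ
  have hfr : finrank ℝ (EuclideanSpace ℝ (Fin m)) = m := finrank_euclideanSpace_fin
  have hδ : (0:ℝ) < d/2 := by linarith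
  have hρ : (0:ℝ) < R + d/2 := by linarith
  set A := ⋃ c ∈ s, ball c (d/2) with hA
  have D : Set.Pairwise (s : Set (EuclideanSpace ℝ (Fin m)))
      (Function.onFun Disjoint fun c => ball c (d/2)) := by
    rintro c hc c' hc' hcc
    apply ball_disjoint_ball
    rw [← add_div, add_self_div_two]
    exact hsep c hc c' hc' hcc
  have A_subset : A ⊆ ball 0 (R + d/2) := by
    refine Set.iUnion₂_subset fun x hx => ?_
    apply ball_subset_ball'
    rw [dist_zero_right]
    linarith [hin x hx]
  have I : (s.card : ℝ≥0∞) * ENNReal.ofReal ((d/2) ^ m) * μ (ball 0 1) ≤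
      ENNReal.ofReal ((R + d/2) ^ m) * μ (ball 0 1) := by
    calc (s.card : ℝ≥0∞) * ENNReal.ofReal ((d/2) ^ m) * μ (ball 0 1) = μ A := by
          rw [hA, measure_biUnion_finset D fun c _ => measurableSet_ball]
          have hb : ∀ c ∈ s, μ (ball c (d/2))
              = ENNReal.ofReal ((d/2) ^ m) * μ (ball 0 1) := by
            intro c _
            rw [μ.addHaar_ball_of_pos _ hδ, hfr]
          rw [Finset.sum_congr rfl hb, Finset.sum_const, nsmul_eq_mul, mul_assoc]
      _ ≤ μ (ball 0 (R + d/2)) := measure_mono A_subset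
      _ = ENNReal.ofReal ((R + d/2) ^ m) * μ (ball 0 1) := by
          rw [μ.addHaar_ball_of_pos _ hρ, hfr]
  have J : (s.card : ℝ≥0∞) * ENNReal.ofReal ((d/2) ^ m) ≤ ENNReal.ofReal ((R + d/2) ^ m) :=
    (ENNReal.mul_le_mul_iff_left (measure_ball_pos _ _ zero_lt_one).ne' measure_ball_lt_top.ne).1 I
  have K : ENNReal.ofReal ((s.card : ℝ) * (d/2) ^ m) ≤ ENNReal.ofReal ((R + d/2) ^ m) := by
    rwa [ENNReal.ofReal_mul (by positivity), ENNReal.ofReal_natCast]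
  exact (ENNReal.ofReal_le_ofReal_iff (by positivity)).1 K


noncomputable def indVec {n : ℕ} (S : Finset (Fin n)) : Fin n → ℝ :=
  fun i => if i ∈ S then 1 else 0

lemma sum_sq_indVec {n : ℕ} (S : Finset (Fin n)) :
    ∑ i, (indVec S i)^2 = (S.card : ℝ) := by
  unfold indVec
  simp [apply_ite (fun x : ℝ => x^2), Finset.sum_ite_mem]

lemma sum_mul_indVec {n : ℕ} (S T : Finset (Fin n)) :
    ∑ i, indVec S i * indVec T i = ((S ∩ T).card : ℝ) := by
  unfold indVec
  have h : ∀ i : Fin n, (if i ∈ S then (1:ℝ) else 0) * (if i ∈ T then (1:ℝ) else 0)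
      = if i ∈ S ∩ T then 1 else 0 := by
    intro i
    by_cases hS : i ∈ S <;> by_cases hT : i ∈ T <;> simp [hS, hT]
  rw [Finset.sum_congr rfl (fun i _ => h i)]
  simp [Finset.sum_ite_mem]
  congr 1
  ext i
  simp [Finset.mem_inter]

lemma sum_sq_sub_indVec {n : ℕ} (S T : Finset (Fin n)) :
    ∑ i, (indVec S i - indVec T i)^2
      = (S.card : ℝ) + T.card - 2 * (S ∩ T).card := by
  have h : ∀ i : Fin n, (indVec S i - indVec T i)^2
      = (indVec S i)^2 + (indVec T i)^2 - 2 * (indVec S i * indVec T i) := by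
    intro i; ring
  rw [Finset.sum_congr rfl (fun i _ => h i)]
  rw [Finset.sum_sub_distrib, Finset.sum_add_distrib, ← Finset.mul_sum,
    sum_sq_indVec, sum_sq_indVec, sum_mul_indVec]

lemma ksparse_sub_indVec {n k : ℕ} (S T : Finset (Fin n)) (hS : S.card ≤ k) (hT : T.card ≤ k) :
    KSparse (2*k) (fun i => indVec S i - indVec T i) := by
  unfold KSparse
  have hsub : {i : Fin n | indVec S i - indVec T i ≠ 0} ⊆ ((S ∪ T : Finset (Fin n)) : Set (Fin n)) := by
    intro i hi
    simp only [Set.mem_setOf_eq] at hi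
    by_contra hmem
    simp only [Finset.coe_union, Set.mem_union, Finset.mem_coe, not_or] at hmem
    apply hi
    unfold indVec
    simp [hmem.1, hmem.2]
  calc {i : Fin n | indVec S i - indVec T i ≠ 0}.ncard
      ≤ ((S ∪ T : Finset (Fin n)) : Set (Fin n)).ncard :=
        Set.ncard_le_ncard hsub (Set.toFinite _)
    _ = (S ∪ T).card := Set.ncard_coe_finset _
    _ ≤ S.card + T.card := Finset.card_union_le _ _
    _ ≤ 2*k := by omega

lemma rank_bound {m n k : ℕ} (hn : 2 * k ≤ n)
    (A : Matrix (Fin m) (Fin n) ℝ) (δ : ℝ) (hδ1 : δ < 1)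
    (hRIP : RIP A (2 * k) δ) : 2 * k ≤ m := by
  classical
  set g : (Fin (2*k) → ℝ) →ₗ[ℝ] (Fin n → ℝ) :=
    { toFun := fun v => fun i => if h : (i : ℕ) < 2*k then v ⟨i, h⟩ else 0
      map_add' := by intro v w; funext i; by_cases h : (i:ℕ) < 2*k <;> simp [h]
      map_smul' := by intro c v; funext i; by_cases h : (i:ℕ) < 2*k <;> simp [h] } with hg
  set f := (Matrix.mulVecLin A).comp g with hf
  have hsparse : ∀ v : Fin (2*k) → ℝ, KSparse (2*k) (g v) := by
    intro v
    unfold KSparse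
    have hsub : {i : Fin n | g v i ≠ 0} ⊆ {i : Fin n | (i:ℕ) < 2*k} := by
      intro i hi
      simp only [Set.mem_setOf_eq] at hi ⊢
      by_contra h
      apply hi
      show (if h : (i : ℕ) < 2*k then v ⟨i, h⟩ else 0) = 0
      simp [h]
    have heq : {i : Fin n | (i:ℕ) < 2*k}
        = ((Finset.univ.filter (fun i : Fin n => (i:ℕ) < 2*k)) : Set (Fin n)) := by
      ext i; simp
    calc {i : Fin n | g v i ≠ 0}.ncard ≤ {i : Fin n | (i:ℕ) < 2*k}.ncard :=
          Set.ncard_le_ncard hsub (Set.toFinite _)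
      _ ≤ 2*k := by
          rw [heq, Set.ncard_coe_finset]
          have := Finset.card_le_card_of_injOn (fun i : Fin n => (i : ℕ))
            (s := Finset.univ.filter (fun i : Fin n => (i:ℕ) < 2*k))
            (t := Finset.range (2*k))
            (by intro i hi; simp at hi; simp [hi])
            (fun a _ b _ hab => Fin.val_injective hab)
          simpa using this
  have hker : ∀ v : Fin (2*k) → ℝ, f v = 0 → v = 0 := by
    intro v hv
    have hAv : A.mulVec (g v) = 0 := by
      rw [hf] at hv
      simpa [Matrix.mulVecLin_apply] using hv
    have hrip := (hRIP (g v) (hsparse v)).1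
    rw [hAv] at hrip
    simp only [Pi.zero_apply, zero_pow, Finset.sum_const_zero] at hrip
    norm_num at hrip
    have hsumnn : (0:ℝ) ≤ ∑ i, (g v i)^2 := Finset.sum_nonneg (fun i _ => sq_nonneg _)
    have hsum0 : ∑ i, (g v i)^2 = 0 := by nlinarith
    have hall : ∀ i : Fin n, g v i = 0 := by
      intro i
      have := (Finset.sum_eq_zero_iff_of_nonneg (fun i _ => sq_nonneg (g v i))).1 hsum0 i
        (Finset.mem_univ i)
      exact pow_eq_zero_iff (by norm_num) |>.1 this
    funext j
    have hjn : (j : ℕ) < n := lt_of_lt_of_le j.2 hn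
    have := hall ⟨j, hjn⟩
    rw [hg] at this
    simp only [LinearMap.coe_mk, AddHom.coe_mk] at this
    rw [dif_pos (show ((⟨j, hjn⟩ : Fin n) : ℕ) < 2*k from j.2)] at this
    simpa using this
  have hinj : Function.Injective f := LinearMap.ker_eq_bot.1 (LinearMap.ker_eq_bot'.2 hker)
  have := LinearMap.finrank_le_finrank_of_injective hinj
  rwa [Module.finrank_fin_fun, Module.finrank_fin_fun] at this

noncomputable def embedE {m : ℕ} (w : Fin m → ℝ) : EuclideanSpace ℝ (Fin m) :=
  (WithLp.equiv 2 (Fin m → ℝ)).symm w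

lemma normsq_embedE {m : ℕ} (w : Fin m → ℝ) : ‖embedE w‖^2 = ∑ i, (w i)^2 := by
  rw [EuclideanSpace.norm_eq, Real.sq_sqrt (Finset.sum_nonneg fun i _ => sq_nonneg _)]
  congr 1
  ext i
  rw [show (embedE w) i = w i from rfl, Real.norm_eq_abs, sq_abs]

lemma distsq_embedE {m : ℕ} (w w' : Fin m → ℝ) :
    dist (embedE w) (embedE w')^2 = ∑ i, (w i - w' i)^2 := by
  rw [EuclideanSpace.dist_eq, Real.sq_sqrt (Finset.sum_nonneg fun i _ => sq_nonneg _)]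
  congr 1
  ext i
  rw [show (embedE w) i = w i from rfl, show (embedE w') i = w' i from rfl,
    Real.dist_eq, sq_abs]

lemma le_of_sq_le_sq' {a b : ℝ} (hb : 0 ≤ b) (h : a^2 ≤ b^2) (ha : 0 ≤ a) : a ≤ b := by
  nlinarith

section MainProof
variable {m n k : ℕ}

theorem main_thm
    (hk : 1 ≤ k) (hn : 2 * k ≤ n)
    (A : Matrix (Fin m) (Fin n) ℝ) (δ : ℝ)
    (hδ : δ ∈ Set.Ioc (0 : ℝ) (1 / 2))
    (hRIP : RIP A (2 * k) δ) :
    (m : ℝ) ≥ (1 / (2 * Real.log (Real.sqrt 24 + 1))) * k * Real.log ((n : ℝ) / k) := by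
  classical
  obtain ⟨hδ0, hδhalf⟩ := hδ
  set L := Real.log (Real.sqrt 24 + 1) with hL
  have hs24 : (4:ℝ) ≤ Real.sqrt 24 := by
    nlinarith [Real.sq_sqrt (show (0:ℝ) ≤ 24 by norm_num), Real.sqrt_nonneg 24]
  have hLpos : 0 < L := Real.log_pos (by linarith)
  have hkR : (0:ℝ) < k := by exact_mod_cast hk
  have hnR : (0:ℝ) < n := by
    have : 2 ≤ n := by omega
    have h0 : 0 < n := by omega
    exact_mod_cast h0
  have hxpos : 0 < (n:ℝ)/k := by positivity
  rw [ge_iff_le]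
  rcases le_or_gt (Real.log ((n:ℝ)/k)) (4*L) with hcase | hcase
  · -- small n/k regime: use rank bound m ≥ 2k
    have h2k : 2*k ≤ m := rank_bound hn A δ (by linarith) hRIP
    have h1 : (1 / (2*L)) * k * Real.log ((n:ℝ)/k) ≤ (1/(2*L)) * k * (4*L) := by
      apply mul_le_mul_of_nonneg_left hcase (by positivity)
    have h2 : (1/(2*L)) * (k:ℝ) * (4*L) = 2*k := by
      field_simp
      ring
    have h3 : (2*(k:ℝ)) ≤ m := by exact_mod_cast h2k
    linarith
  · -- large n/k regime: packing argument
    have hx625 : (625:ℝ) ≤ (n:ℝ)/k := by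
      have h1 : Real.exp (4*L) ≤ (n:ℝ)/k := by
        rw [← Real.exp_log hxpos]
        exact Real.exp_le_exp.2 hcase.le
      have h2 : Real.exp (4*L) = (Real.sqrt 24 + 1)^4 := by
        rw [show (4:ℝ)*L = (4:ℕ)*L by norm_num, Real.exp_nat_mul, hL,
          Real.exp_log (by linarith : (0:ℝ) < Real.sqrt 24 + 1)]
      have h3 : (625:ℝ) = 5^4 := by norm_num
      have h4 : (5:ℝ)^4 ≤ (Real.sqrt 24 + 1)^4 :=
        pow_le_pow_left₀ (by norm_num) (by linarith) 4
      linarith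
    have hn625 : 625*(k:ℝ) ≤ n := (le_div_iff₀ hkR).1 hx625
    have hn128 : 128*(k:ℝ) ≤ n := by linarith
    obtain ⟨𝒳, hcards, hpair, hcount⟩ := exists_packing n k hk (by omega)
    set j := 3*k/4+1 with hj
    set N := 𝒳.card with hN
    set d : ℝ := Real.sqrt k / 2 with hd
    set R : ℝ := Real.sqrt (3*k/2) with hRdef
    have hdpos : 0 < d := by
      rw [hd]
      have := Real.sqrt_pos.2 hkR
      linarith
    have hd2 : d^2 = k/4 := by
      rw [hd, div_pow, Real.sq_sqrt hkR.le]
      norm_num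
    have hR2 : R^2 = 3*k/2 := Real.sq_sqrt (by positivity)
    have hnormy : ∀ S ∈ 𝒳, ‖embedE (A.mulVec (indVec S))‖ ≤ R := by
      intro S hS
      apply le_of_sq_le_sq' (Real.sqrt_nonneg _) _ (norm_nonneg _)
      rw [normsq_embedE, hR2]
      have hsp : KSparse (2*k) (fun i => indVec S i - indVec (∅ : Finset (Fin n)) i) :=
        ksparse_sub_indVec S ∅ (le_of_eq (hcards S hS)) (by simp)
      have hsame : (fun i => indVec S i - indVec (∅ : Finset (Fin n)) i) = indVec S := by
        funext i
        simp [indVec]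
      rw [hsame] at hsp
      have hrip := (hRIP _ hsp).2
      rw [sum_sq_indVec, hcards S hS] at hrip
      nlinarith
    have hsep : ∀ S ∈ 𝒳, ∀ T ∈ 𝒳, S ≠ T →
        d ≤ dist (embedE (A.mulVec (indVec S))) (embedE (A.mulVec (indVec T))) := by
      intro S hS T hT hST
      apply le_of_sq_le_sq' dist_nonneg _ hdpos.le
      rw [distsq_embedE, hd2]
      have hmv : ∀ i, A.mulVec (indVec S) i - A.mulVec (indVec T) i
          = A.mulVec (fun i => indVec S i - indVec T i) i := by
        intro i
        have : (fun i => indVec S i - indVec T i) = (indVec S - indVec T : Fin n → ℝ) := rfl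
        rw [this, Matrix.mulVec_sub]
        simp
      have hsum : ∑ i, (A.mulVec (indVec S) i - A.mulVec (indVec T) i)^2
          = ∑ i, (A.mulVec (fun i => indVec S i - indVec T i) i)^2 := by
        exact Finset.sum_congr rfl (fun i _ => by rw [hmv i])
      rw [hsum]
      have hrip := (hRIP _ (ksparse_sub_indVec S T (le_of_eq (hcards S hS))
        (le_of_eq (hcards T hT)))).1
      rw [sum_sq_sub_indVec, hcards S hS, hcards T hT] at hrip
      have hint : 4*(((S ∩ T).card : ℕ):ℝ) ≤ 3*(k:ℝ) := by exact_mod_cast hpair S hS T hT hST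
      nlinarith [(show (0:ℝ) ≤ ((S ∩ T).card : ℝ) from Nat.cast_nonneg _)]
    set Y := 𝒳.image (fun S => embedE (A.mulVec (indVec S))) with hY
    have hYcard : Y.card = N := by
      rw [hY]
      apply Finset.card_image_of_injOn
      intro S hS T hT heq
      by_contra hne
      have := hsep S hS T hT hne
      rw [show embedE (A.mulVec (indVec S)) = embedE (A.mulVec (indVec T)) from heq] at this
      rw [dist_self] at this
      linarith
    have hpack : (Y.card : ℝ) * (d/2)^m ≤ (R + d/2)^m := by
      apply volume_packing Y hdpos (Real.sqrt_nonneg _)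
      · intro c hc
        rw [hY, Finset.mem_image] at hc
        obtain ⟨S, hS, rfl⟩ := hc
        exact hnormy S hS
      · intro c hc c' hc' hcc
        rw [hY, Finset.mem_image] at hc hc'
        obtain ⟨S, hS, rfl⟩ := hc
        obtain ⟨T, hT, rfl⟩ := hc'
        exact hsep S hS T hT (fun h => hcc (by rw [h]))
    have hkey : R + d/2 = (Real.sqrt 24 + 1) * (d/2) := by
      have h16 : Real.sqrt 16 = 4 := by
        rw [show (16:ℝ) = 4^2 by norm_num, Real.sqrt_sq (by norm_num : (0:ℝ) ≤ 4)]
      have h24 : Real.sqrt 24 = 4 * Real.sqrt (3/2) := by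
        rw [show (24:ℝ) = 16 * (3/2) by norm_num,
          Real.sqrt_mul (by norm_num : (0:ℝ) ≤ 16), h16]
      have h32 : R = Real.sqrt (3/2) * Real.sqrt k := by
        rw [hRdef, show (3:ℝ)*k/2 = (3/2) * k by ring,
          Real.sqrt_mul (by norm_num : (0:ℝ) ≤ 3/2)]
      rw [h32, h24, hd]
      ring
    have hNB : (N:ℝ) ≤ (Real.sqrt 24 + 1)^m := by
      have h1 : (N:ℝ) * (d/2)^m ≤ (Real.sqrt 24 + 1)^m * (d/2)^m := by
        rw [← mul_pow]
        rw [hYcard, hkey] at hpack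
        exact hpack
      exact le_of_mul_le_mul_right h1 (by positivity)
    -- combinatorial lower bound: n^k ≤ N^2 * k^k
    have hjk : j ≤ k := by omega
    have hkn : k ≤ n := by omega
    have hc1 : (n.choose k : ℝ) ≤ (N:ℝ) * (2^k * (n.choose (k-j) : ℝ)) := by
      have h2 : N * (k.choose j * n.choose (k-j)) ≤ N * (2^k * n.choose (k-j)) :=
        Nat.mul_le_mul_left _ (Nat.mul_le_mul_right _ (choose_le_two_pow' k j))
      exact_mod_cast hcount.trans h2
    have hc2 : ((n.choose (k-j)):ℝ) * ((n:ℝ) - k)^j ≤ (n.choose k:ℝ) * (k:ℝ)^j := by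
      have h := choose_ratio n k j hjk hkn
      have hcast : (((n.choose (k-j)) * (n-k)^j : ℕ) : ℝ) ≤ (((n.choose k) * k^j : ℕ) : ℝ) :=
        Nat.cast_le.2 h
      push_cast [Nat.cast_sub hkn] at hcast
      convert hcast using 2
    have hposnkj : (0:ℝ) < (n.choose (k-j) : ℝ) :=
      Nat.cast_pos.2 (Nat.choose_pos (by omega))
    have hstar : ((n:ℝ) - k)^j ≤ (N:ℝ) * 2^k * (k:ℝ)^j := by
      have h3 : (n.choose k:ℝ) * (k:ℝ)^j ≤ ((N:ℝ) * (2^k * (n.choose (k-j):ℝ))) * (k:ℝ)^j :=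
        mul_le_mul_of_nonneg_right hc1 (by positivity)
      have h5 : ((n:ℝ) - k)^j * (n.choose (k-j):ℝ)
          ≤ ((N:ℝ) * 2^k * (k:ℝ)^j) * (n.choose (k-j):ℝ) := by
        calc ((n:ℝ) - k)^j * (n.choose (k-j):ℝ)
            = ((n.choose (k-j)):ℝ) * ((n:ℝ) - k)^j := by ring
          _ ≤ (n.choose k:ℝ) * (k:ℝ)^j := hc2
          _ ≤ ((N:ℝ) * (2^k * (n.choose (k-j):ℝ))) * (k:ℝ)^j := h3
          _ = ((N:ℝ) * 2^k * (k:ℝ)^j) * (n.choose (k-j):ℝ) := by ring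
      exact le_of_mul_le_mul_right h5 hposnkj
    -- exponent bookkeeping
    have he : 3*k + 1 ≤ 4*j := by omega
    set e := 4*j - 3*k with hedef
    have he4 : 4*j = 3*k + e := by omega
    have hX : (0:ℝ) < (n:ℝ)/2 := by linarith
    have hn2 : 2*(k:ℝ) ≤ n := by exact_mod_cast hn
    have hkX : (k:ℝ) ≤ (n:ℝ)/2 := by linarith
    have hnkhalf : (n:ℝ)/2 ≤ (n:ℝ) - k := by linarith
    have hNnn : (0:ℝ) ≤ (N:ℝ) := Nat.cast_nonneg _
    have hstar4 : ((n:ℝ) - k)^(4*j) ≤ ((N:ℝ) * 2^k * (k:ℝ)^j)^4 := by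
      have h := pow_le_pow_left₀ (pow_nonneg (by linarith : (0:ℝ) ≤ (n:ℝ)-k) j) hstar 4
      rw [← pow_mul, show j*4 = 4*j by ring] at h
      exact h
    have hlhs : ((n:ℝ)/2)^(3*k) * (k:ℝ)^e ≤ ((n:ℝ) - k)^(4*j) := by
      calc ((n:ℝ)/2)^(3*k) * (k:ℝ)^e ≤ ((n:ℝ)/2)^(3*k) * ((n:ℝ)/2)^e :=
            mul_le_mul_of_nonneg_left (pow_le_pow_left₀ hkR.le hkX e) (by positivity)
        _ = ((n:ℝ)/2)^(4*j) := by rw [← pow_add, ← he4]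
        _ ≤ ((n:ℝ)-k)^(4*j) := pow_le_pow_left₀ hX.le hnkhalf _
    have hrhs : ((N:ℝ) * 2^k * (k:ℝ)^j)^4 = ((N:ℝ)^4 * 16^k * (k:ℝ)^(3*k)) * (k:ℝ)^e := by
      calc ((N:ℝ) * 2^k * (k:ℝ)^j)^4 = (N:ℝ)^4 * ((2:ℝ)^k)^4 * ((k:ℝ)^j)^4 := by ring
        _ = (N:ℝ)^4 * (2:ℝ)^(k*4) * (k:ℝ)^(j*4) := by rw [← pow_mul, ← pow_mul]
        _ = (N:ℝ)^4 * ((2:ℝ)^4)^k * (k:ℝ)^(4*j) := by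
            rw [← pow_mul, show k*4 = 4*k by ring, show j*4 = 4*j by ring, pow_mul]
        _ = ((N:ℝ)^4 * 16^k * (k:ℝ)^(3*k)) * (k:ℝ)^e := by
            rw [he4, pow_add]
            norm_num
            ring
    have hXk : ((n:ℝ)/2)^(3*k) ≤ (N:ℝ)^4 * 16^k * (k:ℝ)^(3*k) := by
      have h := hlhs.trans (hstar4.trans_eq hrhs)
      exact le_of_mul_le_mul_right h (pow_pos hkR e)
    have hn3k : (n:ℝ)^(3*k) ≤ (N:ℝ)^4 * 128^k * (k:ℝ)^(3*k) := by
      have heq : (n:ℝ)^(3*k) = 8^k * ((n:ℝ)/2)^(3*k) := by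
        rw [div_pow, show (2:ℝ)^(3*k) = 8^k by rw [pow_mul]; norm_num]
        field_simp
      rw [heq]
      calc (8:ℝ)^k * ((n:ℝ)/2)^(3*k) ≤ 8^k * ((N:ℝ)^4 * 16^k * (k:ℝ)^(3*k)) :=
            mul_le_mul_of_nonneg_left hXk (by positivity)
        _ = (N:ℝ)^4 * 128^k * (k:ℝ)^(3*k) := by
            rw [show (128:ℝ)^k = 8^k*16^k by rw [← mul_pow]; norm_num]
            ring
    have h128 : (128:ℝ)^k * (k:ℝ)^k ≤ (n:ℝ)^k := by
      rw [← mul_pow]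
      exact pow_le_pow_left₀ (by positivity) hn128 k
    have hfin : (n:ℝ)^(2*k) * (n:ℝ)^k ≤ ((N:ℝ)^4 * (k:ℝ)^(2*k)) * (n:ℝ)^k := by
      calc (n:ℝ)^(2*k) * (n:ℝ)^k = (n:ℝ)^(3*k) := by rw [← pow_add]; ring_nf
        _ ≤ (N:ℝ)^4 * 128^k * (k:ℝ)^(3*k) := hn3k
        _ = (N:ℝ)^4 * (k:ℝ)^(2*k) * (128^k * (k:ℝ)^k) := by
            rw [show (k:ℝ)^(3*k) = (k:ℝ)^(2*k)*(k:ℝ)^k by rw [← pow_add]; ring_nf]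
            ring
        _ ≤ (N:ℝ)^4 * (k:ℝ)^(2*k) * (n:ℝ)^k := by
            apply mul_le_mul_of_nonneg_left h128 (mul_nonneg (pow_nonneg hNnn 4) (pow_nonneg hkR.le _))
    have h2k' : (n:ℝ)^(2*k) ≤ ((N:ℝ)^2 * (k:ℝ)^k)^2 := by
      have h := le_of_mul_le_mul_right hfin (pow_pos hnR k)
      calc (n:ℝ)^(2*k) ≤ (N:ℝ)^4 * (k:ℝ)^(2*k) := h
        _ = ((N:ℝ)^2 * (k:ℝ)^k)^2 := by
            rw [mul_pow, ← pow_mul, ← pow_mul]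
            ring_nf
    have hnk2 : (n:ℝ)^k ≤ (N:ℝ)^2 * (k:ℝ)^k := by
      apply le_of_sq_le_sq' (mul_nonneg (pow_nonneg hNnn 2) (pow_nonneg hkR.le _)) _ (by positivity)
      rw [show ((n:ℝ)^k)^2 = (n:ℝ)^(2*k) by rw [← pow_mul]; ring_nf]
      exact h2k'
    have hxk : ((n:ℝ)/k)^k ≤ (N:ℝ)^2 := by
      rw [div_pow, div_le_iff₀ (by positivity)]
      exact hnk2
    have hfinal : ((n:ℝ)/k)^k ≤ (Real.sqrt 24 + 1)^(2*m) := by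
      calc ((n:ℝ)/k)^k ≤ (N:ℝ)^2 := hxk
        _ ≤ ((Real.sqrt 24 + 1)^m)^2 := pow_le_pow_left₀ hNnn hNB 2
        _ = (Real.sqrt 24 + 1)^(2*m) := by rw [← pow_mul]; ring_nf
    have hlog : (k:ℝ) * Real.log ((n:ℝ)/k) ≤ (2*(m:ℝ)) * L := by
      have h1 := Real.log_le_log (by positivity : (0:ℝ) < ((n:ℝ)/k)^k) hfinal
      rw [Real.log_pow, Real.log_pow] at h1
      push_cast at h1
      exact h1
    have hgoal : 1 / (2*L) * ((k:ℝ) * Real.log ((n:ℝ)/k)) ≤ 1 / (2*L) * ((2*(m:ℝ)) * L) :=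
      mul_le_mul_of_nonneg_left hlog (by positivity)
    have hsimp : 1 / (2*L) * ((2*(m:ℝ)) * L) = m := by
      field_simp
    rw [mul_assoc]
    rw [hsimp] at hgoal
    exact hgoal
end MainProof

theorem rip_lower_bound_on_measurements {m n k : ℕ}
    (hk : 1 ≤ k) (hn : 2 * k ≤ n)
    (A : Matrix (Fin m) (Fin n) ℝ) (δ : ℝ)
    (hδ : δ ∈ Set.Ioc (0 : ℝ) (1 / 2))
    (hRIP : RIP A (2 * k) δ) :
    (m : ℝ) ≥ (1 / (2 * Real.log (Real.sqrt 24 + 1))) * k * Real.log ((n : ℝ) / k) :=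
  main_thm hk hn A δ hδ hRIP
end

section
/- Suppose n ≥ 2k ≥ 2, A ∈ ℝ^{m×n} satisfies the restricted isometry property of order 2k with constant δ_{2k} < √2 − 1, and y = Ax + η for some x ∈ ℝⁿ and η ∈ ℝ^m with ‖η‖₂ ≤ ε. Let x̂ be any minimizer of ‖z‖₁ over the set B_ε(y) = {z ∈ ℝⁿ : ‖y − Az‖₂ ≤ ε}. Then ‖x̂ − x‖₂ ≤ C₀·σ_k(x,‖·‖₁)/√k + C₂·ε, where C₀ = 2(1 + (√2−1)δ_{2k}) / (1 − (√2+1)δ_{2k}) and C₂ = 4√(1+δ_{2k}) / (1 − (√2+1)δ_{2k}). -/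
open Finset

/-- The sparsity measure `σ_k(x, ‖·‖₁)`. -/
noncomputable def sigmaL1 {n : ℕ} (k : ℕ) (x : Fin n → ℝ) : ℝ :=
  sInf {r : ℝ | ∃ z : Fin n → ℝ, KSparse k z ∧ r = l1norm (x - z)}

/-! ### ℓ² toolkit -/

section Tools
variable {N : ℕ}

lemma l2norm_nonneg (v : Fin N → ℝ) : 0 ≤ l2norm v := Real.sqrt_nonneg _

lemma sq_l2norm (v : Fin N → ℝ) : l2norm v ^ 2 = ∑ i, (v i)^2 :=
  Real.sq_sqrt (Finset.sum_nonneg fun _ _ => sq_nonneg _)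

lemma le_of_sq_le_sq2 {a x : ℝ} (ha : 0 ≤ a) (hx : 0 ≤ x) (h : a^2 ≤ x^2) : a ≤ x := by
  nlinarith [sq_nonneg (a - x), sq_nonneg (a + x)]

lemma l2norm_eq_zero {v : Fin N → ℝ} (h : l2norm v = 0) : v = 0 := by
  have h2 : ∑ i, (v i)^2 = 0 := by
    have := sq_l2norm v; rw [h] at this; linarith
  funext i
  have := (Finset.sum_eq_zero_iff_of_nonneg (fun i _ => sq_nonneg (v i))).mp h2 i (mem_univ i)
  exact pow_eq_zero_iff (by norm_num) |>.mp this

def dot {N : ℕ} (u v : Fin N → ℝ) : ℝ := ∑ i, u i * v i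

lemma dot_le (u v : Fin N → ℝ) : dot u v ≤ l2norm u * l2norm v := by
  have cs := Finset.sum_mul_sq_le_sq_mul_sq univ u v
  have h1 : (l2norm u * l2norm v)^2 = (∑ i, (u i)^2) * (∑ i, (v i)^2) := by
    rw [mul_pow, sq_l2norm, sq_l2norm]
  have h0 : 0 ≤ l2norm u * l2norm v := mul_nonneg (l2norm_nonneg u) (l2norm_nonneg v)
  rcases le_or_gt (dot u v) 0 with h | h
  · linarith
  · exact le_of_sq_le_sq2 h.le h0 (by rw [h1]; exact cs)

lemma l2norm_add_le (u v : Fin N → ℝ) : l2norm (u + v) ≤ l2norm u + l2norm v := by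
  have hd := dot_le u v
  refine le_of_sq_le_sq2 (l2norm_nonneg _) (add_nonneg (l2norm_nonneg u) (l2norm_nonneg v)) ?_
  have e : l2norm (u+v)^2 = l2norm u ^2 + 2 * dot u v + l2norm v ^2 := by
    rw [sq_l2norm, sq_l2norm, sq_l2norm]
    simp only [dot, Pi.add_apply, add_sq, Finset.sum_add_distrib, Finset.mul_sum]
    ring
  nlinarith

lemma l2norm_neg (v : Fin N → ℝ) : l2norm (-v) = l2norm v := by
  unfold l2norm; congr 1; apply Finset.sum_congr rfl; intro i _; simp [neg_pow]

lemma l2norm_sub_le (u v : Fin N → ℝ) : l2norm (u - v) ≤ l2norm u + l2norm v := by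
  rw [sub_eq_add_neg]
  simpa [l2norm_neg] using l2norm_add_le u (-v)

lemma l2norm_sum_le {ι : Type*} [DecidableEq ι] (s : Finset ι) (f : ι → Fin N → ℝ) :
    l2norm (∑ j ∈ s, f j) ≤ ∑ j ∈ s, l2norm (f j) := by
  induction s using Finset.induction_on with
  | empty => simp [l2norm]
  | @insert a s ha ih =>
      rw [Finset.sum_insert ha, Finset.sum_insert ha]
      exact (l2norm_add_le _ _).trans (by linarith)

lemma dot_sum_right {ι : Type*} (s : Finset ι) (u : Fin N → ℝ) (f : ι → Fin N → ℝ) :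
    dot u (∑ j ∈ s, f j) = ∑ j ∈ s, dot u (f j) := by
  unfold dot
  simp only [Finset.sum_apply, Finset.mul_sum]
  exact Finset.sum_comm

lemma dot_add_right (u v w : Fin N → ℝ) : dot u (v + w) = dot u v + dot u w := by
  unfold dot; simp only [Pi.add_apply, mul_add, Finset.sum_add_distrib]

lemma dot_add_left (u v w : Fin N → ℝ) : dot (u + v) w = dot u w + dot v w := by
  unfold dot; simp only [Pi.add_apply, add_mul, Finset.sum_add_distrib]

lemma dot_neg_right (u v : Fin N → ℝ) : dot u (-v) = - dot u v := by
  unfold dot; simp [mul_comm]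

lemma dot_self_eq (v : Fin N → ℝ) : dot v v = l2norm v ^ 2 := by
  rw [sq_l2norm]; unfold dot; apply Finset.sum_congr rfl; intros; ring

lemma dot_smul_smul (c d : ℝ) (u v : Fin N → ℝ) :
    dot (c • u) (d • v) = (c * d) * dot u v := by
  unfold dot
  rw [Finset.mul_sum]
  apply Finset.sum_congr rfl
  intro i _
  simp [Pi.smul_apply, smul_eq_mul]; ring

lemma l2norm_smul_nonneg {c : ℝ} (hc : 0 ≤ c) (v : Fin N → ℝ) :
    l2norm (c • v) = c * l2norm v := by
  unfold l2norm
  have : ∑ i, ((c • v) i)^2 = c^2 * ∑ i, (v i)^2 := by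
    rw [Finset.mul_sum]; apply Finset.sum_congr rfl; intro i _
    simp [Pi.smul_apply, smul_eq_mul]; ring
  rw [this, Real.sqrt_mul (sq_nonneg c), Real.sqrt_sq hc]

end Tools

/-! ### Restriction toolkit -/

section Res
variable {n : ℕ}

def res (S : Finset (Fin n)) (v : Fin n → ℝ) : Fin n → ℝ := fun i => if i ∈ S then v i else 0

lemma res_apply_mem {S : Finset (Fin n)} {v : Fin n → ℝ} {i : Fin n} (h : i ∈ S) :
    res S v i = v i := if_pos h

lemma res_apply_not_mem {S : Finset (Fin n)} {v : Fin n → ℝ} {i : Fin n} (h : i ∉ S) :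
    res S v i = 0 := if_neg h

lemma res_supp {S : Finset (Fin n)} {v : Fin n → ℝ} {i : Fin n} (h : res S v i ≠ 0) : i ∈ S := by
  by_contra hc; exact h (res_apply_not_mem hc)

lemma res_union {S T : Finset (Fin n)} (h : Disjoint S T) (v : Fin n → ℝ) :
    res (S ∪ T) v = res S v + res T v := by
  funext i
  simp only [res, Pi.add_apply, Finset.mem_union]
  by_cases hS : i ∈ S
  · have hT : i ∉ T := fun hT => (Finset.disjoint_left.mp h hS) hT
    simp [hS, hT]
  · by_cases hT : i ∈ T <;> simp [hS, hT]

lemma res_univ (v : Fin n → ℝ) : res Finset.univ v = v := by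
  funext i; simp [res]

lemma ksparse_of_supp {K : ℕ} {S : Finset (Fin n)} {v : Fin n → ℝ}
    (hcard : S.card ≤ K) (hsupp : ∀ i, v i ≠ 0 → i ∈ S) : KSparse K v := by
  unfold KSparse
  have hsub : {i : Fin n | v i ≠ 0} ⊆ (S : Set (Fin n)) := fun i hi => hsupp i hi
  calc Set.ncard {i : Fin n | v i ≠ 0} ≤ Set.ncard (S : Set (Fin n)) :=
        Set.ncard_le_ncard hsub (S : Set (Fin n)).toFinite
    _ = S.card := Set.ncard_coe_finset S
    _ ≤ K := hcard

lemma sq_sum_res (S : Finset (Fin n)) (v : Fin n → ℝ) :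
    ∑ i, (res S v i)^2 = ∑ i ∈ S, (v i)^2 := by
  rw [← Finset.sum_filter_add_sum_filter_not Finset.univ (· ∈ S)]
  have h1 : ∀ i ∈ Finset.univ.filter (· ∉ S), (res S v i)^2 = 0 := by
    intro i hi; rw [Finset.mem_filter] at hi; simp [res_apply_not_mem hi.2]
  rw [Finset.sum_eq_zero h1, add_zero]
  rw [Finset.filter_mem_eq_inter, Finset.univ_inter]
  exact Finset.sum_congr rfl fun i hi => by rw [res_apply_mem hi]

lemma res_biUnion {ι : Type*} [DecidableEq ι] (s : Finset ι) (f : ι → Finset (Fin n))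
    (hdisj : ∀ a ∈ s, ∀ b ∈ s, a ≠ b → Disjoint (f a) (f b)) (v : Fin n → ℝ) :
    res (s.biUnion f) v = ∑ j ∈ s, res (f j) v := by
  induction s using Finset.induction_on with
  | empty => funext i; simp [res]
  | @insert a s ha ih =>
      rw [Finset.biUnion_insert, Finset.sum_insert ha]
      have hd : Disjoint (f a) (s.biUnion f) := by
        rw [Finset.disjoint_biUnion_right]
        intro b hb
        exact hdisj a (Finset.mem_insert_self a s) b (Finset.mem_insert_of_mem hb)
          (fun h => ha (h ▸ hb))
      rw [res_union hd, ih (fun a' ha' b hb hab =>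
        hdisj a' (Finset.mem_insert_of_mem ha') b (Finset.mem_insert_of_mem hb) hab)]

end Res

/-! ### Sorting toolkit -/

section Sorting
variable {n : ℕ}

/-- Descending sort permutation for `key`. -/
noncomputable def dsort (key : Fin n → ℝ) : Equiv.Perm (Fin n) := Tuple.sort (fun i => -key i)

lemma key_le_of_rank_le (key : Fin n → ℝ) {i i' : Fin n}
    (h : ((dsort key).symm i : ℕ) ≤ ((dsort key).symm i' : ℕ)) : key i' ≤ key i := by
  have h' : (dsort key).symm i ≤ (dsort key).symm i' := by rwa [Fin.le_def]
  have := Tuple.monotone_sort (fun i => -key i) h'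
  simp only [Function.comp_apply] at this
  have h2 : key (dsort key ((dsort key).symm i')) ≤ key (dsort key ((dsort key).symm i)) := by
    unfold dsort at this ⊢; linarith
  simpa using h2

lemma card_rank_filter (τ : Equiv.Perm (Fin n)) (p : ℕ → Prop) [DecidablePred p] :
    (Finset.univ.filter (fun i => p ((τ.symm i : Fin n) : ℕ))).card
      = ((Finset.range n).filter p).card := by
  apply Finset.card_bij (fun i _ => ((τ.symm i : Fin n) : ℕ))
  · intro i hi
    rw [Finset.mem_filter] at hi ⊢
    exact ⟨Finset.mem_range.mpr (τ.symm i).isLt, hi.2⟩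
  · intro a _ b _ hab
    exact τ.symm.injective (Fin.ext hab)
  · intro r hr
    rw [Finset.mem_filter, Finset.mem_range] at hr
    refine ⟨τ ⟨r, hr.1⟩, ?_, ?_⟩
    · rw [Finset.mem_filter]
      exact ⟨Finset.mem_univ _, by simp [hr.2]⟩
    · simp

lemma range_filter_lt (k : ℕ) (hk : k ≤ n) :
    ((Finset.range n).filter (fun r => r < k)).card = k := by
  have : (Finset.range n).filter (fun r => r < k) = Finset.range k := by
    ext r; simp only [Finset.mem_filter, Finset.mem_range]; omega
  rw [this, Finset.card_range]

lemma range_filter_div_le (k j : ℕ) (hk : 1 ≤ k) :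
    ((Finset.range n).filter (fun r => r / k = j)).card ≤ k := by
  have hsub : (Finset.range n).filter (fun r => r / k = j) ⊆ Finset.Ico (j*k) (j*k+k) := by
    intro r hr
    rw [Finset.mem_filter] at hr
    rw [Finset.mem_Ico]
    constructor
    · calc j * k = r / k * k := by rw [hr.2]
        _ ≤ r := Nat.div_mul_le_self r k
    · have : r / k < j + 1 := by omega
      have h3 := (Nat.div_lt_iff_lt_mul (by omega : 0 < k)).mp this
      have : (j+1)*k = j*k+k := by ring
      omega
  calc _ ≤ (Finset.Ico (j*k) (j*k+k)).card := Finset.card_le_card hsub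
    _ = k := by rw [Nat.card_Ico]; omega

lemma range_filter_div_eq (k j : ℕ) (hk : 1 ≤ k) (hjk : (j+1)*k ≤ n) :
    ((Finset.range n).filter (fun r => r / k = j)).card = k := by
  have heq : (Finset.range n).filter (fun r => r / k = j) = Finset.Ico (j*k) (j*k+k) := by
    ext r
    rw [Finset.mem_filter, Finset.mem_range, Finset.mem_Ico]
    constructor
    · intro ⟨h1, h2⟩
      constructor
      · calc j * k = r / k * k := by rw [h2]
          _ ≤ r := Nat.div_mul_le_self r k
      · have : r / k < j + 1 := by omega
        have h3 := (Nat.div_lt_iff_lt_mul (by omega : 0 < k)).mp this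
        have : (j+1)*k = j*k+k := by ring
        omega
    · intro ⟨h1, h2⟩
      have he : (j+1)*k = j*k+k := by ring
      have hrn : r < n := by omega
      refine ⟨hrn, ?_⟩
      have hub : r / k < j + 1 := (Nat.div_lt_iff_lt_mul (by omega : 0 < k)).mpr (by omega)
      have hlb : j ≤ r / k := (Nat.le_div_iff_mul_le (by omega : 0 < k)).mpr h1
      omega
  rw [heq, Nat.card_Ico]; omega

/-- The `j`-th block of size `k` in decreasing order of `key`. -/
noncomputable def blk (k : ℕ) (key : Fin n → ℝ) (j : ℕ) : Finset (Fin n) :=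
  Finset.univ.filter (fun i => (((dsort key).symm i : Fin n) : ℕ) / k = j)

lemma mem_blk {k : ℕ} {key : Fin n → ℝ} {j : ℕ} {i : Fin n} :
    i ∈ blk k key j ↔ (((dsort key).symm i : Fin n) : ℕ) / k = j := by
  simp [blk]

lemma blk_disjoint {k : ℕ} (key : Fin n → ℝ) {j j' : ℕ} (h : j ≠ j') :
    Disjoint (blk k key j) (blk k key j') := by
  rw [Finset.disjoint_left]
  intro i hi hi'
  rw [mem_blk] at hi hi'
  exact h (hi ▸ hi')

lemma card_blk_le {k : ℕ} (key : Fin n → ℝ) (j : ℕ) (hk : 1 ≤ k) :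
    (blk k key j).card ≤ k := by
  unfold blk
  rw [card_rank_filter (dsort key) (fun r => r / k = j)]
  exact range_filter_div_le k j hk

lemma card_blk_eq {k : ℕ} (key : Fin n → ℝ) (j : ℕ) (hk : 1 ≤ k) (hjk : (j+1)*k ≤ n) :
    (blk k key j).card = k := by
  unfold blk
  rw [card_rank_filter (dsort key) (fun r => r / k = j)]
  exact range_filter_div_eq k j hk hjk

lemma blk_key_le {k : ℕ} (key : Fin n → ℝ) {j j' : ℕ} (h : j < j') {i i' : Fin n}
    (hi : i ∈ blk k key j) (hi' : i' ∈ blk k key j') : key i' ≤ key i := by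
  rw [mem_blk] at hi hi'
  apply key_le_of_rank_le
  by_contra hc
  push_neg at hc
  have := Nat.div_le_div_right (c := k) (le_of_lt hc)
  omega

/-- If a `k`-subset `T` strictly dominates its complement in `key` value, it is block 0. -/
lemma blk_zero_eq {k : ℕ} (key : Fin n → ℝ) (T : Finset (Fin n)) (hk : 1 ≤ k) (hkn : k ≤ n)
    (hcard : T.card = k) (hdom : ∀ i ∈ T, ∀ i' ∉ T, key i' < key i) :
    blk k key 0 = T := by
  have hcard0 : (blk k key 0).card = k := card_blk_eq key 0 hk (by omega)
  have hsub : T ⊆ blk k key 0 := by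
    intro i hiT
    by_contra hc
    rw [mem_blk] at hc
    have hrank : k ≤ (((dsort key).symm i : Fin n) : ℕ) := by
      rcases Nat.lt_or_ge (((dsort key).symm i : Fin n) : ℕ) k with h | h
      · exact absurd (Nat.div_eq_of_lt h) hc
      · exact h
    -- the first k ranks
    set F : Finset (Fin n) := Finset.univ.filter (fun r : Fin n => (r : ℕ) < k) with hF
    have hcardF : F.card = k := by
      rw [hF]
      have := card_rank_filter (Equiv.refl (Fin n)) (fun r => r < k)
      simp only [Equiv.refl_symm, Equiv.refl_apply] at this
      refine this.trans ?_
      exact range_filter_lt k hkn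
    by_cases hall : ∀ r ∈ F, dsort key r ∈ T
    · -- image of F is all of T, so i has small rank, contradiction
      have himg : F.image (dsort key) = T := by
        apply Finset.eq_of_subset_of_card_le
        · intro i' hi'
          rw [Finset.mem_image] at hi'
          obtain ⟨r, hr, rfl⟩ := hi'
          exact hall r hr
        · rw [Finset.card_image_of_injective _ (dsort key).injective, hcardF, hcard]
      have : i ∈ F.image (dsort key) := himg ▸ hiT
      rw [Finset.mem_image] at this
      obtain ⟨r, hr, hri⟩ := this
      rw [hF, Finset.mem_filter] at hr
      have : ((dsort key).symm i : ℕ) = (r : ℕ) := by rw [← hri]; simp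
      omega
    · push_neg at hall
      obtain ⟨r, hrF, hrT⟩ := hall
      have hlt := hdom i hiT (dsort key r) hrT
      rw [hF, Finset.mem_filter] at hrF
      have hle : (((dsort key).symm (dsort key r) : Fin n) : ℕ)
          ≤ (((dsort key).symm i : Fin n) : ℕ) := by
        simp only [Equiv.symm_apply_apply]
        omega
      have := key_le_of_rank_le key hle
      linarith
  exact (Finset.eq_of_subset_of_card_le hsub (by omega)).symm

end Sorting

/-! ### RIP cross inner product bound -/

section Cross
variable {m n k : ℕ}

lemma sum_add_sq (a b : Fin m → ℝ) :
    ∑ i, (a i + b i)^2 = ∑ i, (a i)^2 + 2 * (∑ i, a i * b i) + ∑ i, (b i)^2 := by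
  simp only [add_sq, Finset.sum_add_distrib, Finset.mul_sum, mul_assoc]

lemma sum_sub_sq (a b : Fin m → ℝ) :
    ∑ i, (a i - b i)^2 = ∑ i, (a i)^2 - 2 * (∑ i, a i * b i) + ∑ i, (b i)^2 := by
  simp only [sub_sq, Finset.sum_add_distrib, Finset.sum_sub_distrib, Finset.mul_sum, mul_assoc]

lemma cross_para (A : Matrix (Fin m) (Fin n) ℝ) (δ : ℝ) (hRIP : RIP A (2*k) δ)
    (u w : Fin n → ℝ) (S T : Finset (Fin n)) (hST : Disjoint S T)
    (hcard : S.card + T.card ≤ 2*k)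
    (hu : ∀ i, u i ≠ 0 → i ∈ S) (hw : ∀ i, w i ≠ 0 → i ∈ T) :
    dot (A.mulVec u) (A.mulVec w) ≤ δ / 2 * ((l2norm u)^2 + (l2norm w)^2) := by
  have hsupp_add : ∀ i, (u + w) i ≠ 0 → i ∈ S ∪ T := by
    intro i hi
    rw [Finset.mem_union]
    by_cases h : u i ≠ 0
    · exact Or.inl (hu i h)
    · push_neg at h
      refine Or.inr (hw i ?_)
      intro hwi
      exact hi (by simp [h, hwi])
  have hsupp_sub : ∀ i, (u - w) i ≠ 0 → i ∈ S ∪ T := by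
    intro i hi
    rw [Finset.mem_union]
    by_cases h : u i ≠ 0
    · exact Or.inl (hu i h)
    · push_neg at h
      refine Or.inr (hw i ?_)
      intro hwi
      exact hi (by simp [h, hwi])
  have hcard' : (S ∪ T).card ≤ 2*k := le_trans (Finset.card_union_le S T) hcard
  have hsp1 : KSparse (2*k) (u + w) := ksparse_of_supp hcard' hsupp_add
  have hsp2 : KSparse (2*k) (u - w) := ksparse_of_supp hcard' hsupp_sub
  have horth : ∑ i, u i * w i = 0 := by
    apply Finset.sum_eq_zero
    intro i _
    by_cases h : u i = 0
    · rw [h, zero_mul]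
    · have : i ∈ S := hu i h
      have hiT : i ∉ T := Finset.disjoint_left.mp hST this
      have : w i = 0 := by by_contra hc; exact hiT (hw i hc)
      rw [this, mul_zero]
  have r1 := (hRIP (u + w) hsp1).2
  have r2 := (hRIP (u - w) hsp2).1
  rw [Matrix.mulVec_add] at r1
  rw [Matrix.mulVec_sub] at r2
  have e1 := sum_add_sq (A.mulVec u) (A.mulVec w)
  have e2 := sum_sub_sq (A.mulVec u) (A.mulVec w)
  have e3 : ∑ i, ((u + w) i)^2 = ∑ i, (u i)^2 + ∑ i, (w i)^2 := by
    have := sum_add_sq u w; rw [horth] at this; simpa using this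
  have e4 : ∑ i, ((u - w) i)^2 = ∑ i, (u i)^2 + ∑ i, (w i)^2 := by
    have := sum_sub_sq u w; rw [horth] at this; simpa using this
  simp only [Pi.add_apply, Pi.sub_apply] at r1 r2 e1 e2 e3 e4
  rw [e1, e3] at r1
  rw [e2, e4] at r2
  rw [sq_l2norm, sq_l2norm]
  unfold dot
  linarith

lemma cross_bound (A : Matrix (Fin m) (Fin n) ℝ) (δ : ℝ) (hδ0 : 0 ≤ δ)
    (hRIP : RIP A (2*k) δ)
    (u w : Fin n → ℝ) (S T : Finset (Fin n)) (hST : Disjoint S T)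
    (hcard : S.card + T.card ≤ 2*k)
    (hu : ∀ i, u i ≠ 0 → i ∈ S) (hw : ∀ i, w i ≠ 0 → i ∈ T) :
    dot (A.mulVec u) (A.mulVec w) ≤ δ * l2norm u * l2norm w := by
  set a := l2norm u with ha
  set b := l2norm w with hb
  have ha0 : 0 ≤ a := l2norm_nonneg u
  have hb0 : 0 ≤ b := l2norm_nonneg w
  rcases eq_or_lt_of_le ha0 with h | h
  · have : u = 0 := l2norm_eq_zero h.symm
    rw [this, Matrix.mulVec_zero]
    have : dot (0 : Fin m → ℝ) (A.mulVec w) = 0 := by unfold dot; simp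
    rw [this]
    exact mul_nonneg (mul_nonneg hδ0 ha0) hb0
  rcases eq_or_lt_of_le hb0 with h' | h'
  · have : w = 0 := l2norm_eq_zero h'.symm
    rw [this, Matrix.mulVec_zero]
    have : dot (A.mulVec u) (0 : Fin m → ℝ) = 0 := by unfold dot; simp
    rw [this]
    exact mul_nonneg (mul_nonneg hδ0 ha0) hb0
  have key := cross_para A δ hRIP (b • u) (a • w) S T hST hcard
    (fun i hi => hu i (by intro hc; apply hi; simp [Pi.smul_apply, hc]))
    (fun i hi => hw i (by intro hc; apply hi; simp [Pi.smul_apply, hc]))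
  rw [Matrix.mulVec_smul, Matrix.mulVec_smul, dot_smul_smul,
    l2norm_smul_nonneg hb0, l2norm_smul_nonneg ha0, ← ha, ← hb] at key
  have hab : 0 < b * a := mul_pos h' h
  have key3 : (b * a) * dot (A.mulVec u) (A.mulVec w) ≤ (b * a) * (δ * l2norm u * l2norm w) := by
    calc (b * a) * dot (A.mulVec u) (A.mulVec w)
        ≤ δ / 2 * ((b*a)^2 + (a*b)^2) := key
      _ = (b * a) * (δ * a * b) := by ring
  exact (mul_le_mul_iff_right₀ hab).mp key3
end Cross

/-! ### Top-k and sigma -/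

section TopK
variable {n : ℕ}

lemma mulVec_finset_sum {m : ℕ} {ι : Type*} [DecidableEq ι] (A : Matrix (Fin m) (Fin n) ℝ)
    (s : Finset ι) (f : ι → Fin n → ℝ) :
    A.mulVec (∑ j ∈ s, f j) = ∑ j ∈ s, A.mulVec (f j) := by
  induction s using Finset.induction_on with
  | empty => simp [Matrix.mulVec_zero]
  | @insert a s ha ih => rw [Finset.sum_insert ha, Finset.sum_insert ha, Matrix.mulVec_add, ih]

lemma topk_sum_le {k : ℕ} (x : Fin n → ℝ) (T : Finset (Fin n)) (hcard : T.card = k)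
    (hdom : ∀ i ∈ T, ∀ j ∉ T, |x j| ≤ |x i|) :
    ∀ S : Finset (Fin n), S.card ≤ k → ∑ i ∈ S, |x i| ≤ ∑ i ∈ T, |x i| := by
  intro S hS
  have hsplitS : ∑ i ∈ S, |x i| = ∑ i ∈ S ∩ T, |x i| + ∑ i ∈ S \ T, |x i| := by
    rw [Finset.sum_inter_add_sum_sdiff]
  have hsplitT : ∑ i ∈ T, |x i| = ∑ i ∈ T ∩ S, |x i| + ∑ i ∈ T \ S, |x i| := by
    rw [Finset.sum_inter_add_sum_sdiff]
  have hTS : T ∩ S = S ∩ T := Finset.inter_comm T S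
  have hcards : (S \ T).card ≤ (T \ S).card := by
    have h1 : (S ∩ T).card + (S \ T).card = S.card := by
      rw [Finset.card_inter_add_card_sdiff]
    have h2 : (T ∩ S).card + (T \ S).card = T.card := by
      rw [Finset.card_inter_add_card_sdiff]
    rw [hTS] at h2
    omega
  rcases Finset.eq_empty_or_nonempty (T \ S) with hTSe | hTSne
  · have h0 : (T \ S).card = 0 := by rw [hTSe]; rfl
    have hSTe : S \ T = ∅ := Finset.card_eq_zero.mp (by omega)
    rw [hsplitS, hsplitT, hTS, hSTe, hTSe]
  · obtain ⟨i₀, hi₀, hmin⟩ := Finset.exists_min_image (T \ S) (fun i => |x i|) hTSne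
    have hi₀T : i₀ ∈ T := (Finset.mem_sdiff.mp hi₀).1
    have hsum1 : ∑ i ∈ S \ T, |x i| ≤ (S \ T).card • |x i₀| := by
      apply Finset.sum_le_card_nsmul
      intro j hj
      exact hdom i₀ hi₀T j (Finset.mem_sdiff.mp hj).2
    have hsum2 : (T \ S).card • |x i₀| ≤ ∑ i ∈ T \ S, |x i| := by
      apply Finset.card_nsmul_le_sum
      intro j hj
      exact hmin j hj
    have habs : 0 ≤ |x i₀| := abs_nonneg _
    have hns : (S \ T).card • |x i₀| ≤ (T \ S).card • |x i₀| := by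
      rw [nsmul_eq_mul, nsmul_eq_mul]
      exact mul_le_mul_of_nonneg_right (by exact_mod_cast hcards) habs
    rw [hsplitS, hsplitT, hTS]
    linarith
end TopK

lemma l2norm_zero {n : ℕ} : l2norm (0 : Fin n → ℝ) = 0 := by
  unfold l2norm; simp

lemma sigma_ge {n k : ℕ} (x : Fin n → ℝ) (T : Finset (Fin n)) (hcard : T.card = k)
    (hdom : ∀ i ∈ T, ∀ j ∉ T, |x j| ≤ |x i|) :
    ∑ i ∈ Tᶜ, |x i| ≤ sigmaL1 k x := by
  apply le_csInf
  · refine ⟨l1norm (x - 0), 0, ?_, rfl⟩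
    unfold KSparse
    simp
  · rintro r ⟨z, hz, rfl⟩
    classical
    set S : Finset (Fin n) := Finset.univ.filter (fun i => z i ≠ 0) with hSdef
    have hScard : S.card ≤ k := by
      have hset : {i : Fin n | z i ≠ 0} = (S : Set (Fin n)) := by
        ext i; simp [hSdef]
      unfold KSparse at hz
      rw [hset, Set.ncard_coe_finset] at hz
      exact hz
    have h1 : ∑ i ∈ Sᶜ, |x i - z i| ≤ l1norm (x - z) := by
      unfold l1norm
      refine Finset.sum_le_sum_of_subset_of_nonneg (Finset.subset_univ _) ?_
      intro i _ _
      exact abs_nonneg _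
    have h2 : ∑ i ∈ Sᶜ, |x i - z i| = ∑ i ∈ Sᶜ, |x i| := by
      apply Finset.sum_congr rfl
      intro i hi
      rw [Finset.mem_compl, hSdef, Finset.mem_filter] at hi
      push_neg at hi
      rw [hi (Finset.mem_univ i), sub_zero]
    have h3 : ∑ i ∈ S, |x i| ≤ ∑ i ∈ T, |x i| := topk_sum_le x T hcard hdom S hScard
    have h4 : ∑ i ∈ S, |x i| + ∑ i ∈ Sᶜ, |x i| = ∑ i, |x i| := Finset.sum_add_sum_compl S _
    have h5 : ∑ i ∈ T, |x i| + ∑ i ∈ Tᶜ, |x i| = ∑ i, |x i| := Finset.sum_add_sum_compl T _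
    have : ∑ i ∈ Tᶜ, |x i| ≤ ∑ i ∈ Sᶜ, |x i| := by linarith
    linarith

set_option maxHeartbeats 2000000 in
theorem basis_pursuit_error_bound {m n k : ℕ}
    (hk : 1 ≤ k) (hn : 2 * k ≤ n)
    (A : Matrix (Fin m) (Fin n) ℝ) (δ : ℝ) (hδ0 : 0 < δ)
    (hδ : δ < Real.sqrt 2 - 1)
    (hRIP : RIP A (2 * k) δ)
    (x : Fin n → ℝ) (η : Fin m → ℝ) (ε : ℝ) (hη : l2norm η ≤ ε)
    (y : Fin m → ℝ) (hy : y = A.mulVec x + η)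
    (xhat : Fin n → ℝ)
    (hfeas : l2norm (y - A.mulVec xhat) ≤ ε)
    (hopt : ∀ z : Fin n → ℝ, l2norm (y - A.mulVec z) ≤ ε → l1norm xhat ≤ l1norm z) :
    l2norm (xhat - x) ≤
      (2 * (1 + (Real.sqrt 2 - 1) * δ) / (1 - (Real.sqrt 2 + 1) * δ)) *
        (sigmaL1 k x / Real.sqrt k) +
      (4 * Real.sqrt (1 + δ) / (1 - (Real.sqrt 2 + 1) * δ)) * ε := by
  classical
  have hkn : k ≤ n := by omega
  have hk0 : (0:ℝ) < (k:ℝ) := by exact_mod_cast hk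
  have hsqk : (0:ℝ) < Real.sqrt k := Real.sqrt_pos.mpr hk0
  have hε0 : 0 ≤ ε := le_trans (l2norm_nonneg η) hη
  set s2 := Real.sqrt 2 with hs2
  have hs2sq : s2^2 = 2 := Real.sq_sqrt (by norm_num)
  have hs2pos : 0 < s2 := Real.sqrt_pos.mpr (by norm_num)
  have hs2le2 : s2 ≤ 2 := by nlinarith
  have hs2ge1 : 1 ≤ s2 := by nlinarith
  have hδ1 : δ < 1 := by nlinarith
  have hd : 0 < 1 - (s2 + 1) * δ := by nlinarith
  clear_value s2
  set q := Real.sqrt (1 + δ) with hq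
  have hq0 : 0 ≤ q := Real.sqrt_nonneg _
  have hqsq : q^2 = 1 + δ := Real.sq_sqrt (by linarith)
  clear_value q
  set h := xhat - x with hh
  clear_value h
  -- T0 : top-k index set of x
  set σx := dsort (fun i => |x i|) with hσx
  set T0 : Finset (Fin n) := Finset.univ.filter (fun i => ((σx.symm i : Fin n) : ℕ) < k) with hT0
  have hT0card : T0.card = k := by
    rw [hT0, card_rank_filter σx (fun r => r < k)]
    exact range_filter_lt k hkn
  have hT0dom : ∀ i ∈ T0, ∀ j ∉ T0, |x j| ≤ |x i| := by
    intro i hi j hj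
    rw [hT0, Finset.mem_filter] at hi hj
    push_neg at hj
    have hij : ((σx.symm i : Fin n) : ℕ) ≤ ((σx.symm j : Fin n) : ℕ) := by
      have := hj (Finset.mem_univ j); omega
    exact key_le_of_rank_le (fun i => |x i|) hij
  clear_value σx T0
  -- feasibility of x, tube constraint
  have hyAx : y - A.mulVec x = η := by rw [hy]; exact add_sub_cancel_left _ _
  have hAh : l2norm (A.mulVec h) ≤ 2 * ε := by
    have hAhrep : A.mulVec h = (y - A.mulVec x) - (y - A.mulVec xhat) := by
      rw [hh, Matrix.mulVec_sub]; abel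
    rw [hAhrep]
    calc l2norm _ ≤ l2norm (y - A.mulVec x) + l2norm (y - A.mulVec xhat) := l2norm_sub_le _ _
      _ ≤ ε + ε := add_le_add (by rw [hyAx]; exact hη) hfeas
      _ = 2*ε := by ring
  -- sigma bound
  set e0 := ∑ i ∈ T0ᶜ, |x i| with he0
  have he0nn : 0 ≤ e0 := Finset.sum_nonneg fun _ _ => abs_nonneg _
  have he0σ : e0 ≤ sigmaL1 k x := sigma_ge x T0 hT0card hT0dom
  clear_value e0
  -- cone constraint
  have hxhopt : l1norm xhat ≤ l1norm x := hopt x (by rw [hyAx]; exact hη)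
  have hxh : xhat = x + h := by rw [hh]; abel
  have hconeT : ∑ i ∈ T0ᶜ, |h i| ≤ ∑ i ∈ T0, |h i| + 2 * e0 := by
    have ha1 : ∀ i, |x i| - |h i| ≤ |x i + h i| := by
      intro i
      have := abs_add_le (x i + h i) (-(h i))
      rw [abs_neg] at this
      have e : x i + h i + -(h i) = x i := by ring
      rw [e] at this; linarith
    have ha2 : ∀ i, |h i| - |x i| ≤ |x i + h i| := by
      intro i
      have := abs_add_le (x i + h i) (-(x i))
      rw [abs_neg] at this
      have e : x i + h i + -(x i) = h i := by ring
      rw [e] at this; linarith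
    have hs1 : ∑ i ∈ T0, |x i| - ∑ i ∈ T0, |h i| ≤ ∑ i ∈ T0, |x i + h i| := by
      rw [← Finset.sum_sub_distrib]
      exact Finset.sum_le_sum fun i _ => ha1 i
    have hs2' : ∑ i ∈ T0ᶜ, |h i| - ∑ i ∈ T0ᶜ, |x i| ≤ ∑ i ∈ T0ᶜ, |x i + h i| := by
      rw [← Finset.sum_sub_distrib]
      exact Finset.sum_le_sum fun i _ => ha2 i
    have hsplit : l1norm xhat = ∑ i ∈ T0, |x i + h i| + ∑ i ∈ T0ᶜ, |x i + h i| := by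
      rw [hxh]
      unfold l1norm
      simp only [Pi.add_apply]
      rw [← Finset.sum_add_sum_compl T0 (fun i => |x i + h i|)]
    have hsplitx : l1norm x = ∑ i ∈ T0, |x i| + e0 := by
      unfold l1norm
      rw [← Finset.sum_add_sum_compl T0 (fun i => |x i|), he0]
    linarith
  -- blocks for h
  set M := ∑ i, |h i| with hM
  set key : Fin n → ℝ := fun i => if i ∈ T0 then M + 1 else |h i| with hkey
  have hkeyout : ∀ i ∉ T0, key i = |h i| := by
    intro i hi; rw [hkey]; simp [hi]
  have habsM : ∀ i, |h i| ≤ M :=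
    fun i => Finset.single_le_sum (f := fun i => |h i|) (fun j _ => abs_nonneg _) (Finset.mem_univ i)
  have hdomkey : ∀ i ∈ T0, ∀ i' ∉ T0, key i' < key i := by
    intro i hi i' hi'
    rw [hkeyout i' hi', hkey]
    simp only [hi, if_true]
    have := habsM i'
    linarith
  clear_value M key
  set B : ℕ → Finset (Fin n) := blk k key with hB
  have hB0 : B 0 = T0 := blk_zero_eq key T0 hk hkn hT0card hdomkey
  have hBcardle : ∀ j, (B j).card ≤ k := fun j => card_blk_le key j hk
  have hBdisj : ∀ j j' : ℕ, j ≠ j' → Disjoint (B j) (B j') := fun j j' hjj => blk_disjoint key hjj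
  have hT0B1disj : Disjoint T0 (B 1) := by rw [← hB0]; exact hBdisj 0 1 (by omega)
  clear_value B
  set h01 := res (T0 ∪ B 1) h with hh01
  clear_value h01
  -- cover and decomposition
  have hcover : (Finset.range (n+1)).biUnion B = Finset.univ := by
    apply Finset.eq_univ_of_forall
    intro i
    rw [Finset.mem_biUnion]
    refine ⟨(((dsort key).symm i : Fin n) : ℕ) / k, ?_, ?_⟩
    · rw [Finset.mem_range]
      have h1 : (((dsort key).symm i : Fin n) : ℕ) < n := ((dsort key).symm i).isLt
      have h2 := Nat.div_le_self (((dsort key).symm i : Fin n) : ℕ) k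
      omega
    · rw [hB]; exact mem_blk.mpr rfl
  have hdecomp0 : h = ∑ j ∈ Finset.range (n+1), res (B j) h := by
    conv_lhs => rw [← res_univ h, ← hcover]
    exact res_biUnion _ _ (fun a _ b _ hab => hBdisj a b hab) h
  have hrangesplit : ∀ f : ℕ → (Fin n → ℝ), ∑ j ∈ Finset.range (n+1), f j
      = f 0 + f 1 + ∑ j ∈ Finset.Ico 1 n, f (j+1) := by
    intro f
    rw [Finset.sum_range_succ']
    have hr : Finset.range n = insert 0 (Finset.Ico 1 n) := by
      ext r
      simp only [Finset.mem_range, Finset.mem_Ico, Finset.mem_insert]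
      omega
    rw [hr, Finset.sum_insert (by simp)]
    abel
  have hdecomp : h = h01 + ∑ j ∈ Finset.Ico 1 n, res (B (j+1)) h := by
    have e1 := hdecomp0
    rw [hrangesplit (fun j => res (B j) h)] at e1
    rw [hh01, res_union hT0B1disj]
    rw [hB0] at e1
    exact e1
  -- tail partition
  have htailpart : ∑ j ∈ Finset.Ico 1 n, (∑ i ∈ B j, |h i|) = ∑ i ∈ T0ᶜ, |h i| := by
    have hU : (Finset.Ico 1 n).biUnion B = T0ᶜ := by
      ext i
      rw [Finset.mem_biUnion, Finset.mem_compl]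
      constructor
      · rintro ⟨j, hj, hij⟩
        rw [Finset.mem_Ico] at hj
        intro hiT0
        have hib0 : i ∈ B 0 := by rw [hB0]; exact hiT0
        exact Finset.disjoint_left.mp (hBdisj 0 j (by omega)) hib0 hij
      · intro hiT0
        refine ⟨(((dsort key).symm i : Fin n) : ℕ) / k, ?_, by rw [hB]; exact mem_blk.mpr rfl⟩
        rw [Finset.mem_Ico]
        constructor
        · by_contra hc
          push_neg at hc
          have h0 : (((dsort key).symm i : Fin n) : ℕ) / k = 0 := Nat.lt_one_iff.mp hc
          have : i ∈ B 0 := by rw [hB]; exact mem_blk.mpr h0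
          rw [hB0] at this
          exact hiT0 this
        · have h1 : (((dsort key).symm i : Fin n) : ℕ) < n := ((dsort key).symm i).isLt
          have h2 := Nat.div_le_self (((dsort key).symm i : Fin n) : ℕ) k
          omega
    rw [← hU, Finset.sum_biUnion (fun a _ b _ hab => hBdisj a b hab)]
  -- per-block ℓ² bound
  have hNj : ∀ j ∈ Finset.Ico 1 n,
      l2norm (res (B (j+1)) h) ≤ (∑ i ∈ B j, |h i|) / Real.sqrt k := by
    intro j hj
    rw [Finset.mem_Ico] at hj
    have hLnn : 0 ≤ ∑ i ∈ B j, |h i| := Finset.sum_nonneg fun _ _ => abs_nonneg _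
    rcases Finset.eq_empty_or_nonempty (B (j+1)) with hbe | hbne
    · have hz : res (B (j+1)) h = 0 := by
        funext i
        exact res_apply_not_mem (by rw [hbe]; exact Finset.notMem_empty i)
      rw [hz, l2norm_zero]
      exact div_nonneg hLnn (Real.sqrt_nonneg _)
    · obtain ⟨i₀, hi₀⟩ := hbne
      have hrank : (((dsort key).symm i₀ : Fin n) : ℕ) / k = j + 1 := by
        rw [hB] at hi₀; exact mem_blk.mp hi₀
      have hjk1 : (j+1)*k ≤ (((dsort key).symm i₀ : Fin n) : ℕ) := by
        have := Nat.div_mul_le_self (((dsort key).symm i₀ : Fin n) : ℕ) k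
        rw [hrank] at this
        exact this
      have hjkn : (j+1)*k ≤ n :=
        le_trans hjk1 (le_of_lt ((dsort key).symm i₀).isLt)
      have hcardBj : (B j).card = k := by rw [hB]; exact card_blk_eq key j hk hjkn
      have hkeyle : ∀ i' ∈ B (j+1), ∀ i ∈ B j, |h i'| ≤ |h i| := by
        intro i' hi' i hi
        have hkk : key i' ≤ key i := by
          rw [hB] at hi hi'
          exact blk_key_le key (lt_add_one j) hi hi'
        have hiT0 : i ∉ T0 := by
          intro hc
          have hib0 : i ∈ B 0 := by rw [hB0]; exact hc
          exact Finset.disjoint_left.mp (hBdisj 0 j (by omega)) hib0 hi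
        have hi'T0 : i' ∉ T0 := by
          intro hc
          have hib0 : i' ∈ B 0 := by rw [hB0]; exact hc
          exact Finset.disjoint_left.mp (hBdisj 0 (j+1) (by omega)) hib0 hi'
        rw [hkeyout i hiT0, hkeyout i' hi'T0] at hkk
        exact hkk
      have hbound : ∀ i' ∈ B (j+1), |h i'| ≤ (∑ i ∈ B j, |h i|) / (k:ℝ) := by
        intro i' hi'
        have hc := Finset.card_nsmul_le_sum (B j) (fun i => |h i|) (|h i'|)
          (fun i hi => hkeyle i' hi' i hi)
        rw [hcardBj, nsmul_eq_mul] at hc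
        rw [le_div_iff₀ hk0]
        linarith [hc]
      have hsq : l2norm (res (B (j+1)) h)^2 ≤ (∑ i ∈ B j, |h i|)^2 / (k:ℝ) := by
        rw [sq_l2norm, sq_sum_res]
        calc ∑ i ∈ B (j+1), (h i)^2
            ≤ ∑ _i ∈ B (j+1), ((∑ i ∈ B j, |h i|) / (k:ℝ))^2 := by
              apply Finset.sum_le_sum
              intro i hi
              rw [← sq_abs (h i)]
              exact pow_le_pow_left₀ (abs_nonneg _) (hbound i hi) 2
          _ = ((B (j+1)).card : ℝ) * ((∑ i ∈ B j, |h i|) / (k:ℝ))^2 := by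
              rw [Finset.sum_const, nsmul_eq_mul]
          _ ≤ (k:ℝ) * ((∑ i ∈ B j, |h i|) / (k:ℝ))^2 := by
              apply mul_le_mul_of_nonneg_right _ (sq_nonneg _)
              exact_mod_cast hBcardle (j+1)
          _ = (∑ i ∈ B j, |h i|)^2 / (k:ℝ) := by
              field_simp
      apply le_of_sq_le_sq2 (l2norm_nonneg _) (div_nonneg hLnn (Real.sqrt_nonneg _))
      rw [div_pow, Real.sq_sqrt (le_of_lt hk0)]
      exact hsq
  -- sum of tail block norms
  have hSle : ∑ j ∈ Finset.Ico 1 n, l2norm (res (B (j+1)) h)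
      ≤ (∑ i ∈ T0ᶜ, |h i|) / Real.sqrt k := by
    calc ∑ j ∈ Finset.Ico 1 n, l2norm (res (B (j+1)) h)
        ≤ ∑ j ∈ Finset.Ico 1 n, (∑ i ∈ B j, |h i|) / Real.sqrt k := Finset.sum_le_sum hNj
      _ = (∑ j ∈ Finset.Ico 1 n, (∑ i ∈ B j, |h i|)) / Real.sqrt k := by rw [Finset.sum_div]
      _ = (∑ i ∈ T0ᶜ, |h i|) / Real.sqrt k := by rw [htailpart]
  -- Cauchy–Schwarz on T0 and Pythagoras
  have hl1T0 : ∑ i ∈ T0, |h i| ≤ Real.sqrt k * l2norm (res T0 h) := by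
    have cs := Finset.sum_mul_sq_le_sq_mul_sq T0 (fun _ => (1:ℝ)) (fun i => |h i|)
    simp only [one_mul, one_pow] at cs
    have e1 : ∑ _i ∈ T0, (1:ℝ) = (k:ℝ) := by
      rw [Finset.sum_const, hT0card, nsmul_eq_mul, mul_one]
    have e2 : ∑ i ∈ T0, |h i|^2 = l2norm (res T0 h)^2 := by
      rw [sq_l2norm, sq_sum_res]
      exact Finset.sum_congr rfl fun i _ => sq_abs _
    apply le_of_sq_le_sq2 (Finset.sum_nonneg fun _ _ => abs_nonneg _)
      (mul_nonneg (Real.sqrt_nonneg _) (l2norm_nonneg _))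
    rw [mul_pow, Real.sq_sqrt (le_of_lt hk0)]
    rw [e1, e2] at cs
    exact cs
  have hpyth : l2norm h01 ^2 = l2norm (res T0 h)^2 + l2norm (res (B 1) h)^2 := by
    rw [hh01, sq_l2norm, sq_l2norm, sq_l2norm, sq_sum_res, sq_sum_res, sq_sum_res,
      Finset.sum_union hT0B1disj]
  have hN0le : l2norm (res T0 h) ≤ l2norm h01 := by
    apply le_of_sq_le_sq2 (l2norm_nonneg _) (l2norm_nonneg _)
    nlinarith [sq_nonneg (l2norm (res (B 1) h)), hpyth]
  have hN01 : l2norm (res T0 h) + l2norm (res (B 1) h) ≤ s2 * l2norm h01 := by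
    apply le_of_sq_le_sq2 (add_nonneg (l2norm_nonneg _) (l2norm_nonneg _))
      (mul_nonneg hs2pos.le (l2norm_nonneg _))
    rw [mul_pow, hs2sq]
    nlinarith [sq_nonneg (l2norm (res T0 h) - l2norm (res (B 1) h)), hpyth]
  -- sparsity of h01
  have hcard01 : (T0 ∪ B 1).card ≤ 2*k := by
    have h1 := Finset.card_union_le T0 (B 1)
    have h2 := hBcardle 1
    omega
  have hsp01 : KSparse (2*k) h01 := ksparse_of_supp hcard01 (fun i hi => res_supp (by rw [hh01] at hi; exact hi))
  have hAh01 : l2norm (A.mulVec h01) ≤ q * l2norm h01 := by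
    apply le_of_sq_le_sq2 (l2norm_nonneg _) (mul_nonneg hq0 (l2norm_nonneg _))
    rw [mul_pow, hqsq, sq_l2norm, sq_l2norm]
    exact (hRIP h01 hsp01).2
  -- main RIP chain
  have hAdecomp : A.mulVec h = A.mulVec h01 + ∑ j ∈ Finset.Ico 1 n, A.mulVec (res (B (j+1)) h) := by
    conv_lhs => rw [hdecomp]
    rw [Matrix.mulVec_add, mulVec_finset_sum]
  have hdotid : dot (A.mulVec h01) (A.mulVec h01)
      = dot (A.mulVec h01) (A.mulVec h)
        - ∑ j ∈ Finset.Ico 1 n, dot (A.mulVec h01) (A.mulVec (res (B (j+1)) h)) := by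
    rw [hAdecomp, dot_add_right, dot_sum_right]
    ring
  have hcross : ∀ j ∈ Finset.Ico 1 n,
      - dot (A.mulVec h01) (A.mulVec (res (B (j+1)) h))
        ≤ δ * (l2norm (res T0 h) + l2norm (res (B 1) h)) * l2norm (res (B (j+1)) h) := by
    intro j hj
    rw [Finset.mem_Ico] at hj
    have hsplit : A.mulVec h01 = A.mulVec (res T0 h) + A.mulVec (res (B 1) h) := by
      rw [hh01, res_union hT0B1disj, Matrix.mulVec_add]
    have hneg : -dot (A.mulVec h01) (A.mulVec (res (B (j+1)) h))
        = dot (A.mulVec (res T0 h)) (A.mulVec (- res (B (j+1)) h))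
          + dot (A.mulVec (res (B 1) h)) (A.mulVec (- res (B (j+1)) h)) := by
      rw [Matrix.mulVec_neg, dot_neg_right, dot_neg_right, hsplit, dot_add_left]
      ring
    have hdisj0 : Disjoint T0 (B (j+1)) := by
      rw [← hB0]; exact hBdisj 0 (j+1) (by omega)
    have hdisj1 : Disjoint (B 1) (B (j+1)) := hBdisj 1 (j+1) (by omega)
    have hcc0 : T0.card + (B (j+1)).card ≤ 2*k := by
      have := hBcardle (j+1); omega
    have hcc1 : (B 1).card + (B (j+1)).card ≤ 2*k := by
      have := hBcardle (j+1); have := hBcardle 1; omega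
    have hsuppneg : ∀ i, (- res (B (j+1)) h) i ≠ 0 → i ∈ B (j+1) := by
      intro i hi
      apply res_supp (v := h)
      intro hc
      exact hi (by simp [Pi.neg_apply, hc])
    have hc1 := cross_bound A δ hδ0.le hRIP (res T0 h) (- res (B (j+1)) h) T0 (B (j+1))
      hdisj0 hcc0 (fun i hi => res_supp hi) hsuppneg
    have hc2 := cross_bound A δ hδ0.le hRIP (res (B 1) h) (- res (B (j+1)) h) (B 1) (B (j+1))
      hdisj1 hcc1 (fun i hi => res_supp hi) hsuppneg
    rw [l2norm_neg] at hc1 hc2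
    rw [hneg]
    calc dot (A.mulVec (res T0 h)) (A.mulVec (- res (B (j+1)) h))
          + dot (A.mulVec (res (B 1) h)) (A.mulVec (- res (B (j+1)) h))
        ≤ δ * l2norm (res T0 h) * l2norm (res (B (j+1)) h)
          + δ * l2norm (res (B 1) h) * l2norm (res (B (j+1)) h) := add_le_add hc1 hc2
      _ = δ * (l2norm (res T0 h) + l2norm (res (B 1) h)) * l2norm (res (B (j+1)) h) := by ring
  have hdotAh : dot (A.mulVec h01) (A.mulVec h) ≤ q * l2norm h01 * (2*ε) := by
    calc dot (A.mulVec h01) (A.mulVec h)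
        ≤ l2norm (A.mulVec h01) * l2norm (A.mulVec h) := dot_le _ _
      _ ≤ (q * l2norm h01) * (2*ε) :=
          mul_le_mul hAh01 hAh (l2norm_nonneg _) (mul_nonneg hq0 (l2norm_nonneg _))
  have hsum_cross : - ∑ j ∈ Finset.Ico 1 n, dot (A.mulVec h01) (A.mulVec (res (B (j+1)) h))
      ≤ δ * (l2norm (res T0 h) + l2norm (res (B 1) h))
          * (∑ j ∈ Finset.Ico 1 n, l2norm (res (B (j+1)) h)) := by
    rw [← Finset.sum_neg_distrib, Finset.mul_sum]
    exact Finset.sum_le_sum hcross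
  have hSnn : 0 ≤ ∑ j ∈ Finset.Ico 1 n, l2norm (res (B (j+1)) h) :=
    Finset.sum_nonneg fun _ _ => l2norm_nonneg _
  have hmain1 : (1-δ) * l2norm h01^2 ≤ q * l2norm h01 * (2*ε)
      + δ * (l2norm (res T0 h) + l2norm (res (B 1) h))
          * (∑ j ∈ Finset.Ico 1 n, l2norm (res (B (j+1)) h)) := by
    have h1 : (1-δ) * l2norm h01^2 ≤ dot (A.mulVec h01) (A.mulVec h01) := by
      rw [dot_self_eq, sq_l2norm, sq_l2norm]
      exact (hRIP h01 hsp01).1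
    rw [hdotid] at h1
    linarith
  have hmain2 : (1-δ) * l2norm h01 ≤ 2*q*ε
      + s2 * δ * (∑ j ∈ Finset.Ico 1 n, l2norm (res (B (j+1)) h)) := by
    rcases eq_or_lt_of_le (l2norm_nonneg h01) with h0 | h0
    · rw [← h0, mul_zero]
      have : 0 ≤ s2 * δ * (∑ j ∈ Finset.Ico 1 n, l2norm (res (B (j+1)) h)) :=
        mul_nonneg (mul_nonneg hs2pos.le hδ0.le) hSnn
      nlinarith
    · have hstep : δ * (l2norm (res T0 h) + l2norm (res (B 1) h))
          * (∑ j ∈ Finset.Ico 1 n, l2norm (res (B (j+1)) h))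
          ≤ δ * (s2 * l2norm h01) * (∑ j ∈ Finset.Ico 1 n, l2norm (res (B (j+1)) h)) := by
        apply mul_le_mul_of_nonneg_right _ hSnn
        exact mul_le_mul_of_nonneg_left hN01 hδ0.le
      have hb : ((1-δ) * l2norm h01) * l2norm h01
          ≤ (2*q*ε + s2 * δ * (∑ j ∈ Finset.Ico 1 n, l2norm (res (B (j+1)) h))) * l2norm h01 := by
        nlinarith [hmain1, hstep]
      exact le_of_mul_le_mul_right hb h0
  -- tail sum vs h01 and e0
  have hSle2 : (∑ j ∈ Finset.Ico 1 n, l2norm (res (B (j+1)) h))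
      ≤ l2norm h01 + 2 * (e0 / Real.sqrt k) := by
    have h1 : (∑ i ∈ T0ᶜ, |h i|) ≤ Real.sqrt k * l2norm h01 + 2*e0 := by
      have h2 : Real.sqrt k * l2norm (res T0 h) ≤ Real.sqrt k * l2norm h01 :=
        mul_le_mul_of_nonneg_left hN0le hsqk.le
      linarith
    calc (∑ j ∈ Finset.Ico 1 n, l2norm (res (B (j+1)) h))
        ≤ (∑ i ∈ T0ᶜ, |h i|) / Real.sqrt k := hSle
      _ ≤ (Real.sqrt k * l2norm h01 + 2*e0) / Real.sqrt k := by
          exact div_le_div_of_nonneg_right h1 hsqk.le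
      _ = l2norm h01 + 2 * (e0 / Real.sqrt k) := by
          field_simp
  have hmain3 : (1 - (s2+1)*δ) * l2norm h01 ≤ 2*q*ε + 2*s2*δ*(e0 / Real.sqrt k) := by
    have hst : s2 * δ * (∑ j ∈ Finset.Ico 1 n, l2norm (res (B (j+1)) h))
        ≤ s2 * δ * (l2norm h01 + 2 * (e0 / Real.sqrt k)) :=
      mul_le_mul_of_nonneg_left hSle2 (mul_nonneg hs2pos.le hδ0.le)
    nlinarith [hmain2]
  have hhb : l2norm h ≤ 2 * l2norm h01 + 2 * (e0 / Real.sqrt k) := by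
    have h1 : l2norm h ≤ l2norm h01 + (∑ j ∈ Finset.Ico 1 n, l2norm (res (B (j+1)) h)) := by
      conv_lhs => rw [hdecomp]
      calc l2norm (h01 + ∑ j ∈ Finset.Ico 1 n, res (B (j+1)) h)
          ≤ l2norm h01 + l2norm (∑ j ∈ Finset.Ico 1 n, res (B (j+1)) h) := l2norm_add_le _ _
        _ ≤ l2norm h01 + (∑ j ∈ Finset.Ico 1 n, l2norm (res (B (j+1)) h)) := by
            have := l2norm_sum_le (Finset.Ico 1 n) (fun j => res (B (j+1)) h)
            linarith
    linarith [hSle2]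
  -- final algebra
  have hE : e0 / Real.sqrt k ≤ sigmaL1 k x / Real.sqrt k :=
    div_le_div_of_nonneg_right he0σ hsqk.le
  have hEnn : 0 ≤ e0 / Real.sqrt k := div_nonneg he0nn (Real.sqrt_nonneg _)
  have hcoef : 0 ≤ 2*(1+(s2-1)*δ) := by nlinarith
  have hgoal' : l2norm h * (1 - (s2+1)*δ)
      ≤ 2*(1+(s2-1)*δ) * (sigmaL1 k x / Real.sqrt k) + 4*q*ε := by
    have hA1 : (1 - (s2+1)*δ) * l2norm h ≤ (1 - (s2+1)*δ) * (2 * l2norm h01 + 2 * (e0 / Real.sqrt k)) :=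
      mul_le_mul_of_nonneg_left hhb hd.le
    have hA2 : 2*(1+(s2-1)*δ) * (e0 / Real.sqrt k) ≤ 2*(1+(s2-1)*δ) * (sigmaL1 k x / Real.sqrt k) :=
      mul_le_mul_of_nonneg_left hE hcoef
    nlinarith [hmain3, hA1, hA2]
  rw [div_mul_eq_mul_div, div_mul_eq_mul_div, ← add_div, le_div_iff₀ hd]
  exact hgoal'
end

section
/- Suppose n ≥ 2k ≥ 2, A ∈ ℝ^{m×n} satisfies the restricted isometry property of order 2k with constant δ_{2k} < √2 − 1, and y = Ax + η for some k-sparse vector x ∈ Σ_k and η ∈ ℝ^m with ‖η‖₂ ≤ ε. Let x̂ be any minimizer of ‖z‖₁ over the set B_ε(y) = {z ∈ ℝⁿ : ‖y − Az‖₂ ≤ ε}. Then ‖x̂ − x‖₂ ≤ C₂·ε, where C₂ = 4√(1+δ_{2k}) / (1 − (√2+1)δ_{2k}). -/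
open Finset

namespace BP
variable {n : ℕ}

lemma nsq_nonneg (u : Fin n → ℝ) : 0 ≤ ∑ i, (u i)^2 := by positivity
lemma l2_nonneg (u : Fin n → ℝ) : 0 ≤ l2norm u := Real.sqrt_nonneg _
lemma sq_l2 (u : Fin n → ℝ) : (l2norm u)^2 = ∑ i, (u i)^2 := Real.sq_sqrt (nsq_nonneg u)

lemma ip_le_l2 (u v : Fin n → ℝ) : ∑ i, u i * v i ≤ l2norm u * l2norm v := by
  have hcs := Finset.sum_mul_sq_le_sq_mul_sq Finset.univ u v
  calc ∑ i, u i * v i ≤ |∑ i, u i * v i| := le_abs_self _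
    _ = Real.sqrt ((∑ i, u i * v i)^2) := (Real.sqrt_sq_eq_abs _).symm
    _ ≤ Real.sqrt ((∑ i, (u i)^2) * (∑ i, (v i)^2)) := Real.sqrt_le_sqrt hcs
    _ = l2norm u * l2norm v := Real.sqrt_mul (nsq_nonneg u) _

lemma l2_add_le (u v : Fin n → ℝ) : l2norm (u + v) ≤ l2norm u + l2norm v := by
  have key : ∑ i, ((u + v) i)^2 ≤ (l2norm u + l2norm v)^2 := by
    have h1 : ∑ i, ((u + v) i)^2 = (∑ i, (u i)^2) + 2 * (∑ i, u i * v i) + ∑ i, (v i)^2 := by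
      rw [Finset.mul_sum, ← Finset.sum_add_distrib, ← Finset.sum_add_distrib]
      refine Finset.sum_congr rfl (fun i _ => ?_)
      simp only [Pi.add_apply]; ring
    have h2 := ip_le_l2 u v
    rw [h1]
    have := sq_l2 u; have := sq_l2 v
    nlinarith [l2_nonneg u, l2_nonneg v]
  calc l2norm (u + v) = Real.sqrt (∑ i, ((u + v) i)^2) := rfl
    _ ≤ Real.sqrt ((l2norm u + l2norm v)^2) := Real.sqrt_le_sqrt key
    _ = |l2norm u + l2norm v| := Real.sqrt_sq_eq_abs _
    _ = l2norm u + l2norm v := abs_of_nonneg (add_nonneg (l2_nonneg u) (l2_nonneg v))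

lemma l2_neg (u : Fin n → ℝ) : l2norm (-u) = l2norm u := by
  unfold l2norm; congr 1; exact Finset.sum_congr rfl (fun i _ => by rw [Pi.neg_apply]; ring)

lemma l2_sub_le (u v : Fin n → ℝ) : l2norm (u - v) ≤ l2norm u + l2norm v := by
  have := l2_add_le u (-v)
  rw [l2_neg] at this
  simpa [sub_eq_add_neg] using this

lemma l2_zero : l2norm (0 : Fin n → ℝ) = 0 := by simp [l2norm]

lemma l2_sum_le {ι : Type*} (s : Finset ι) (f : ι → Fin n → ℝ) :
    l2norm (∑ j ∈ s, f j) ≤ ∑ j ∈ s, l2norm (f j) := by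
  induction s using Finset.cons_induction with
  | empty => simp [l2_zero]
  | cons j s hj ih =>
    rw [Finset.sum_cons, Finset.sum_cons]
    exact le_trans (l2_add_le _ _) (by linarith)

def res {n : ℕ} (S : Finset (Fin n)) (h : Fin n → ℝ) : Fin n → ℝ :=
  fun i => if i ∈ S then h i else 0

lemma res_support {S : Finset (Fin n)} {h : Fin n → ℝ} {i : Fin n} (hi : res S h i ≠ 0) :
    i ∈ S := by
  by_contra hc; exact hi (by simp [res, hc])

lemma ksparse_of_subset {k : ℕ} {S : Finset (Fin n)} (u : Fin n → ℝ)
    (hsupp : ∀ i, u i ≠ 0 → i ∈ S) (hcard : S.card ≤ k) : KSparse k u := by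
  unfold KSparse
  have h1 : {i : Fin n | u i ≠ 0} ⊆ (S : Set (Fin n)) := fun i hi => hsupp i hi
  calc Set.ncard {i : Fin n | u i ≠ 0} ≤ Set.ncard (S : Set (Fin n)) :=
        Set.ncard_le_ncard h1 (Set.toFinite _)
    _ = S.card := Set.ncard_coe_finset S
    _ ≤ k := hcard

lemma nsq_res (S : Finset (Fin n)) (h : Fin n → ℝ) :
    ∑ i, (res S h i)^2 = ∑ i ∈ S, (h i)^2 := by
  simp only [res, apply_ite (fun t : ℝ => t^2), zero_pow (two_ne_zero),
    Finset.sum_ite_mem, Finset.univ_inter]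

lemma l1_res (S : Finset (Fin n)) (h : Fin n → ℝ) :
    ∑ i, |res S h i| = ∑ i ∈ S, |h i| := by
  simp only [res, apply_ite (fun t : ℝ => |t|), abs_zero,
    Finset.sum_ite_mem, Finset.univ_inter]

/-- Key RIP inner-product bound for disjointly supported vectors. -/
lemma rip_ip {m k : ℕ} {A : Matrix (Fin m) (Fin n) ℝ} {δ : ℝ}
    (hRIP : RIP A (2*k) δ)
    (u v : Fin n → ℝ) (Su Sv : Finset (Fin n))
    (hu : ∀ i, u i ≠ 0 → i ∈ Su) (hv : ∀ i, v i ≠ 0 → i ∈ Sv)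
    (hdisj : Disjoint Su Sv) (hcard : Su.card + Sv.card ≤ 2*k) :
    |∑ i, A.mulVec u i * A.mulVec v i| ≤ δ * l2norm u * l2norm v := by
  have step1 : ∀ (u v : Fin n → ℝ), (∀ i, u i ≠ 0 → i ∈ Su) → (∀ i, v i ≠ 0 → i ∈ Sv) →
      |∑ i, A.mulVec u i * A.mulVec v i| ≤ δ * ((∑ i, (u i)^2) + (∑ i, (v i)^2)) / 2 := by
    intro u v hu hv
    have hdisj' : ∀ i, u i = 0 ∨ v i = 0 := by
      intro i
      by_contra hc
      push_neg at hc
      exact (Finset.disjoint_left.1 hdisj (hu i hc.1)) (hv i hc.2)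
    have hsparse : ∀ (w : Fin n → ℝ), (∀ i, w i ≠ 0 → i ∈ Su ∪ Sv) → KSparse (2*k) w := by
      intro w hw
      exact ksparse_of_subset w hw (le_trans (Finset.card_union_le _ _) hcard)
    have hsp1 : KSparse (2*k) (u + v) := hsparse _ (fun i hi => by
      rcases hdisj' i with h0 | h0
      · exact Finset.mem_union_right _ (hv i (by simpa [Pi.add_apply, h0] using hi))
      · exact Finset.mem_union_left _ (hu i (by simpa [Pi.add_apply, h0] using hi)))
    have hsp2 : KSparse (2*k) (u - v) := hsparse _ (fun i hi => by
      rcases hdisj' i with h0 | h0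
      · exact Finset.mem_union_right _ (hv i (by
          intro hvz; exact hi (by simp [Pi.sub_apply, h0, hvz])))
      · exact Finset.mem_union_left _ (hu i (by
          intro huz; exact hi (by simp [Pi.sub_apply, h0, huz]))))
    have hadd : ∑ i, ((u + v) i)^2 = (∑ i, (u i)^2) + (∑ i, (v i)^2) := by
      rw [← Finset.sum_add_distrib]
      refine Finset.sum_congr rfl (fun i _ => ?_)
      rcases hdisj' i with h0 | h0 <;> simp [Pi.add_apply, h0]
    have hsub : ∑ i, ((u - v) i)^2 = (∑ i, (u i)^2) + (∑ i, (v i)^2) := by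
      rw [← Finset.sum_add_distrib]
      refine Finset.sum_congr rfl (fun i _ => ?_)
      rcases hdisj' i with h0 | h0 <;> simp [Pi.sub_apply, h0]
    have hpol : 4 * ∑ i, A.mulVec u i * A.mulVec v i =
        (∑ i, (A.mulVec (u + v) i)^2) - ∑ i, (A.mulVec (u - v) i)^2 := by
      rw [Matrix.mulVec_add, Matrix.mulVec_sub, ← Finset.sum_sub_distrib, Finset.mul_sum]
      refine Finset.sum_congr rfl (fun i _ => ?_)
      simp only [Pi.add_apply, Pi.sub_apply]; ring
    have hb1 := hRIP (u + v) hsp1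
    have hb2 := hRIP (u - v) hsp2
    rw [hadd] at hb1
    rw [hsub] at hb2
    rw [abs_le]
    constructor <;> nlinarith [hb1.1, hb1.2, hb2.1, hb2.2]
  by_cases hu0 : l2norm u = 0
  · have hz : u = 0 := by
      funext i
      have := Real.sqrt_eq_zero (nsq_nonneg u) |>.1 hu0
      have h2 := (Finset.sum_eq_zero_iff_of_nonneg (fun i _ => sq_nonneg (u i))).1 this i
        (mem_univ i)
      exact pow_eq_zero_iff (n := 2) (by norm_num) |>.1 h2
    rw [hu0, hz]
    simp [Matrix.mulVec_zero]
  by_cases hv0 : l2norm v = 0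
  · have hz : v = 0 := by
      funext i
      have := Real.sqrt_eq_zero (nsq_nonneg v) |>.1 hv0
      have h2 := (Finset.sum_eq_zero_iff_of_nonneg (fun i _ => sq_nonneg (v i))).1 this i
        (mem_univ i)
      exact pow_eq_zero_iff (n := 2) (by norm_num) |>.1 h2
    rw [hv0, hz]
    simp [Matrix.mulVec_zero]
  · set cu := l2norm u with hcu
    set cv := l2norm v with hcv
    have hcup : 0 < cu := lt_of_le_of_ne (l2_nonneg u) (Ne.symm hu0)
    have hcvp : 0 < cv := lt_of_le_of_ne (l2_nonneg v) (Ne.symm hv0)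
    have key := step1 (cv • u) (cu • v)
      (fun i hi => hu i (by
        intro h0; exact hi (by simp [Pi.smul_apply, h0])))
      (fun i hi => hv i (by
        intro h0; exact hi (by simp [Pi.smul_apply, h0])))
    rw [Matrix.mulVec_smul, Matrix.mulVec_smul] at key
    have hlhs : |∑ i, (cv • A.mulVec u) i * (cu • A.mulVec v) i| =
        cv * cu * |∑ i, A.mulVec u i * A.mulVec v i| := by
      rw [← abs_of_pos (mul_pos hcvp hcup), ← abs_mul, Finset.mul_sum]
      congr 1
      refine Finset.sum_congr rfl (fun i _ => ?_)
      simp only [Pi.smul_apply, smul_eq_mul]; ring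
    have hru : ∑ i, ((cv • u) i)^2 = cv^2 * ∑ i, (u i)^2 := by
      rw [Finset.mul_sum]; exact Finset.sum_congr rfl (fun i _ => by
        simp only [Pi.smul_apply, smul_eq_mul]; ring)
    have hrv : ∑ i, ((cu • v) i)^2 = cu^2 * ∑ i, (v i)^2 := by
      rw [Finset.mul_sum]; exact Finset.sum_congr rfl (fun i _ => by
        simp only [Pi.smul_apply, smul_eq_mul]; ring)
    rw [hlhs, hru, hrv] at key
    have hnu : (∑ i, (u i)^2) = cu^2 := (sq_l2 u).symm
    have hnv : (∑ i, (v i)^2) = cv^2 := (sq_l2 v).symm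
    rw [hnu, hnv] at key
    have key2 : cv * cu * |∑ i, A.mulVec u i * A.mulVec v i| ≤ cv * cu * (δ * cu * cv) := by
      calc cv * cu * |∑ i, A.mulVec u i * A.mulVec v i|
          ≤ δ * (cv^2 * cu^2 + cu^2 * cv^2) / 2 := key
        _ = cv * cu * (δ * cu * cv) := by ring
    exact le_of_mul_le_mul_left key2 (mul_pos hcvp hcup)

lemma exists_partition {n k : ℕ} (hk : 1 ≤ k) (T0 : Finset (Fin n)) (hT0 : T0.card = k)
    (h : Fin n → ℝ) :
    ∃ T : ℕ → Finset (Fin n),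
      T 0 = T0 ∧
      (∀ j, (T j).card ≤ k) ∧
      (∀ j j', j ≠ j' → Disjoint (T j) (T j')) ∧
      (∀ i : Fin n, ∃! j, j ∈ Finset.range n ∧ i ∈ T j) ∧
      (∀ j, 1 ≤ j → ∀ i ∈ T (j+1), ∀ i' ∈ T j, |h i| ≤ |h i'|) ∧
      (∀ j, (T (j+1)).Nonempty → (T j).card = k) := by
  classical
  have hk0 : 0 < k := hk
  have hkn : k ≤ n := by
    have := Finset.card_le_card (Finset.subset_univ T0)
    simpa [hT0] using this
  set M : ℝ := (∑ i, |h i|) + 1 with hM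
  have hMlt : ∀ i : Fin n, |h i| < M := by
    intro i
    have h1 : |h i| ≤ ∑ i, |h i| :=
      Finset.single_le_sum (f := fun i => |h i|) (fun _ _ => abs_nonneg _) (mem_univ i)
    simp only [hM]; linarith
  set g : Fin n → ℝ := fun i => |h i| + (if i ∈ T0 then M else 0) with hg
  set σ : Equiv.Perm (Fin n) := Tuple.sort (fun p => -(g p)) with hσ
  have hanti : ∀ p q : Fin n, p ≤ q → g (σ q) ≤ g (σ p) := by
    intro p q hpq
    have := Tuple.monotone_sort (fun p => -(g p)) hpq
    simpa using this
  have hgt : ∀ i ∈ T0, ∀ j, j ∉ T0 → g j < g i := by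
    intro i hi j hj
    simp only [hg, if_pos hi, if_neg hj]
    have := hMlt j
    have := abs_nonneg (h i)
    linarith
  have hmem : ∀ p : Fin n, σ p ∈ T0 ↔ (p : ℕ) < k := by
    set P : Finset (Fin n) := Finset.univ.filter (fun p => σ p ∈ T0) with hP
    set Q : Finset (Fin n) := Finset.univ.filter (fun p : Fin n => (p : ℕ) < k) with hQ
    have hPcard : P.card = k := by
      have hPeq : P = T0.image σ.symm := by
        ext p
        simp only [hP, Finset.mem_filter, Finset.mem_univ, true_and, Finset.mem_image]
        constructor
        · intro hp; exact ⟨σ p, hp, by simp⟩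
        · rintro ⟨a, ha, rfl⟩; simpa using ha
      rw [hPeq, Finset.card_image_of_injective _ σ.symm.injective, hT0]
    have hQcard : Q.card = k := by
      have hQeq : Q =
          (Finset.range k).attachFin (fun a ha => lt_of_lt_of_le (Finset.mem_range.1 ha) hkn) := by
        ext p
        simp [hQ, Finset.mem_attachFin]
      rw [hQeq, Finset.card_attachFin, Finset.card_range]
    have hcard_eq : P.card = Q.card := hPcard.trans hQcard.symm
    have hQP : Q ⊆ P := by
      by_contra hc
      have h1 : (Q \ P).Nonempty := by
        rw [Finset.sdiff_nonempty]; exact hc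
      have h2 : (P \ Q).Nonempty := by
        rw [← Finset.card_pos, Finset.card_sdiff_comm hcard_eq, Finset.card_pos,
          Finset.sdiff_nonempty]
        intro hQsubP
        exact hc (by rw [Finset.eq_of_subset_of_card_le hQsubP (le_of_eq hcard_eq)])
      obtain ⟨q, hq⟩ := h1
      obtain ⟨p, hp⟩ := h2
      simp only [Finset.mem_sdiff, hP, hQ, Finset.mem_filter, Finset.mem_univ, true_and]
        at hq hp
      have hqp : q ≤ p := by
        have h3 : (q : ℕ) < k := hq.1
        have h4 : ¬ (p : ℕ) < k := hp.2
        exact Fin.le_def.2 (by omega)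
      have h5 := hanti q p hqp
      have h6 := hgt (σ p) hp.1 (σ q) hq.2
      linarith
    have hQPeq : Q = P := Finset.eq_of_subset_of_card_le hQP (le_of_eq hcard_eq)
    intro p
    have hiff : p ∈ P ↔ p ∈ Q := by rw [hQPeq]
    simpa [hP, hQ] using hiff
  set B : ℕ → Finset (Fin n) := fun j =>
    Finset.univ.filter (fun p : Fin n => k*j ≤ (p : ℕ) ∧ (p : ℕ) < k*(j+1)) with hB
  set T : ℕ → Finset (Fin n) := fun j => (B j).image σ with hT
  have hmemT : ∀ (j : ℕ) (i : Fin n),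
      i ∈ T j ↔ (k*j ≤ ((σ.symm i : Fin n) : ℕ) ∧ ((σ.symm i : Fin n) : ℕ) < k*(j+1)) := by
    intro j i
    simp only [hT, Finset.mem_image, hB, Finset.mem_filter, Finset.mem_univ, true_and]
    constructor
    · rintro ⟨p, hp, rfl⟩; simpa using hp
    · intro hp; exact ⟨σ.symm i, hp, by simp⟩
  have hdiv : ∀ (v j : ℕ), k*j ≤ v → v < k*(j+1) → v / k = j := by
    intro v j h1 h2
    exact Nat.div_eq_of_lt_le (by rw [Nat.mul_comm]; exact h1) (by rw [Nat.mul_comm]; exact h2)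
  refine ⟨T, ?_, ?_, ?_, ?_, ?_, ?_⟩
  · ext i
    rw [hmemT 0 i]
    have h1 := hmem (σ.symm i)
    rw [Equiv.apply_symm_apply] at h1
    simpa using h1.symm
  · intro j
    show ((B j).image σ).card ≤ k
    rw [Finset.card_image_of_injective _ σ.injective]
    have hle : (B j).card ≤ (Finset.Ico (k*j) (k*(j+1))).card := by
      apply Finset.card_le_card_of_injOn Fin.val
      · intro p hp
        simp only [hB, Finset.mem_coe, Finset.mem_filter, Finset.mem_univ, true_and] at hp
        simp [Finset.mem_Ico, hp.1, hp.2]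
      · intro p _ q _ hpq
        exact Fin.val_injective hpq
    rw [Nat.card_Ico, Nat.mul_succ] at hle
    omega
  · intro j j' hne
    rw [Finset.disjoint_left]
    intro i hij hij'
    rw [hmemT] at hij hij'
    exact hne ((hdiv _ _ hij.1 hij.2).symm.trans (hdiv _ _ hij'.1 hij'.2))
  · intro i
    have hvn : ((σ.symm i : Fin n) : ℕ) < n := (σ.symm i).isLt
    set v : ℕ := ((σ.symm i : Fin n) : ℕ) with hv
    refine ⟨v / k, ⟨Finset.mem_range.2 (lt_of_le_of_lt (Nat.div_le_self v k) hvn), ?_⟩, ?_⟩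
    · rw [hmemT]
      constructor
      · rw [Nat.mul_comm]; exact Nat.div_mul_le_self v k
      · have hmod := Nat.div_add_mod v k
        have hlt := Nat.mod_lt v hk0
        calc v = k * (v / k) + v % k := hmod.symm
          _ < k * (v / k) + k := by omega
          _ = k * (v / k + 1) := by ring
    · rintro j ⟨hjr, hj⟩
      rw [hmemT] at hj
      exact (hdiv _ _ hj.1 hj.2).symm
  · intro j hj i hi i' hi'
    rw [hmemT] at hi hi'
    have hple : (σ.symm i' : Fin n) ≤ (σ.symm i : Fin n) := by
      apply Fin.le_def.2
      have h1 := hi'.2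
      have h2 := hi.1
      omega
    have hgle := hanti _ _ hple
    rw [Equiv.apply_symm_apply, Equiv.apply_symm_apply] at hgle
    have hk1 : k ≤ k * (j+1) := le_mul_of_one_le_right (Nat.zero_le _) (by omega)
    have hkj : k ≤ k * j := le_mul_of_one_le_right (Nat.zero_le _) hj
    have hiT0 : i ∉ T0 := by
      have hm := hmem (σ.symm i)
      rw [Equiv.apply_symm_apply] at hm
      rw [hm]
      push_neg
      have := hi.1
      omega
    have hi'T0 : i' ∉ T0 := by
      have hm := hmem (σ.symm i')
      rw [Equiv.apply_symm_apply] at hm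
      rw [hm]
      push_neg
      have := hi'.1
      omega
    simp only [hg, if_neg hiT0, if_neg hi'T0, add_zero] at hgle
    exact hgle
  · rintro j ⟨i, hi⟩
    rw [hmemT] at hi
    have hbound : k*(j+1) ≤ n := le_trans hi.1 (le_of_lt (σ.symm i).isLt)
    show ((B j).image σ).card = k
    rw [Finset.card_image_of_injective _ σ.injective]
    have hc : (B j).card = (Finset.Ico (k*j) (k*(j+1))).card := by
      apply Finset.card_bij (fun p _ => Fin.val p)
      · intro p hp
        simp only [hB, Finset.mem_filter, Finset.mem_univ, true_and] at hp
        simp [Finset.mem_Ico, hp.1, hp.2]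
      · intro p _ q _ hpq
        exact Fin.val_injective hpq
      · intro b hb
        rw [Finset.mem_Ico] at hb
        refine ⟨⟨b, lt_of_lt_of_le hb.2 hbound⟩, ?_, rfl⟩
        simp [hB, hb.1, hb.2]
    rw [hc, Nat.card_Ico, Nat.mul_succ]
    omega

lemma sum_partition {n : ℕ} (T : ℕ → Finset (Fin n))
    (huniq : ∀ i : Fin n, ∃! j, j ∈ Finset.range n ∧ i ∈ T j) (f : Fin n → ℝ) :
    ∑ j ∈ Finset.range n, ∑ i ∈ T j, f i = ∑ i, f i := by
  classical
  have hrw : ∀ j ∈ Finset.range n, ∑ i ∈ T j, f i = ∑ i, if i ∈ T j then f i else 0 := by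
    intro j _
    rw [Finset.sum_ite_mem, Finset.univ_inter]
  rw [Finset.sum_congr rfl hrw, Finset.sum_comm]
  refine Finset.sum_congr rfl (fun i _ => ?_)
  obtain ⟨j0, ⟨hj0r, hj0m⟩, huq⟩ := huniq i
  rw [Finset.sum_eq_single j0]
  · rw [if_pos hj0m]
  · intro j hj hne
    rw [if_neg (fun hmem => hne (huq j ⟨hj, hmem⟩))]
  · intro hj
    exact absurd hj0r hj

lemma decomp {n : ℕ} (T : ℕ → Finset (Fin n))
    (huniq : ∀ i : Fin n, ∃! j, j ∈ Finset.range n ∧ i ∈ T j) (h : Fin n → ℝ) :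
    h = ∑ j ∈ Finset.range n, res (T j) h := by
  classical
  funext i
  rw [Finset.sum_apply]
  obtain ⟨j0, ⟨hj0r, hj0m⟩, huq⟩ := huniq i
  rw [Finset.sum_eq_single j0]
  · simp [res, hj0m]
  · intro j hj hne
    simp only [res]
    rw [if_neg (fun hmem => hne (huq j ⟨hj, hmem⟩))]
  · intro hj
    exact absurd hj0r hj

end BP

set_option maxHeartbeats 2000000 in
theorem basis_pursuit_sparse_recovery_noisy {m n k : ℕ}
    (hk : 1 ≤ k) (hn : 2 * k ≤ n)
    (A : Matrix (Fin m) (Fin n) ℝ) (δ : ℝ) (hδ0 : 0 < δ)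
    (hδ : δ < Real.sqrt 2 - 1)
    (hRIP : RIP A (2 * k) δ)
    (x : Fin n → ℝ) (hx : KSparse k x)
    (η : Fin m → ℝ) (ε : ℝ) (hη : l2norm η ≤ ε)
    (y : Fin m → ℝ) (hy : y = A.mulVec x + η)
    (xhat : Fin n → ℝ)
    (hfeas : l2norm (y - A.mulVec xhat) ≤ ε)
    (hopt : ∀ z : Fin n → ℝ, l2norm (y - A.mulVec z) ≤ ε → l1norm xhat ≤ l1norm z) :
    l2norm (xhat - x) ≤
      (4 * Real.sqrt (1 + δ) / (1 - (Real.sqrt 2 + 1) * δ)) * ε := by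
  classical
  have hk0 : 0 < k := hk
  have hkn : k ≤ n := le_trans (by omega) hn
  have hn2 : 2 ≤ n := le_trans (by omega) hn
  have hε0 : 0 ≤ ε := le_trans (BP.l2_nonneg η) hη
  have hδ0' : 0 ≤ δ := le_of_lt hδ0
  set h : Fin n → ℝ := xhat - x with hh
  have hpt : ∀ i, xhat i = x i + h i := by
    intro i
    simp only [hh, Pi.sub_apply]
    ring
  -- support of x, padded to cardinality k
  set T0 : Finset (Fin n) := Finset.univ.filter (fun i => x i ≠ 0) with hT0def
  have hT0card : T0.card ≤ k := by
    have hset : {i : Fin n | x i ≠ 0} = (T0 : Set (Fin n)) := by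
      ext i; simp [hT0def]
    have hx' := hx
    unfold KSparse at hx'
    rwa [hset, Set.ncard_coe_finset] at hx'
  obtain ⟨T0', hT0sub, hT0'card⟩ := Finset.exists_superset_card_eq hT0card
    (by simpa using hkn)
  have hxz : ∀ i, i ∉ T0' → x i = 0 := by
    intro i hi
    by_contra hc
    exact hi (hT0sub (by simp [hT0def, hc]))
  obtain ⟨T, hTeq0, hTcard, hTdisj, hTuniq, hTsort, hTfull⟩ :=
    BP.exists_partition hk T0' hT0'card h
  -- abbreviations
  set r : ℕ → Fin n → ℝ := fun j => BP.res (T j) h with hr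
  set h01 : Fin n → ℝ := BP.res (T 0 ∪ T 1) h with hh01def
  set a : ℝ := l2norm h01 with ha
  set t : ℝ := ∑ j ∈ Finset.Ico 2 n, l2norm (r j) with ht
  have ha0 : 0 ≤ a := BP.l2_nonneg _
  have ht0 : 0 ≤ t := Finset.sum_nonneg (fun j _ => BP.l2_nonneg _)
  have h01disj : Disjoint (T 0) (T 1) := hTdisj 0 1 (by omega)
  -- h01 = r 0 + r 1
  have hh01 : h01 = r 0 + r 1 := by
    funext i
    by_cases h0m : i ∈ T 0 <;> by_cases h1m : i ∈ T 1
    · exact absurd h1m (Finset.disjoint_left.1 h01disj h0m)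
    · simp [hh01def, hr, BP.res, Pi.add_apply, Finset.mem_union, h0m, h1m]
    · simp [hh01def, hr, BP.res, Pi.add_apply, Finset.mem_union, h0m, h1m]
    · simp [hh01def, hr, BP.res, Pi.add_apply, Finset.mem_union, h0m, h1m]
  -- decomposition of h
  have hdecomp : h = ∑ j ∈ Finset.range n, r j := BP.decomp T hTuniq h
  have hsum : h = h01 + ∑ j ∈ Finset.Ico 2 n, r j := by
    rw [hh01]
    have e1 : Finset.range n = Finset.Ico 0 n := by rw [Finset.range_eq_Ico]
    have e2 : (∑ j ∈ Finset.Ico 0 2, r j) + ∑ j ∈ Finset.Ico 2 n, r j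
        = ∑ j ∈ Finset.Ico 0 n, r j := Finset.sum_Ico_consecutive _ (by omega) hn2
    have e3 : ∑ j ∈ Finset.Ico 0 2, r j = r 0 + r 1 := by
      rw [← Finset.range_eq_Ico]
      rw [Finset.sum_range_succ, Finset.sum_range_one]
    rw [hdecomp, e1, ← e2, e3]
  -- feasibility of x and the cone constraint
  have hfx : l2norm (y - A.mulVec x) ≤ ε := by
    have : y - A.mulVec x = η := by rw [hy]; abel
    rwa [this]
  have hl1 : l1norm xhat ≤ l1norm x := hopt x hfx
  set c : ℝ := ∑ i ∈ T0'ᶜ, |h i| with hc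
  set e1' : ℝ := ∑ i ∈ T0', |h i| with he1'
  have hcone : c ≤ e1' := by
    have hxsum : l1norm x = ∑ i ∈ T0', |x i| := by
      unfold l1norm
      rw [Finset.sum_subset (Finset.subset_univ T0')]
      intro i _ hi
      rw [hxz i hi, abs_zero]
    have hsplit : l1norm xhat = (∑ i ∈ T0', |x i + h i|) + ∑ i ∈ T0'ᶜ, |h i| := by
      unfold l1norm
      rw [← Finset.sum_add_sum_compl T0' (fun i => |xhat i|)]
      congr 1
      · exact Finset.sum_congr rfl (fun i _ => by rw [hpt i])
      · refine Finset.sum_congr rfl (fun i hi => ?_)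
        rw [Finset.mem_compl] at hi
        rw [hpt i, hxz i hi, zero_add]
    have hlow : ∑ i ∈ T0', (|x i| - |h i|) ≤ ∑ i ∈ T0', |x i + h i| := by
      refine Finset.sum_le_sum (fun i _ => ?_)
      have habs : |x i| ≤ |x i + h i| + |h i| := by
        have := abs_add_le (x i + h i) (-(h i))
        simpa using this
      linarith
    rw [Finset.sum_sub_distrib] at hlow
    rw [hxsum] at hl1
    rw [hsplit] at hl1
    simp only [hc, he1']
    linarith
  -- Cauchy-Schwarz on T0'
  have hT0T : T 0 = T0' := hTeq0
  have he1CS : e1' ≤ Real.sqrt k * l2norm (r 0) := by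
    have hcs := Finset.sum_mul_sq_le_sq_mul_sq T0' (fun _ => (1:ℝ)) (fun i => |h i|)
    simp only [one_pow, one_mul, mul_one, Finset.sum_const, nsmul_eq_mul, hT0'card] at hcs
    rw [← he1'] at hcs
    have habs2 : ∑ i ∈ T0', |h i|^2 = ∑ i ∈ T0', (h i)^2 :=
      Finset.sum_congr rfl (fun i _ => sq_abs _)
    rw [habs2] at hcs
    have hnr0 : ∑ i ∈ T0', (h i)^2 = ∑ i, (r 0 i)^2 := by
      rw [hr]
      rw [BP.nsq_res (T 0) h, hT0T]
    rw [hnr0] at hcs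
    have he1nn : (0:ℝ) ≤ e1' := Finset.sum_nonneg (fun i _ => abs_nonneg _)
    calc e1' = Real.sqrt (e1'^2) := (Real.sqrt_sq he1nn).symm
      _ ≤ Real.sqrt ((k:ℝ) * ∑ i, (r 0 i)^2) := Real.sqrt_le_sqrt hcs
      _ = Real.sqrt k * l2norm (r 0) := Real.sqrt_mul (by positivity) _
  have hr0a : l2norm (r 0) ≤ a := by
    rw [ha, hr]
    unfold l2norm
    apply Real.sqrt_le_sqrt
    rw [BP.nsq_res (T 0) h, BP.nsq_res (T 0 ∪ T 1) h]
    exact Finset.sum_le_sum_of_subset_of_nonneg Finset.subset_union_left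
      (fun i _ _ => sq_nonneg _)
  -- blockwise bound
  have hsqrtk : (0:ℝ) < Real.sqrt k := Real.sqrt_pos.2 (by exact_mod_cast hk0)
  have hblock : ∀ j, 1 ≤ j → l2norm (r (j+1)) ≤ (∑ i ∈ T j, |h i|) / Real.sqrt k := by
    intro j hj
    have hmnn : (0:ℝ) ≤ ∑ i ∈ T j, |h i| := Finset.sum_nonneg (fun i _ => abs_nonneg _)
    rcases Finset.eq_empty_or_nonempty (T (j+1)) with hemp | hne
    · have : r (j+1) = 0 := by
        funext i
        simp [hr, BP.res, hemp]
      rw [this, BP.l2_zero]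
      positivity
    · have hcardk : (T j).card = k := hTfull j hne
      set mj : ℝ := ∑ i ∈ T j, |h i| with hmj
      have hptw : ∀ i ∈ T (j+1), |h i| ≤ mj / k := by
        intro i hi
        have hkey : (k:ℝ) * |h i| ≤ mj := by
          calc (k:ℝ) * |h i| = ∑ _i' ∈ T j, |h i| := by
                rw [Finset.sum_const, hcardk, nsmul_eq_mul]
            _ ≤ ∑ i' ∈ T j, |h i'| :=
                Finset.sum_le_sum (fun i' hi' => hTsort j hj i hi i' hi')
        rw [le_div_iff₀ (by exact_mod_cast hk0)]
        linarith
      have hnsq : ∑ i, (r (j+1) i)^2 ≤ mj^2 / k := by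
        rw [hr, BP.nsq_res (T (j+1)) h]
        calc ∑ i ∈ T (j+1), (h i)^2 ≤ ∑ _i ∈ T (j+1), (mj/k)^2 := by
              refine Finset.sum_le_sum (fun i hi => ?_)
              rw [← sq_abs (h i)]
              exact pow_le_pow_left₀ (abs_nonneg _) (hptw i hi) 2
          _ = (T (j+1)).card * (mj/k)^2 := by rw [Finset.sum_const, nsmul_eq_mul]
          _ ≤ (k:ℝ) * (mj/k)^2 := by
              apply mul_le_mul_of_nonneg_right _ (sq_nonneg _)
              exact_mod_cast hTcard (j+1)
          _ = mj^2 / k := by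
              field_simp
      calc l2norm (r (j+1)) = Real.sqrt (∑ i, (r (j+1) i)^2) := rfl
        _ ≤ Real.sqrt (mj^2 / k) := Real.sqrt_le_sqrt hnsq
        _ = Real.sqrt (mj^2) / Real.sqrt k := Real.sqrt_div (sq_nonneg _) _
        _ = mj / Real.sqrt k := by rw [Real.sqrt_sq hmnn]
  -- tail bound
  have hmsum : ∑ j ∈ Finset.Ico 1 n, (∑ i ∈ T j, |h i|) = c := by
    have htot : ∑ j ∈ Finset.range n, (∑ i ∈ T j, |h i|) = ∑ i, |h i| :=
      BP.sum_partition T hTuniq _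
    have hfirst : ∑ j ∈ Finset.Ico 0 1, (∑ i ∈ T j, |h i|) = e1' := by
      rw [Finset.sum_Ico_eq_sum_range]
      norm_num
      rw [hT0T]
    have hsplit2 : (∑ j ∈ Finset.Ico 0 1, (∑ i ∈ T j, |h i|))
        + ∑ j ∈ Finset.Ico 1 n, (∑ i ∈ T j, |h i|)
        = ∑ j ∈ Finset.Ico 0 n, (∑ i ∈ T j, |h i|) :=
      Finset.sum_Ico_consecutive _ (by omega) (by omega)
    have htot2 : (∑ i : Fin n, |h i|) = e1' + c := by
      rw [he1', hc]
      exact (Finset.sum_add_sum_compl T0' _).symm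
    have hrng : ∑ j ∈ Finset.Ico 0 n, (∑ i ∈ T j, |h i|) = e1' + c := by
      rw [← htot2, ← htot]
      congr 1
      rw [Finset.range_eq_Ico]
    rw [hfirst, hrng] at hsplit2
    linarith
  have htail : t ≤ c / Real.sqrt k := by
    have h1 : t = ∑ i ∈ Finset.range (n-2), l2norm (r (2+i)) := by
      rw [ht, Finset.sum_Ico_eq_sum_range]
    have h2 : ∀ i ∈ Finset.range (n-2), l2norm (r (2+i)) ≤ (∑ i' ∈ T (1+i), |h i'|) / Real.sqrt k := by
      intro i _
      have := hblock (1+i) (by omega)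
      have he : 2+i = (1+i)+1 := by omega
      rw [he]
      exact this
    have h3 : t ≤ ∑ i ∈ Finset.range (n-2), (∑ i' ∈ T (1+i), |h i'|) / Real.sqrt k := by
      rw [h1]; exact Finset.sum_le_sum h2
    have h4 : ∑ i ∈ Finset.range (n-2), (∑ i' ∈ T (1+i), |h i'|) / Real.sqrt k
        ≤ ∑ i ∈ Finset.range (n-1), (∑ i' ∈ T (1+i), |h i'|) / Real.sqrt k := by
      apply Finset.sum_le_sum_of_subset_of_nonneg
      · apply Finset.range_subset_range.2; omega
      · intro i _ _
        apply div_nonneg (Finset.sum_nonneg (fun i' _ => abs_nonneg _)) (le_of_lt hsqrtk)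
    have h5 : ∑ i ∈ Finset.range (n-1), (∑ i' ∈ T (1+i), |h i'|) / Real.sqrt k
        = (∑ j ∈ Finset.Ico 1 n, (∑ i' ∈ T j, |h i'|)) / Real.sqrt k := by
      rw [Finset.sum_div, Finset.sum_Ico_eq_sum_range]
    rw [hmsum] at h5
    linarith
  have hta : t ≤ a := by
    have h6 : c / Real.sqrt k ≤ e1' / Real.sqrt k := by
      gcongr
    have h7 : e1' / Real.sqrt k ≤ l2norm (r 0) := by
      rw [div_le_iff₀ hsqrtk]
      calc e1' ≤ Real.sqrt k * l2norm (r 0) := he1CS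
        _ = l2norm (r 0) * Real.sqrt k := by ring
    linarith
  -- RIP facts
  have hs01 : KSparse (2*k) h01 := by
    apply BP.ksparse_of_subset _ (fun i hi => BP.res_support hi)
    calc (T 0 ∪ T 1).card ≤ (T 0).card + (T 1).card := Finset.card_union_le _ _
      _ ≤ 2*k := by
          have := hTcard 0; have := hTcard 1; omega
  have hRIP01 := hRIP h01 hs01
  have h1δ : (0:ℝ) ≤ 1 + δ := by linarith
  have hAh01 : l2norm (A.mulVec h01) ≤ Real.sqrt (1+δ) * a := by
    calc l2norm (A.mulVec h01) = Real.sqrt (∑ i, (A.mulVec h01 i)^2) := rfl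
      _ ≤ Real.sqrt ((1+δ) * ∑ i, (h01 i)^2) := Real.sqrt_le_sqrt hRIP01.2
      _ = Real.sqrt (1+δ) * Real.sqrt (∑ i, (h01 i)^2) := Real.sqrt_mul h1δ _
      _ = Real.sqrt (1+δ) * a := rfl
  have hAh : l2norm (A.mulVec h) ≤ 2*ε := by
    have heq : A.mulVec h = (y - A.mulVec x) - (y - A.mulVec xhat) := by
      rw [hh, Matrix.mulVec_sub]
      abel
    rw [heq]
    have := BP.l2_sub_le (y - A.mulVec x) (y - A.mulVec xhat)
    linarith
  -- inner product expansion
  have hAsum : A.mulVec (∑ j ∈ Finset.Ico 2 n, r j) = ∑ j ∈ Finset.Ico 2 n, A.mulVec (r j) := by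
    rw [← Matrix.mulVecLin_apply, map_sum]
    exact Finset.sum_congr rfl (fun j _ => Matrix.mulVecLin_apply _ _)
  have hAdecomp : A.mulVec h = A.mulVec h01 + ∑ j ∈ Finset.Ico 2 n, A.mulVec (r j) := by
    calc A.mulVec h = A.mulVec (h01 + ∑ j ∈ Finset.Ico 2 n, r j) := by rw [← hsum]
      _ = A.mulVec h01 + A.mulVec (∑ j ∈ Finset.Ico 2 n, r j) := Matrix.mulVec_add _ _ _
      _ = A.mulVec h01 + ∑ j ∈ Finset.Ico 2 n, A.mulVec (r j) := by rw [hAsum]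
  have hexp : ∑ i, (A.mulVec h01 i)^2
      = (∑ i, A.mulVec h01 i * A.mulVec h i)
        - ∑ j ∈ Finset.Ico 2 n, ∑ i, A.mulVec h01 i * A.mulVec (r j) i := by
    have hptw : ∀ i, A.mulVec h01 i * A.mulVec h i
        = (A.mulVec h01 i)^2 + ∑ j ∈ Finset.Ico 2 n, A.mulVec h01 i * A.mulVec (r j) i := by
      intro i
      rw [hAdecomp, Pi.add_apply, Finset.sum_apply, mul_add, Finset.mul_sum, sq]
    have hsum2 : ∑ i, A.mulVec h01 i * A.mulVec h i
        = (∑ i, (A.mulVec h01 i)^2)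
          + ∑ i, ∑ j ∈ Finset.Ico 2 n, A.mulVec h01 i * A.mulVec (r j) i := by
      rw [← Finset.sum_add_distrib]
      exact Finset.sum_congr rfl (fun i _ => hptw i)
    rw [hsum2, Finset.sum_comm]
    ring
  -- bound each tail inner product
  have hipj : ∀ j ∈ Finset.Ico 2 n,
      -(δ * (l2norm (r 0) + l2norm (r 1)) * l2norm (r j))
        ≤ ∑ i, A.mulVec h01 i * A.mulVec (r j) i := by
    intro j hj
    rw [Finset.mem_Ico] at hj
    have hsplitip : ∑ i, A.mulVec h01 i * A.mulVec (r j) i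
        = (∑ i, A.mulVec (r 0) i * A.mulVec (r j) i)
          + ∑ i, A.mulVec (r 1) i * A.mulVec (r j) i := by
      rw [← Finset.sum_add_distrib]
      refine Finset.sum_congr rfl (fun i _ => ?_)
      rw [hh01, Matrix.mulVec_add, Pi.add_apply]
      ring
    have hb0 := BP.rip_ip hRIP (r 0) (r j) (T 0) (T j)
      (fun i hi => BP.res_support hi) (fun i hi => BP.res_support hi)
      (hTdisj 0 j (by omega))
      (by have := hTcard 0; have := hTcard j; omega)
    have hb1 := BP.rip_ip hRIP (r 1) (r j) (T 1) (T j)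
      (fun i hi => BP.res_support hi) (fun i hi => BP.res_support hi)
      (hTdisj 1 j (by omega))
      (by have := hTcard 1; have := hTcard j; omega)
    rw [abs_le] at hb0 hb1
    rw [hsplitip]
    have := hb0.1
    have := hb1.1
    nlinarith [hb0.1, hb1.1]
  -- the main estimate
  have hb01sum : l2norm (r 0) + l2norm (r 1) ≤ Real.sqrt 2 * a := by
    have hsq : (l2norm (r 0))^2 + (l2norm (r 1))^2 = a^2 := by
      rw [BP.sq_l2, BP.sq_l2, ha, BP.sq_l2, hr, hh01def]
      rw [BP.nsq_res, BP.nsq_res, BP.nsq_res]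
      exact (Finset.sum_union h01disj).symm
    have hnn : 0 ≤ l2norm (r 0) + l2norm (r 1) :=
      add_nonneg (BP.l2_nonneg _) (BP.l2_nonneg _)
    have h2 : (l2norm (r 0) + l2norm (r 1))^2 ≤ 2 * a^2 := by
      nlinarith [sq_nonneg (l2norm (r 0) - l2norm (r 1))]
    calc l2norm (r 0) + l2norm (r 1) = Real.sqrt ((l2norm (r 0) + l2norm (r 1))^2) :=
          (Real.sqrt_sq hnn).symm
      _ ≤ Real.sqrt (2 * a^2) := Real.sqrt_le_sqrt h2
      _ = Real.sqrt 2 * a := by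
          rw [Real.sqrt_mul (by norm_num), Real.sqrt_sq ha0]
  have hipAh : ∑ i, A.mulVec h01 i * A.mulVec h i ≤ Real.sqrt (1+δ) * a * (2*ε) := by
    calc ∑ i, A.mulVec h01 i * A.mulVec h i
        ≤ l2norm (A.mulVec h01) * l2norm (A.mulVec h) := BP.ip_le_l2 _ _
      _ ≤ Real.sqrt (1+δ) * a * (2*ε) := by
          apply mul_le_mul hAh01 hAh (BP.l2_nonneg _)
          positivity
  have htailip : ∑ j ∈ Finset.Ico 2 n, ∑ i, A.mulVec h01 i * A.mulVec (r j) i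
      ≥ -(δ * (Real.sqrt 2 * a) * t) := by
    have hterm : ∀ j ∈ Finset.Ico 2 n,
        δ * (l2norm (r 0) + l2norm (r 1)) * l2norm (r j)
          ≤ δ * (Real.sqrt 2 * a) * l2norm (r j) := by
      intro j _
      have hrj := BP.l2_nonneg (r j)
      have key := mul_nonneg (mul_nonneg hδ0' hrj) (sub_nonneg.2 hb01sum)
      nlinarith [key]
    have hsum' : ∑ j ∈ Finset.Ico 2 n, δ * (l2norm (r 0) + l2norm (r 1)) * l2norm (r j)
        ≤ δ * (Real.sqrt 2 * a) * t := by
      rw [ht, Finset.mul_sum]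
      exact Finset.sum_le_sum hterm
    have hneg : ∑ j ∈ Finset.Ico 2 n, -(δ * (l2norm (r 0) + l2norm (r 1)) * l2norm (r j))
        ≤ ∑ j ∈ Finset.Ico 2 n, ∑ i, A.mulVec h01 i * A.mulVec (r j) i :=
      Finset.sum_le_sum hipj
    rw [Finset.sum_neg_distrib] at hneg
    exact le_trans (neg_le_neg hsum') hneg
  have hmain : (1-δ) * a^2 ≤ Real.sqrt (1+δ) * a * (2*ε) + δ * (Real.sqrt 2 * a) * t := by
    have hlow : (1-δ) * a^2 ≤ ∑ i, (A.mulVec h01 i)^2 := by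
      have := hRIP01.1
      rwa [← BP.sq_l2 h01] at this
    rw [hexp] at hlow
    have := hipAh
    have := htailip
    linarith
  have hmain2 : (1-δ) * a^2 ≤ 2 * Real.sqrt (1+δ) * ε * a + Real.sqrt 2 * δ * a^2 := by
    have hterm : δ * (Real.sqrt 2 * a) * t ≤ Real.sqrt 2 * δ * a^2 := by
      have : δ * (Real.sqrt 2 * a) * t ≤ δ * (Real.sqrt 2 * a) * a := by
        apply mul_le_mul_of_nonneg_left hta
        positivity
      nlinarith []
    nlinarith [hmain]
  -- denominator positivity
  have h2sq : Real.sqrt 2 * Real.sqrt 2 = 2 := Real.mul_self_sqrt (by norm_num)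
  set D : ℝ := 1 - (Real.sqrt 2 + 1) * δ with hD
  have hDpos : 0 < D := by
    rw [hD]
    nlinarith [Real.sqrt_nonneg 2, hδ0]
  have haD : D * a ≤ 2 * Real.sqrt (1+δ) * ε := by
    rcases eq_or_lt_of_le ha0 with haz | hap
    · rw [← haz]
      have : (0:ℝ) ≤ 2 * Real.sqrt (1+δ) * ε := by positivity
      simpa using this
    · have hmul : (D * a) * a ≤ (2 * Real.sqrt (1+δ) * ε) * a := by
        have : D * a^2 ≤ 2 * Real.sqrt (1+δ) * ε * a := by
          rw [hD]
          nlinarith [hmain2]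
        nlinarith [this]
      exact le_of_mul_le_mul_right hmul hap
  -- assemble
  have hfinal : l2norm h ≤ 2 * a := by
    have hle : l2norm h ≤ a + t := by
      calc l2norm h = l2norm (h01 + ∑ j ∈ Finset.Ico 2 n, r j) := by rw [← hsum]
        _ ≤ l2norm h01 + l2norm (∑ j ∈ Finset.Ico 2 n, r j) := BP.l2_add_le _ _
        _ ≤ a + t := by
            have := BP.l2_sum_le (Finset.Ico 2 n) r
            rw [ha, ht]
            linarith
    linarith
  have hgoal : D * l2norm h ≤ 4 * Real.sqrt (1+δ) * ε := by
    calc D * l2norm h ≤ D * (2*a) := by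
          apply mul_le_mul_of_nonneg_left hfinal (le_of_lt hDpos)
      _ = 2 * (D * a) := by ring
      _ ≤ 2 * (2 * Real.sqrt (1+δ) * ε) := by linarith
      _ = 4 * Real.sqrt (1+δ) * ε := by ring
  show l2norm h ≤ 4 * Real.sqrt (1 + δ) / D * ε
  rw [div_mul_eq_mul_div, le_div_iff₀ hDpos]
  calc l2norm h * D = D * l2norm h := by ring
    _ ≤ 4 * Real.sqrt (1+δ) * ε := hgoal
end

section
/- Suppose n ≥ 2k ≥ 2, A ∈ ℝ^{m×n} satisfies the restricted isometry property of order 2k with constant δ_{2k} < √2 − 1, and y = Ax for some k-sparse vector x ∈ Σ_k. If x̂ is any minimizer of ‖z‖₁ over the set A⁻¹(y) = {z ∈ ℝⁿ : Az = y}, then x̂ = x. -/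
open Finset

namespace BPaux

/-- coordinate projection onto a finset -/
def proj {n : ℕ} (T : Finset (Fin n)) (v : Fin n → ℝ) : Fin n → ℝ :=
  fun i => if i ∈ T then v i else 0

lemma sparse_of_zero_off {n k : ℕ} (T : Finset (Fin n)) (v : Fin n → ℝ)
    (hT : T.card ≤ k) (hv : ∀ i, i ∉ T → v i = 0) : KSparse k v := by
  have hsub : {i : Fin n | v i ≠ 0} ⊆ (T : Set (Fin n)) := by
    intro i hi
    by_contra hc
    exact hi (hv i (by simpa using hc))
  calc Set.ncard {i : Fin n | v i ≠ 0} ≤ (T : Set (Fin n)).ncard :=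
        Set.ncard_le_ncard hsub (Set.toFinite _)
    _ = T.card := Set.ncard_coe_finset T
    _ ≤ k := hT

lemma eq_zero_of_sum_sq {n : ℕ} (v : Fin n → ℝ) (h : ∑ i, (v i)^2 = 0) : v = 0 := by
  funext i
  have := (Finset.sum_eq_zero_iff_of_nonneg (fun i _ => sq_nonneg (v i))).mp h i (mem_univ i)
  exact pow_eq_zero_iff (by norm_num) |>.mp this

lemma sum_proj_sq {n : ℕ} (T : Finset (Fin n)) (v : Fin n → ℝ) :
    ∑ i, (proj T v i)^2 = ∑ i ∈ T, (v i)^2 := by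
  rw [← Finset.sum_add_sum_compl T]
  have h1 : ∑ i ∈ T, (proj T v i)^2 = ∑ i ∈ T, (v i)^2 :=
    Finset.sum_congr rfl (fun i hi => by simp [proj, hi])
  have h2 : ∑ i ∈ Tᶜ, (proj T v i)^2 = 0 :=
    Finset.sum_eq_zero (fun i hi => by simp [proj, Finset.mem_compl.mp hi])
  rw [h1, h2, add_zero]

lemma l1_le_sqrt_card {n : ℕ} (T : Finset (Fin n)) (v : Fin n → ℝ) :
    ∑ i ∈ T, |v i| ≤ Real.sqrt T.card * Real.sqrt (∑ i ∈ T, (v i)^2) := by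
  have cs := Finset.sum_mul_sq_le_sq_mul_sq T (fun _ => (1:ℝ)) (fun i => |v i|)
  simp only [one_mul, one_pow, sq_abs] at cs
  have hs : ∑ i ∈ T, |v i| = Real.sqrt ((∑ i ∈ T, |v i|)^2) :=
    (Real.sqrt_sq (Finset.sum_nonneg fun i _ => abs_nonneg _)).symm
  rw [hs, ← Real.sqrt_mul (Nat.cast_nonneg T.card)]
  apply Real.sqrt_le_sqrt
  simpa using cs


lemma sparse_comb {n k : ℕ} {u v : Fin n → ℝ} (hu : KSparse k u) (hv : KSparse k v)
    (c d : ℝ) : KSparse (2*k) (fun i => c * u i + d * v i) := by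
  have hsub : {i : Fin n | c * u i + d * v i ≠ 0} ⊆
      {i : Fin n | u i ≠ 0} ∪ {i : Fin n | v i ≠ 0} := by
    intro i hi
    by_contra hc
    simp only [Set.mem_union, Set.mem_setOf_eq, not_or, not_not] at hc
    exact hi (by simp [Set.mem_setOf_eq, hc.1, hc.2])
  calc Set.ncard {i : Fin n | c * u i + d * v i ≠ 0}
      ≤ Set.ncard ({i : Fin n | u i ≠ 0} ∪ {i : Fin n | v i ≠ 0}) :=
        Set.ncard_le_ncard hsub (Set.toFinite _)
    _ ≤ Set.ncard {i : Fin n | u i ≠ 0} + Set.ncard {i : Fin n | v i ≠ 0} :=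
        Set.ncard_union_le _ _
    _ ≤ 2 * k := le_trans (add_le_add hu hv) (by omega)

/-- restricted orthogonality -/
lemma ro {m n k : ℕ} {A : Matrix (Fin m) (Fin n) ℝ} {δ : ℝ} (hδ : 0 ≤ δ)
    (hRIP : RIP A (2*k) δ) (u v : Fin n → ℝ)
    (hu : KSparse k u) (hv : KSparse k v) (hdisj : ∀ i, u i = 0 ∨ v i = 0) :
    |∑ i, A.mulVec u i * A.mulVec v i| ≤
      δ * (Real.sqrt (∑ i, (u i)^2) * Real.sqrt (∑ i, (v i)^2)) := by
  set a := Real.sqrt (∑ i, (u i)^2) with ha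
  set b := Real.sqrt (∑ i, (v i)^2) with hb
  have ha0 : 0 ≤ a := Real.sqrt_nonneg _
  have hb0 : 0 ≤ b := Real.sqrt_nonneg _
  have hua : ∑ i, (u i)^2 = a^2 := (Real.sq_sqrt (by positivity)).symm
  have hvb : ∑ i, (v i)^2 = b^2 := (Real.sq_sqrt (by positivity)).symm
  rcases eq_or_lt_of_le ha0 with ha0' | hapos
  · have : u = 0 := eq_zero_of_sum_sq u (by rw [hua, ← ha0']; ring)
    simp only [this, Matrix.mulVec_zero, Pi.zero_apply, zero_mul, Finset.sum_const_zero, abs_zero]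
    exact mul_nonneg hδ (mul_nonneg ha0 hb0)
  rcases eq_or_lt_of_le hb0 with hb0' | hbpos
  · have : v = 0 := eq_zero_of_sum_sq v (by rw [hvb, ← hb0']; ring)
    simp only [this, Matrix.mulVec_zero, Pi.zero_apply, mul_zero, Finset.sum_const_zero, abs_zero]
    exact mul_nonneg hδ (mul_nonneg ha0 hb0)
  -- polarization
  set w : Fin n → ℝ := fun i => b * u i + a * v i with hw
  set w' : Fin n → ℝ := fun i => b * u i + (-a) * v i with hw'
  have huv : ∑ i, u i * v i = 0 :=
    Finset.sum_eq_zero fun i _ => by rcases hdisj i with h | h <;> simp [h]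
  have hwsq : ∑ i, (w i)^2 = 2 * (a^2 * b^2) := by
    have : ∀ i, (w i)^2 = b^2 * (u i)^2 + a^2 * (v i)^2 + (2*a*b) * (u i * v i) := by
      intro i; simp only [hw]; ring
    simp_rw [this]
    rw [Finset.sum_add_distrib, Finset.sum_add_distrib, ← Finset.mul_sum, ← Finset.mul_sum,
      ← Finset.mul_sum, huv, hua, hvb]; ring
  have hwsq' : ∑ i, (w' i)^2 = 2 * (a^2 * b^2) := by
    have : ∀ i, (w' i)^2 = b^2 * (u i)^2 + a^2 * (v i)^2 + (-(2*a*b)) * (u i * v i) := by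
      intro i; simp only [hw']; ring
    simp_rw [this]
    rw [Finset.sum_add_distrib, Finset.sum_add_distrib, ← Finset.mul_sum, ← Finset.mul_sum,
      ← Finset.mul_sum, huv, hua, hvb]; ring
  have hAw : ∀ i, A.mulVec w i = b * A.mulVec u i + a * A.mulVec v i := by
    intro i
    have : w = b • u + a • v := by funext j; simp [hw, smul_eq_mul]
    rw [this, Matrix.mulVec_add, Matrix.mulVec_smul, Matrix.mulVec_smul]
    simp [smul_eq_mul]
  have hAw' : ∀ i, A.mulVec w' i = b * A.mulVec u i + (-a) * A.mulVec v i := by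
    intro i
    have : w' = b • u + (-a) • v := by funext j; simp [hw', smul_eq_mul]
    rw [this, Matrix.mulVec_add, Matrix.mulVec_smul, Matrix.mulVec_smul]
    simp [smul_eq_mul]
  set P := ∑ i, A.mulVec u i * A.mulVec v i with hP
  set α := ∑ i, (A.mulVec u i)^2 with hα
  set β := ∑ i, (A.mulVec v i)^2 with hβ
  have hAwsq : ∑ i, (A.mulVec w i)^2 = b^2 * α + a^2 * β + (2*a*b) * P := by
    have : ∀ i, (A.mulVec w i)^2
        = b^2 * (A.mulVec u i)^2 + a^2 * (A.mulVec v i)^2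
          + (2*a*b) * (A.mulVec u i * A.mulVec v i) := by
      intro i; rw [hAw i]; ring
    simp_rw [this]
    rw [Finset.sum_add_distrib, Finset.sum_add_distrib, ← Finset.mul_sum, ← Finset.mul_sum,
      ← Finset.mul_sum]
  have hAwsq' : ∑ i, (A.mulVec w' i)^2 = b^2 * α + a^2 * β - (2*a*b) * P := by
    have : ∀ i, (A.mulVec w' i)^2
        = b^2 * (A.mulVec u i)^2 + a^2 * (A.mulVec v i)^2
          - (2*a*b) * (A.mulVec u i * A.mulVec v i) := by
      intro i; rw [hAw' i]; ring
    simp_rw [this]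
    rw [Finset.sum_sub_distrib, Finset.sum_add_distrib, ← Finset.mul_sum, ← Finset.mul_sum,
      ← Finset.mul_sum]
  have hwsp : KSparse (2*k) w := sparse_comb hu hv b a
  have hwsp' : KSparse (2*k) w' := by
    have := sparse_comb hu hv b (-a); exact this
  have r1 := hRIP w hwsp
  have r2 := hRIP w' hwsp'
  rw [hwsq, hAwsq] at r1
  rw [hwsq', hAwsq'] at r2
  have habpos : 0 < a * b := mul_pos hapos hbpos
  rw [abs_le]
  constructor
  · -- -δab ≤ P : lower RIP on w, upper on w'
    have h1 := r1.1
    have h2 := r2.2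
    nlinarith [h1, h2]
  · have h1 := r1.2
    have h2 := r2.1
    nlinarith [h1, h2]


variable {n k : ℕ} (L : List (Fin n)) (k)

/-- the `j`-th chunk of size `k` of the list `L`, as a finset -/
def chunk (j : ℕ) : Finset (Fin n) := ((L.drop (j*k)).take k).toFinset

variable {L} {k}

lemma chunk_sublist (j : ℕ) : ((L.drop (j*k)).take k).Sublist L :=
  (List.take_sublist _ _).trans (List.drop_sublist _ _)

lemma nodup_chunk_list (hL : L.Nodup) (j : ℕ) : ((L.drop (j*k)).take k).Nodup :=
  (chunk_sublist j).nodup hL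

lemma mem_chunk_iff {a : Fin n} {j : ℕ} : a ∈ chunk L k j ↔ a ∈ (L.drop (j*k)).take k :=
  List.mem_toFinset

lemma chunk_subset {a : Fin n} {j : ℕ} (ha : a ∈ chunk L k j) : a ∈ L :=
  (chunk_sublist j).mem (mem_chunk_iff.mp ha)

lemma card_chunk_le (hL : L.Nodup) (j : ℕ) : (chunk L k j).card ≤ k := by
  rw [chunk, List.toFinset_card_of_nodup (nodup_chunk_list hL j)]
  rw [List.length_take]; exact min_le_left _ _

lemma chunk_mem_take {a : Fin n} {j : ℕ} (ha : a ∈ chunk L k j) : a ∈ L.take (j*k + k) := by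
  rw [List.take_add]
  exact List.mem_append_right _ (mem_chunk_iff.mp ha)

lemma chunk_mem_drop {a : Fin n} {j : ℕ} (ha : a ∈ chunk L k j) : a ∈ L.drop (j*k) :=
  List.mem_of_mem_take (mem_chunk_iff.mp ha)

lemma chunk_disjoint (hL : L.Nodup) {i j : ℕ} (hij : i < j) :
    Disjoint (chunk L k i) (chunk L k j) := by
  rw [Finset.disjoint_left]
  intro a hai haj
  exact (List.disjoint_take_drop hL (by calc i*k+k = (i+1)*k := by ring
    _ ≤ j*k := Nat.mul_le_mul_right k hij)) (chunk_mem_take hai) (chunk_mem_drop haj)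

lemma chunk_rel {r : Fin n → Fin n → Prop} (hs : L.Pairwise r) {a b : Fin n} {j : ℕ}
    (ha : a ∈ chunk L k (j+1)) (hb : b ∈ chunk L k j) : r b a := by
  have ha' : a ∈ L.drop ((j+1)*k) := chunk_mem_drop ha
  have hb' : b ∈ L.take ((j+1)*k) := by
    have := chunk_mem_take hb
    rwa [show j*k+k = (j+1)*k by ring] at this
  exact hs.rel_of_mem_take_of_mem_drop hb' ha'

lemma chunk_full (hL : L.Nodup) {j : ℕ} (hne : (chunk L k (j+1)).Nonempty) :
    (chunk L k j).card = k := by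
  obtain ⟨a, ha⟩ := hne
  have h1 : a ∈ L.drop ((j+1)*k) := chunk_mem_drop ha
  have h2 : (j+1)*k < L.length := by
    by_contra hc
    push_neg at hc
    rw [List.drop_eq_nil_of_le hc] at h1
    exact absurd h1 List.not_mem_nil
  rw [chunk, List.toFinset_card_of_nodup (nodup_chunk_list hL j), List.length_take,
    List.length_drop]
  have : (j+1)*k = j*k + k := by ring
  omega

lemma chunk_sum (f : Fin n → ℝ) (hL : L.Nodup) (J : ℕ) :
    ∑ j ∈ Finset.range J, ∑ i ∈ chunk L k j, f i = ((L.take (J*k)).map f).sum := by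
  induction J with
  | zero => simp
  | succ J ih =>
    rw [Finset.sum_range_succ, ih, show (J+1)*k = J*k + k by ring, List.take_add,
      List.map_append, List.sum_append, chunk, List.sum_toFinset f (nodup_chunk_list hL J)]

lemma chunk_sum_total (f : Fin n → ℝ) (hL : L.Nodup) {J : ℕ} (hJ : L.length ≤ J*k) :
    ∑ j ∈ Finset.range J, ∑ i ∈ chunk L k j, f i = (L.map f).sum := by
  rw [chunk_sum f hL J, List.take_of_length_le hJ]

lemma mem_chunk_of_mem (hk : 1 ≤ k) {a : Fin n} (ha : a ∈ L) :
    ∃ j, j * k < L.length ∧ a ∈ chunk L k j := by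
  obtain ⟨idx, hidx, hget⟩ := List.mem_iff_getElem.mp ha
  refine ⟨idx / k, ?_, ?_⟩
  · calc (idx/k) * k ≤ idx := Nat.div_mul_le_self idx k
      _ < L.length := hidx
  · rw [mem_chunk_iff]
    have hlen : idx % k < ((L.drop (idx/k*k)).take k).length := by
      rw [List.length_take, List.length_drop]
      have h1 : idx % k < k := Nat.mod_lt _ (by omega)
      have h2 : idx / k * k + idx % k = idx := by rw [Nat.mul_comm]; exact Nat.div_add_mod idx k
      omega
    have : ((L.drop (idx/k*k)).take k)[idx % k] = a := by
      rw [List.getElem_take, List.getElem_drop]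
      have h2 : idx / k * k + idx % k = idx := by rw [Nat.mul_comm]; exact Nat.div_add_mod idx k
      simp_rw [h2]
      exact hget
    rw [← this]
    exact List.getElem_mem hlen

end BPaux


open BPaux in
set_option maxHeartbeats 2000000 in
theorem basis_pursuit_exact_recovery {m n k : ℕ}
    (hk : 1 ≤ k) (hn : 2 * k ≤ n)
    (A : Matrix (Fin m) (Fin n) ℝ) (δ : ℝ) (hδ0 : 0 < δ)
    (hδ : δ < Real.sqrt 2 - 1)
    (hRIP : RIP A (2 * k) δ)
    (x : Fin n → ℝ) (hx : KSparse k x)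
    (y : Fin m → ℝ) (hy : y = A.mulVec x)
    (xhat : Fin n → ℝ)
    (hfeas : A.mulVec xhat = y)
    (hopt : ∀ z : Fin n → ℝ, A.mulVec z = y → l1norm xhat ≤ l1norm z) :
    xhat = x := by
  classical
  set d : Fin n → ℝ := xhat - x with hd
  have hd' : ∀ i, d i = xhat i - x i := fun i => rfl
  have hAd : A.mulVec d = 0 := by
    rw [hd, Matrix.mulVec_sub, hfeas, hy, sub_self]
  set T0 : Finset (Fin n) := Finset.univ.filter (fun i => x i ≠ 0) with hT0
  have hT0mem : ∀ i, i ∈ T0 ↔ x i ≠ 0 := fun i => by simp [hT0]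
  have hT0card : T0.card ≤ k := by
    have hset : {i : Fin n | x i ≠ 0} = (T0 : Set (Fin n)) := by
      ext i; simp [hT0]
    have := hx
    rwa [KSparse, hset, Set.ncard_coe_finset] at this
  have hxoff : ∀ i, i ∉ T0 → x i = 0 := by
    intro i hi
    by_contra hc
    exact hi ((hT0mem i).mpr hc)
  -- cone condition
  have cone : ∑ i ∈ T0ᶜ, |d i| ≤ ∑ i ∈ T0, |d i| := by
    have h1 : l1norm xhat ≤ l1norm x := hopt x hy.symm
    have e1 : l1norm xhat = ∑ i ∈ T0, |x i + d i| + ∑ i ∈ T0ᶜ, |d i| := by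
      rw [l1norm, ← Finset.sum_add_sum_compl T0]
      congr 1
      · exact Finset.sum_congr rfl fun i _ => by rw [hd']; ring_nf
      · exact Finset.sum_congr rfl fun i hi => by
          rw [hd', hxoff i (Finset.mem_compl.mp hi), sub_zero]
    have e2 : l1norm x = ∑ i ∈ T0, |x i| := by
      rw [l1norm, ← Finset.sum_add_sum_compl T0]
      have hz : ∑ i ∈ T0ᶜ, |x i| = 0 :=
        Finset.sum_eq_zero fun i hi => by rw [hxoff i (Finset.mem_compl.mp hi), abs_zero]
      rw [hz, add_zero]
    have e3 : ∑ i ∈ T0, (|x i| - |d i|) ≤ ∑ i ∈ T0, |x i + d i| := by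
      refine Finset.sum_le_sum fun i _ => ?_
      have h4 : |x i| ≤ |x i + d i| + |d i| := by
        have := abs_add_le (x i + d i) (-(d i))
        simpa using this
      linarith
    rw [Finset.sum_sub_distrib] at e3
    rw [e1, e2] at h1
    linarith
  -- sorted list of the complement of the support
  have hδnn : (0:ℝ) ≤ δ := le_of_lt hδ0
  set cmp : Fin n → Fin n → Bool := fun a b => decide (|d b| ≤ |d a|) with hcmp
  set L : List (Fin n) := (T0ᶜ.toList).mergeSort cmp with hLdef
  have hperm : List.Perm L T0ᶜ.toList := List.mergeSort_perm _ _
  have hnodup : L.Nodup := hperm.nodup_iff.mpr (Finset.nodup_toList _)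
  have hsorted : L.Pairwise (fun a b : Fin n => |d b| ≤ |d a|) := by
    have hs := List.pairwise_mergeSort (le := cmp)
      (fun a b c hab hbc => by
        simp only [hcmp, decide_eq_true_eq] at *
        exact le_trans hbc hab)
      (fun a b => by
        simp only [hcmp, Bool.or_eq_true, decide_eq_true_eq]
        exact le_total _ _)
      (T0ᶜ.toList)
    refine List.Pairwise.imp ?_ hs
    intro a b hab
    simpa [hcmp, decide_eq_true_eq] using hab
  have hmemL : ∀ a : Fin n, a ∈ L ↔ a ∈ T0ᶜ := fun a => by
    rw [hperm.mem_iff, Finset.mem_toList]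
  have hLlen : L.length = T0ᶜ.card := by rw [hperm.length_eq, Finset.length_toList]
  have hLn : L.length ≤ n := by
    rw [hLlen]; exact le_trans (Finset.card_le_univ _) (by simp)
  set C : ℕ → Finset (Fin n) := fun j => chunk L k j with hC
  have hCsub : ∀ {j : ℕ} {a : Fin n}, a ∈ C j → a ∈ T0ᶜ := fun {j a} ha =>
    (hmemL a).mp (chunk_subset ha)
  have hCcard : ∀ j, (C j).card ≤ k := fun j => card_chunk_le hnodup j
  have hcover : ∀ f : Fin n → ℝ, ∑ j ∈ Finset.range n, ∑ i ∈ C j, f i = ∑ i ∈ T0ᶜ, f i := by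
    intro f
    have hJ : L.length ≤ n * k := le_trans hLn (Nat.le_mul_of_pos_right n (by omega))
    rw [hC]
    rw [chunk_sum_total f hnodup hJ, (hperm.map f).sum_eq, Finset.sum_map_toList]
  have hkR : (0:ℝ) < (k:ℝ) := by exact_mod_cast hk
  have hsqrtk : (0:ℝ) < Real.sqrt k := Real.sqrt_pos.mpr hkR
  -- per-block bound
  have block : ∀ j : ℕ,
      Real.sqrt (∑ i ∈ C (j+1), (d i)^2) ≤ (∑ i ∈ C j, |d i|) / Real.sqrt k := by
    intro j
    rcases Finset.eq_empty_or_nonempty (C (j+1)) with he | hne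
    · rw [he]
      simp only [Finset.sum_empty, Real.sqrt_zero]
      exact div_nonneg (Finset.sum_nonneg fun i _ => abs_nonneg _) hsqrtk.le
    · have hfull : (C j).card = k := chunk_full hnodup hne
      set S := ∑ i ∈ C j, |d i| with hS
      have hS0 : 0 ≤ S := Finset.sum_nonneg fun i _ => abs_nonneg _
      have hak : ∀ a ∈ C (j+1), |d a| ≤ S / k := by
        intro a ha
        rw [le_div_iff₀ hkR]
        calc |d a| * k = ∑ _b ∈ C j, |d a| := by
              rw [Finset.sum_const, hfull, nsmul_eq_mul, mul_comm]
          _ ≤ S := Finset.sum_le_sum fun b hb => chunk_rel hsorted ha hb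
      have hsum : ∑ i ∈ C (j+1), (d i)^2 ≤ S^2 / k := by
        calc ∑ i ∈ C (j+1), (d i)^2 ≤ ∑ _i ∈ C (j+1), (S/k)^2 := by
              refine Finset.sum_le_sum fun i hi => ?_
              rw [← sq_abs]
              exact pow_le_pow_left₀ (abs_nonneg _) (hak i hi) 2
          _ = (C (j+1)).card * (S/k)^2 := by rw [Finset.sum_const, nsmul_eq_mul]
          _ ≤ k * (S/k)^2 := by
              refine mul_le_mul_of_nonneg_right ?_ (sq_nonneg _)
              exact_mod_cast hCcard (j+1)
          _ = S^2 / k := by field_simp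
      calc Real.sqrt (∑ i ∈ C (j+1), (d i)^2) ≤ Real.sqrt (S^2 / k) :=
            Real.sqrt_le_sqrt hsum
        _ = S / Real.sqrt k := by
            rw [Real.sqrt_div (sq_nonneg S), Real.sqrt_sq hS0]
  -- tail sum bound
  set Stail := ∑ j ∈ Finset.range (n-1), Real.sqrt (∑ i ∈ C (j+1), (d i)^2) with hSt
  have hSt0 : 0 ≤ Stail := Finset.sum_nonneg fun j _ => Real.sqrt_nonneg _
  have tail : Stail ≤ (∑ i ∈ T0ᶜ, |d i|) / Real.sqrt k := by
    calc Stail ≤ ∑ j ∈ Finset.range (n-1), (∑ i ∈ C j, |d i|) / Real.sqrt k :=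
          Finset.sum_le_sum fun j _ => block j
      _ = (∑ j ∈ Finset.range (n-1), ∑ i ∈ C j, |d i|) / Real.sqrt k := by
          rw [Finset.sum_div]
      _ ≤ (∑ j ∈ Finset.range n, ∑ i ∈ C j, |d i|) / Real.sqrt k := by
          apply div_le_div_of_nonneg_right ?_ hsqrtk.le
          refine Finset.sum_le_sum_of_subset_of_nonneg ?_ ?_
          · exact Finset.range_subset_range.mpr (by omega)
          · exact fun j _ _ => Finset.sum_nonneg fun i _ => abs_nonneg _
      _ = (∑ i ∈ T0ᶜ, |d i|) / Real.sqrt k := by rw [hcover]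
  -- projections
  set p0 : Fin n → ℝ := proj T0 d with hp0
  set p1 : Fin n → ℝ := proj (C 0) d with hp1
  set P : Fin n → ℝ := proj (T0 ∪ C 0) d with hP
  set q : ℕ → Fin n → ℝ := fun j => proj (C (j+1)) d with hq
  have hp0i : ∀ i ∈ T0, p0 i = d i := fun i hi => by simp [hp0, proj, hi]
  have hp0o : ∀ i, i ∉ T0 → p0 i = 0 := fun i hi => by simp [hp0, proj, hi]
  have hqo : ∀ j i, i ∉ C (j+1) → q j i = 0 := fun j i hi => by simp [hq, proj, hi]
  have hqi : ∀ j i, i ∈ C (j+1) → q j i = d i := fun j i hi => by simp [hq, proj, hi]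
  -- a point of T0ᶜ lies in some chunk C j with j < n
  have hwhere : ∀ i, i ∈ T0ᶜ → ∃ j, j < n ∧ i ∈ C j := by
    intro i hi
    obtain ⟨j, hjlen, hj⟩ := mem_chunk_of_mem hk ((hmemL i).mpr hi)
    refine ⟨j, ?_, hj⟩
    have : j ≤ j * k := Nat.le_mul_of_pos_right j (by omega)
    omega
  -- decomposition d = P + ∑ q j
  have hdec : d = P + ∑ j ∈ Finset.range (n-1), q j := by
    funext i
    rw [Pi.add_apply, Finset.sum_apply]
    by_cases hi : i ∈ T0
    · have hPi : P i = d i := by simp [hP, proj, Finset.mem_union, hi]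
      have hz : ∀ j ∈ Finset.range (n-1), q j i = 0 := fun j _ =>
        hqo j i (fun hc => by simpa [hi] using (Finset.mem_compl.mp (hCsub hc)))
      rw [hPi, Finset.sum_eq_zero hz, add_zero]
    · have hi' : i ∈ T0ᶜ := Finset.mem_compl.mpr hi
      obtain ⟨j0, hj0n, hj0⟩ := hwhere i hi'
      by_cases hj00 : j0 = 0
      · subst hj00
        have hPi : P i = d i := by simp [hP, proj, Finset.mem_union, hj0]
        have hz : ∀ j ∈ Finset.range (n-1), q j i = 0 := fun j _ =>
          hqo j i (fun hc =>
            (Finset.disjoint_left.mp (chunk_disjoint hnodup (Nat.succ_pos j)) hj0) hc)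
        rw [hPi, Finset.sum_eq_zero hz, add_zero]
      · obtain ⟨j', rfl⟩ : ∃ j', j0 = j' + 1 := ⟨j0 - 1, by omega⟩
        have hiC0 : i ∉ C 0 := fun hc =>
          (Finset.disjoint_left.mp (chunk_disjoint hnodup (Nat.succ_pos j')) hc) hj0
        have hPi : P i = 0 := by simp [hP, proj, Finset.mem_union, hi, hiC0]
        have hsum : ∑ j ∈ Finset.range (n-1), q j i = d i := by
          rw [Finset.sum_eq_single j']
          · exact hqi j' i hj0
          · intro j hj hne
            refine hqo j i fun hc => hne ?_
            by_contra hne'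
            rcases Nat.lt_or_ge j j' with hlt | hge
            · exact (Finset.disjoint_left.mp
                (chunk_disjoint hnodup (Nat.succ_lt_succ hlt)) hc) hj0
            · have : j' < j := by omega
              exact (Finset.disjoint_left.mp
                (chunk_disjoint hnodup (Nat.succ_lt_succ this)) hj0) hc
          · intro hj
            exact absurd (Finset.mem_range.mpr (by omega)) hj
        rw [hPi, hsum, zero_add]
  -- A P = - ∑ A (q j)
  have hAP : A.mulVec P = - ∑ j ∈ Finset.range (n-1), A.mulVec (q j) := by
    have hsplit : A.mulVec d
        = A.mulVec P + ∑ j ∈ Finset.range (n-1), A.mulVec (q j) := by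
      rw [hdec, ← Matrix.mulVecLin_apply, map_add, map_sum]
      simp only [Matrix.mulVecLin_apply]
    rw [eq_neg_iff_add_eq_zero, ← hsplit, hAd]
  -- norms
  set a0 : ℝ := Real.sqrt (∑ i, (p0 i)^2) with ha0
  set a1 : ℝ := Real.sqrt (∑ i, (p1 i)^2) with ha1
  set aP : ℝ := Real.sqrt (∑ i, (P i)^2) with haP
  have ha0nn : 0 ≤ a0 := Real.sqrt_nonneg _
  have ha1nn : 0 ≤ a1 := Real.sqrt_nonneg _
  have haPnn : 0 ≤ aP := Real.sqrt_nonneg _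
  have hqnorm : ∀ j, Real.sqrt (∑ i, (q j i)^2) = Real.sqrt (∑ i ∈ C (j+1), (d i)^2) := by
    intro j
    rw [hq]
    rw [sum_proj_sq]
  -- tail ≤ a0
  have tail2 : Stail ≤ a0 := by
    have h5 : ∑ i ∈ T0, |d i| ≤ Real.sqrt k * a0 := by
      have := l1_le_sqrt_card T0 d
      have hc : Real.sqrt T0.card ≤ Real.sqrt k := by
        apply Real.sqrt_le_sqrt; exact_mod_cast hT0card
      have hs : Real.sqrt (∑ i ∈ T0, (d i)^2) = a0 := by
        rw [ha0, hp0, sum_proj_sq]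
      calc ∑ i ∈ T0, |d i| ≤ Real.sqrt T0.card * Real.sqrt (∑ i ∈ T0, (d i)^2) := this
        _ ≤ Real.sqrt k * a0 := by
            rw [hs]
            exact mul_le_mul_of_nonneg_right hc (by rw [← hs]; exact Real.sqrt_nonneg _)
    calc Stail ≤ (∑ i ∈ T0ᶜ, |d i|) / Real.sqrt k := tail
      _ ≤ (∑ i ∈ T0, |d i|) / Real.sqrt k := div_le_div_of_nonneg_right cone hsqrtk.le
      _ ≤ (Real.sqrt k * a0) / Real.sqrt k := div_le_div_of_nonneg_right h5 hsqrtk.le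
      _ = a0 := by field_simp
  -- P = p0 + p1 pointwise, and norms
  have hdisj01 : Disjoint T0 (C 0) := by
    rw [Finset.disjoint_left]
    exact fun a ha hc => (Finset.mem_compl.mp (hCsub hc)) ha
  have hP01 : ∀ i, P i = p0 i + p1 i := by
    intro i
    by_cases hi : i ∈ T0
    · have : i ∉ C 0 := fun hc => (Finset.disjoint_left.mp hdisj01 hi) hc
      simp [hP, hp0, hp1, proj, Finset.mem_union, hi, this]
    · by_cases hi' : i ∈ C 0
      · simp [hP, hp0, hp1, proj, Finset.mem_union, hi, hi']
      · simp [hP, hp0, hp1, proj, Finset.mem_union, hi, hi']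
  have hPsq : ∑ i, (P i)^2 = ∑ i, (p0 i)^2 + ∑ i, (p1 i)^2 := by
    rw [← Finset.sum_add_distrib]
    refine Finset.sum_congr rfl fun i _ => ?_
    by_cases hi : i ∈ T0
    · have h1 : i ∉ C 0 := fun hc => (Finset.disjoint_left.mp hdisj01 hi) hc
      simp [hP01 i, hp0, hp1, proj, hi, h1]
    · by_cases hi' : i ∈ C 0 <;> simp [hP01 i, hp0, hp1, proj, hi, hi']
  have ha0P : a0 ≤ aP := by
    rw [ha0, haP]
    apply Real.sqrt_le_sqrt
    rw [hPsq]
    have : 0 ≤ ∑ i, (p1 i)^2 := Finset.sum_nonneg fun i _ => sq_nonneg _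
    linarith
  have hsum01 : a0 + a1 ≤ Real.sqrt 2 * aP := by
    have h6 : (a0 + a1)^2 ≤ 2 * ∑ i, (P i)^2 := by
      have e0 : a0^2 = ∑ i, (p0 i)^2 := Real.sq_sqrt (Finset.sum_nonneg fun i _ => sq_nonneg _)
      have e1 : a1^2 = ∑ i, (p1 i)^2 := Real.sq_sqrt (Finset.sum_nonneg fun i _ => sq_nonneg _)
      nlinarith [sq_nonneg (a0 - a1)]
    calc a0 + a1 = Real.sqrt ((a0+a1)^2) := (Real.sqrt_sq (by linarith)).symm
      _ ≤ Real.sqrt (2 * ∑ i, (P i)^2) := Real.sqrt_le_sqrt h6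
      _ = Real.sqrt 2 * aP := by rw [Real.sqrt_mul (by norm_num), haP]
  -- sparsity of the pieces
  have hsp0 : KSparse k p0 := sparse_of_zero_off T0 p0 hT0card hp0o
  have hsp1 : KSparse k p1 := sparse_of_zero_off (C 0) p1 (hCcard 0)
    (fun i hi => by simp [hp1, proj, hi])
  have hspq : ∀ j, KSparse k (q j) := fun j =>
    sparse_of_zero_off (C (j+1)) (q j) (hCcard (j+1)) (hqo j)
  have hspP : KSparse (2*k) P := by
    refine sparse_of_zero_off (T0 ∪ C 0) P ?_ ?_
    · calc (T0 ∪ C 0).card ≤ T0.card + (C 0).card := Finset.card_union_le _ _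
        _ ≤ 2 * k := by have := hCcard 0; omega
    · intro i hi; simp [hP, proj, hi]
  -- main estimate
  set α := ∑ i, (A.mulVec P i)^2 with hα
  have key : α ≤ δ * ((a0 + a1) * Stail) := by
    have e7 : α = - ∑ j ∈ Finset.range (n-1),
        ((∑ i, A.mulVec p0 i * A.mulVec (q j) i) + (∑ i, A.mulVec p1 i * A.mulVec (q j) i)) := by
      have step1 : α = ∑ i, A.mulVec P i * A.mulVec P i := by
        rw [hα]; exact Finset.sum_congr rfl fun i _ => by rw [sq]
      have hAPi : ∀ i, A.mulVec P i = - ∑ j ∈ Finset.range (n-1), A.mulVec (q j) i := by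
        intro i
        rw [hAP]
        simp [Finset.sum_apply]
      have step2 : ∑ i, A.mulVec P i * A.mulVec P i
          = - ∑ j ∈ Finset.range (n-1), ∑ i, A.mulVec P i * A.mulVec (q j) i := by
        have e8 : ∀ i, A.mulVec P i * A.mulVec P i
            = ∑ j ∈ Finset.range (n-1), -(A.mulVec P i * A.mulVec (q j) i) := by
          intro i
          nth_rewrite 2 [hAPi i]
          rw [mul_neg, Finset.mul_sum, ← Finset.sum_neg_distrib]
        simp_rw [e8]
        rw [Finset.sum_comm]
        simp_rw [Finset.sum_neg_distrib]
      have step3 : ∀ j, ∑ i, A.mulVec P i * A.mulVec (q j) i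
          = (∑ i, A.mulVec p0 i * A.mulVec (q j) i) + (∑ i, A.mulVec p1 i * A.mulVec (q j) i) := by
        intro j
        rw [← Finset.sum_add_distrib]
        refine Finset.sum_congr rfl fun i _ => ?_
        have : A.mulVec P i = A.mulVec p0 i + A.mulVec p1 i := by
          have hPf : P = p0 + p1 := funext hP01
          rw [hPf, Matrix.mulVec_add, Pi.add_apply]
        rw [this]; ring
      rw [step1, step2]
      congr 1
      exact Finset.sum_congr rfl fun j _ => step3 j
    rw [e7]
    have bound : ∀ j ∈ Finset.range (n-1),
        -((∑ i, A.mulVec p0 i * A.mulVec (q j) i) + (∑ i, A.mulVec p1 i * A.mulVec (q j) i))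
        ≤ δ * ((a0 + a1) * Real.sqrt (∑ i, (q j i)^2)) := by
      intro j _
      have hd0 : ∀ i, p0 i = 0 ∨ q j i = 0 := by
        intro i
        by_cases hi : i ∈ T0
        · exact Or.inr (hqo j i fun hc => (Finset.mem_compl.mp (hCsub hc)) hi)
        · exact Or.inl (hp0o i hi)
      have hd1 : ∀ i, p1 i = 0 ∨ q j i = 0 := by
        intro i
        by_cases hi : i ∈ C 0
        · exact Or.inr (hqo j i fun hc =>
            (Finset.disjoint_left.mp (chunk_disjoint hnodup (Nat.succ_pos j)) hi) hc)
        · exact Or.inl (by simp [hp1, proj, hi])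
      have r0 := ro hδnn hRIP p0 (q j) hsp0 (hspq j) hd0
      have r1 := ro hδnn hRIP p1 (q j) hsp1 (hspq j) hd1
      have n0 := neg_abs_le (∑ i, A.mulVec p0 i * A.mulVec (q j) i)
      have n1 := neg_abs_le (∑ i, A.mulVec p1 i * A.mulVec (q j) i)
      rw [← ha0] at r0
      rw [← ha1] at r1
      nlinarith [abs_nonneg (∑ i, A.mulVec p0 i * A.mulVec (q j) i)]
    calc - ∑ j ∈ Finset.range (n-1),
          ((∑ i, A.mulVec p0 i * A.mulVec (q j) i) + (∑ i, A.mulVec p1 i * A.mulVec (q j) i))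
        = ∑ j ∈ Finset.range (n-1),
          -((∑ i, A.mulVec p0 i * A.mulVec (q j) i) + (∑ i, A.mulVec p1 i * A.mulVec (q j) i)) := by
          rw [Finset.sum_neg_distrib]
      _ ≤ ∑ j ∈ Finset.range (n-1), δ * ((a0 + a1) * Real.sqrt (∑ i, (q j i)^2)) :=
          Finset.sum_le_sum bound
      _ = δ * ((a0 + a1) * Stail) := by
          simp_rw [hqnorm]
          rw [← Finset.mul_sum, ← Finset.mul_sum, hSt]
  -- combine with RIP lower bound
  have rlow : (1 - δ) * ∑ i, (P i)^2 ≤ α := (hRIP P hspP).1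
  have upper : α ≤ Real.sqrt 2 * δ * ∑ i, (P i)^2 := by
    have h8 : δ * ((a0 + a1) * Stail) ≤ δ * ((Real.sqrt 2 * aP) * aP) := by
      apply mul_le_mul_of_nonneg_left ?_ hδnn
      have hstep : (a0 + a1) * Stail ≤ (Real.sqrt 2 * aP) * Stail :=
        mul_le_mul_of_nonneg_right hsum01 hSt0
      have hstep2 : (Real.sqrt 2 * aP) * Stail ≤ (Real.sqrt 2 * aP) * aP := by
        apply mul_le_mul_of_nonneg_left (le_trans tail2 ha0P)
        positivity
      linarith
    have haP2 : aP * aP = ∑ i, (P i)^2 := by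
      rw [haP]; exact Real.mul_self_sqrt (Finset.sum_nonneg fun i _ => sq_nonneg _)
    calc α ≤ δ * ((a0 + a1) * Stail) := key
      _ ≤ δ * ((Real.sqrt 2 * aP) * aP) := h8
      _ = Real.sqrt 2 * δ * (aP * aP) := by ring
      _ = Real.sqrt 2 * δ * ∑ i, (P i)^2 := by rw [haP2]
  have hSP0 : ∑ i, (P i)^2 = 0 := by
    have hnn : 0 ≤ ∑ i, (P i)^2 := Finset.sum_nonneg fun i _ => sq_nonneg _
    have hs2 : Real.sqrt 2 ^ 2 = 2 := Real.sq_sqrt (by norm_num)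
    have hs2nn : 0 ≤ Real.sqrt 2 := Real.sqrt_nonneg _
    have hle : ∑ i, (P i)^2 ≤ 0 := by
      by_contra hc
      push_neg at hc
      have h9 : (1 - δ - Real.sqrt 2 * δ) * ∑ i, (P i)^2 ≤ 0 := by nlinarith [rlow, upper]
      have h10 : 0 < 1 - δ - Real.sqrt 2 * δ := by nlinarith [hs2, hs2nn]
      nlinarith [mul_pos h10 hc]
    exact le_antisymm hle hnn
  have hPzero : P = 0 := eq_zero_of_sum_sq P hSP0
  -- conclude d = 0
  have hdT0 : ∀ i ∈ T0, d i = 0 := by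
    intro i hi
    have : P i = d i := by simp [hP, proj, Finset.mem_union, hi]
    rw [← this, hPzero, Pi.zero_apply]
  have hT0zero : ∑ i ∈ T0, |d i| = 0 :=
    Finset.sum_eq_zero fun i hi => by rw [hdT0 i hi, abs_zero]
  have hcomp : ∑ i ∈ T0ᶜ, |d i| = 0 := by
    have := cone
    rw [hT0zero] at this
    exact le_antisymm this (Finset.sum_nonneg fun i _ => abs_nonneg _)
  have hdzero : ∀ i, d i = 0 := by
    intro i
    by_cases hi : i ∈ T0
    · exact hdT0 i hi
    · have := (Finset.sum_eq_zero_iff_of_nonneg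
        (fun i _ => abs_nonneg (d i))).mp hcomp i (Finset.mem_compl.mpr hi)
      exact abs_eq_zero.mp this
  funext i
  have := hdzero i
  rw [hd'] at this
  linarith
end

section
/- Suppose A ∈ ℝ^{m×n} satisfies the restricted isometry property of order k with constant δ_k < 1, let S ⊆ {1,…,n} with |S| ≤ k, let x ∈ ℝⁿ with supp(x) ⊆ S, and let y = Ax + η with ‖η‖₂ ≤ ε. Then the submatrix A_S (columns of A indexed by S) has full column rank, the oracle estimator x̂ defined on S by x̂_S = (A_Sᵀ A_S)⁻¹ A_Sᵀ y and zero outside S satisfies x̂ − x = the zero-extension of (A_Sᵀ A_S)⁻¹ A_Sᵀ η, and ‖x̂ − x‖₂ ≤ ε / √(1 − δ_k). -/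
open Finset Matrix

/-- The submatrix of `A` consisting of all rows and the columns indexed by `S`. -/
def colSubmatrix {m n : ℕ} (A : Matrix (Fin m) (Fin n) ℝ) (S : Finset (Fin n)) :
    Matrix (Fin m) {j // j ∈ S} ℝ :=
  A.submatrix id (fun j => (j : Fin n))

/-- Extension of a vector indexed by `S` to a vector on `Fin n`, by zero outside `S`. -/
def zeroExt {n : ℕ} (S : Finset (Fin n)) (v : {j // j ∈ S} → ℝ) : Fin n → ℝ :=
  fun j => if h : j ∈ S then v ⟨j, h⟩ else 0

lemma sum_sq_zeroExt {n : ℕ} (S : Finset (Fin n)) (v : {j // j ∈ S} → ℝ) :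
    ∑ j, (zeroExt S v j) ^ 2 = ∑ j, (v j) ^ 2 := by
  rw [← Finset.sum_subset (Finset.subset_univ S) (by intro j _ hj; simp [zeroExt, hj]),
    ← Finset.sum_attach S fun j => (zeroExt S v j) ^ 2]
  apply Finset.sum_congr rfl
  intro j _
  simp [zeroExt, j.2]

lemma mulVec_zeroExt {m n : ℕ} (A : Matrix (Fin m) (Fin n) ℝ) (S : Finset (Fin n))
    (v : {j // j ∈ S} → ℝ) :
    A.mulVec (zeroExt S v) = (colSubmatrix A S).mulVec v := by
  funext i
  simp only [mulVec, dotProduct, colSubmatrix, submatrix_apply, id]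
  rw [← Finset.sum_subset (Finset.subset_univ S) (by intro j _ hj; simp [zeroExt, hj]),
    ← Finset.sum_attach S fun j => A i j * zeroExt S v j]
  apply Finset.sum_congr rfl
  intro j _
  simp [zeroExt, j.2]

lemma ksparse_zeroExt {n k : ℕ} (S : Finset (Fin n)) (hS : S.card ≤ k)
    (v : {j // j ∈ S} → ℝ) : KSparse k (zeroExt S v) := by
  refine le_trans ?_ (le_trans (le_of_eq (Set.ncard_coe_finset S)) hS)
  apply Set.ncard_le_ncard _ (Set.toFinite _)
  intro j hj
  by_contra h
  exact hj (dif_neg (by simpa using h))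

lemma zeroExt_add {n : ℕ} (S : Finset (Fin n)) (a b : {j // j ∈ S} → ℝ) :
    zeroExt S (a + b) = zeroExt S a + zeroExt S b := by
  funext j
  by_cases h : j ∈ S <;> simp [zeroExt, h]

lemma dot_mulVec_transpose {α β : Type*} [Fintype α] [Fintype β] (B : Matrix α β ℝ)
    (w : β → ℝ) (z : α → ℝ) : (B.mulVec w) ⬝ᵥ z = w ⬝ᵥ (Bᵀ.mulVec z) := by
  rw [Matrix.dotProduct_mulVec, Matrix.vecMul_transpose]

theorem oracle_estimator_error_bound {m n k : ℕ}
    (A : Matrix (Fin m) (Fin n) ℝ) (δ : ℝ) (hδ : δ ∈ Set.Ioo (0 : ℝ) 1)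
    (hRIP : RIP A k δ)
    (S : Finset (Fin n)) (hS : S.card ≤ k)
    (x : Fin n → ℝ) (hsupp : ∀ j, x j ≠ 0 → j ∈ S)
    (η : Fin m → ℝ) (ε : ℝ) (hη : l2norm η ≤ ε)
    (y : Fin m → ℝ) (hy : y = A.mulVec x + η)
    (xhat : Fin n → ℝ)
    (hxhat : xhat = zeroExt S
      ((((colSubmatrix A S)ᵀ * colSubmatrix A S)⁻¹).mulVec
        ((colSubmatrix A S)ᵀ.mulVec y))) :
    LinearIndependent ℝ (fun j : {j // j ∈ S} => fun i => A i (j : Fin n)) ∧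
    xhat - x = zeroExt S
      ((((colSubmatrix A S)ᵀ * colSubmatrix A S)⁻¹).mulVec
        ((colSubmatrix A S)ᵀ.mulVec η)) ∧
    l2norm (xhat - x) ≤ ε / Real.sqrt (1 - δ) := by
  obtain ⟨hδ0, hδ1⟩ := hδ
  have h1δ : (0 : ℝ) < 1 - δ := by linarith
  set B := colSubmatrix A S with hB
  set G := Bᵀ * B with hGdef
  -- RIP lower bound for the submatrix
  have hlow : ∀ v : {j // j ∈ S} → ℝ,
      (1 - δ) * ∑ j, (v j) ^ 2 ≤ ∑ i, (B.mulVec v i) ^ 2 := by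
    intro v
    have := (hRIP (zeroExt S v) (ksparse_zeroExt S hS v)).1
    rwa [sum_sq_zeroExt, mulVec_zeroExt] at this
  -- injectivity of B
  have hinj : ∀ v : {j // j ∈ S} → ℝ, B.mulVec v = 0 → v = 0 := by
    intro v hv
    have h1 := hlow v
    rw [hv] at h1
    simp only [Pi.zero_apply, ne_eq, OfNat.ofNat_ne_zero, not_false_eq_true, zero_pow,
      Finset.sum_const_zero] at h1
    have hsum : ∑ j, (v j) ^ 2 ≤ 0 := by nlinarith
    funext j
    have := Finset.sum_eq_zero_iff_of_nonneg (fun j _ => sq_nonneg (v j)) |>.1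
      (le_antisymm hsum (Finset.sum_nonneg fun j _ => sq_nonneg (v j))) j (Finset.mem_univ j)
    exact pow_eq_zero_iff (by norm_num) |>.1 this
  -- linear independence
  have hLI : LinearIndependent ℝ (fun j : {j // j ∈ S} => fun i => A i (j : Fin n)) := by
    rw [Fintype.linearIndependent_iff]
    intro g hg
    have hBg : B.mulVec g = 0 := by
      funext i
      have := congrFun hg i
      simpa [hB, mulVec, dotProduct, colSubmatrix, mul_comm, Finset.sum_apply] using this
    have := hinj g hBg
    intro j; exact congrFun this j
  -- positive definiteness of G
  have hGpos : G.PosDef := by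
    rw [Matrix.posDef_iff_dotProduct_mulVec]
    constructor
    · simpa using Matrix.isHermitian_conjTranspose_mul_self B
    · intro v hv
      have hBv : B.mulVec v ≠ 0 := fun h => hv (hinj v h)
      have : star v ⬝ᵥ G *ᵥ v = ∑ i, (B.mulVec v i) ^ 2 := by
        rw [hGdef, ← Matrix.mulVec_mulVec, star_trivial, ← dot_mulVec_transpose]
        simp [dotProduct, sq]
      rw [this]
      rcases lt_or_eq_of_le (Finset.sum_nonneg fun i _ => sq_nonneg (B.mulVec v i)) with h | h
      · exact h
      · exfalso
        apply hBv
        funext i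
        have := Finset.sum_eq_zero_iff_of_nonneg (fun i _ => sq_nonneg (B.mulVec v i)) |>.1
          h.symm i (Finset.mem_univ i)
        exact pow_eq_zero_iff (by norm_num) |>.1 this
  have hGdet : IsUnit G.det := hGpos.det_pos.ne'.isUnit
  have hGinv : G⁻¹ * G = 1 := Matrix.nonsing_inv_mul G hGdet
  have hGinv' : G * G⁻¹ = 1 := Matrix.mul_nonsing_inv G hGdet
  -- x = zeroExt of its restriction
  set xS : {j // j ∈ S} → ℝ := fun j => x j with hxS
  have hx : x = zeroExt S xS := by
    funext j
    by_cases h : j ∈ S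
    · simp [zeroExt, h, hxS]
    · simp only [zeroExt, h, dif_neg, not_false_eq_true]
      by_contra hxj
      exact h (hsupp j hxj)
  set w : {j // j ∈ S} → ℝ := G⁻¹.mulVec (Bᵀ.mulVec η) with hw
  -- part 2
  have hdiff : xhat - x = zeroExt S w := by
    rw [hxhat, hx]
    have : Bᵀ.mulVec y = G.mulVec xS + Bᵀ.mulVec η := by
      rw [hy, hx, mulVec_zeroExt, ← hB, Matrix.mulVec_add, Matrix.mulVec_mulVec, ← hGdef]
    rw [this, Matrix.mulVec_add, Matrix.mulVec_mulVec, hGinv, Matrix.one_mulVec, ← hw,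
      zeroExt_add]
    abel
  refine ⟨hLI, hdiff, ?_⟩
  -- part 3
  have hGw : G.mulVec w = Bᵀ.mulVec η := by
    rw [hw, Matrix.mulVec_mulVec, hGinv', Matrix.one_mulVec]
  set P := ∑ i, (B.mulVec w i) ^ 2 with hP
  have hPnn : 0 ≤ P := Finset.sum_nonneg fun i _ => sq_nonneg _
  have hPdot : P = (B.mulVec w) ⬝ᵥ η := by
    have h1 : P = (B.mulVec w) ⬝ᵥ (B.mulVec w) := by
      simp [hP, dotProduct, sq]
    rw [h1, dot_mulVec_transpose, Matrix.mulVec_mulVec, ← hGdef, hGw,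
      ← dot_mulVec_transpose]
  set Q := ∑ i, (η i) ^ 2 with hQ
  have hQnn : 0 ≤ Q := Finset.sum_nonneg fun i _ => sq_nonneg _
  have hCS : P ^ 2 ≤ P * Q := by
    have := Finset.sum_mul_sq_le_sq_mul_sq Finset.univ (fun i => B.mulVec w i) η
    calc P ^ 2 = ((B.mulVec w) ⬝ᵥ η) ^ 2 := by rw [hPdot]
    _ ≤ P * Q := by simpa [dotProduct, hP, hQ] using this
  have hPQ : P ≤ Q := by nlinarith
  have hε0 : 0 ≤ ε := le_trans (Real.sqrt_nonneg _) hη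
  have hQε : Q ≤ ε ^ 2 := by
    have : Real.sqrt Q ≤ ε := hη
    calc Q = Real.sqrt Q ^ 2 := (Real.sq_sqrt hQnn).symm
    _ ≤ ε ^ 2 := by nlinarith [Real.sqrt_nonneg Q]
  have hsum : (1 - δ) * ∑ j, (zeroExt S w j) ^ 2 ≤ ε ^ 2 := by
    rw [sum_sq_zeroExt]
    exact le_trans (hlow w) (le_trans hPQ hQε)
  have hsum2 : ∑ j, (zeroExt S w j) ^ 2 ≤ ε ^ 2 / (1 - δ) := by
    rw [le_div_iff₀ h1δ]
    linarith [hsum]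
  rw [hdiff]
  calc l2norm (zeroExt S w) ≤ Real.sqrt (ε ^ 2 / (1 - δ)) := Real.sqrt_le_sqrt hsum2
  _ = ε / Real.sqrt (1 - δ) := by
      rw [Real.sqrt_div (sq_nonneg ε), Real.sqrt_sq hε0]
end
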